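/- arXiv:1908.08732 — 8 statements merged into one kernel-verified Lean document; each statement's English description precedes it below -/
import Mathlib

section
/- For the classical second-order SBP derivative operator D on N nodes (centered differences in the interior, one-sided at the boundaries) with diagonal mass matrix M = Δx·diag(1/2,1,...,1,1/2), the kernel of D* = M⁻¹ Dᵀ M is spanned by the alternating vector osc with osc^(a) = (-1)^(a+1). -/
open Matrix

/-- The classical second-order SBP derivative operator: central differences in the interior,
one-sided differences at the two boundary nodes. -/
noncomputable def sbp2Deriv (N : ℕ) (Δx : ℝ) : Matrix (Fin N) (Fin N) ℝ :=
  Matrix.of fun i j =>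
    if (i : ℕ) = 0 then
      (if (j : ℕ) = 0 then -1 / Δx else if (j : ℕ) = 1 then 1 / Δx else 0)
    else if (i : ℕ) = N - 1 then
      (if (j : ℕ) = N - 2 then -1 / Δx else if (j : ℕ) = N - 1 then 1 / Δx else 0)
    else
      (if (j : ℕ) + 1 = (i : ℕ) then -1 / (2 * Δx)
       else if (j : ℕ) = (i : ℕ) + 1 then 1 / (2 * Δx) else 0)

/-- The diagonal mass matrix `M = Δx · diag(1/2, 1, ..., 1, 1/2)` of the classical
second-order SBP operator. -/
noncomputable def sbp2Mass (N : ℕ) (Δx : ℝ) : Matrix (Fin N) (Fin N) ℝ :=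
  Matrix.diagonal fun i =>
    if (i : ℕ) = 0 ∨ (i : ℕ) = N - 1 then Δx / 2 else Δx

section Aux

private lemma sum_eq_pair {N : ℕ} (f : Fin N → ℝ) (a b : Fin N) (hab : a ≠ b)
    (h : ∀ i, i ≠ a → i ≠ b → f i = 0) : ∑ i, f i = f a + f b := by
  rw [← Finset.sum_pair hab]
  refine (Finset.sum_subset (Finset.subset_univ _) fun i _ hi => ?_).symm
  simp only [Finset.mem_insert, Finset.mem_singleton, not_or] at hi
  exact h i hi.1 hi.2

variable {N : ℕ} {Δx : ℝ}

/-- The vector of diagonal entries of the mass matrix. -/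
private noncomputable def massDiag (N : ℕ) (Δx : ℝ) : Fin N → ℝ := fun i =>
    if (i : ℕ) = 0 ∨ (i : ℕ) = N - 1 then Δx / 2 else Δx

/-- The statement that the `j`-th component of `Dᵀ (M x)` vanishes. -/
private def sbpEq (N : ℕ) (Δx : ℝ) (x : Fin N → ℝ) (j : Fin N) : Prop :=
  ∑ i, sbp2Deriv N Δx i j * (massDiag N Δx i * x i) = 0

private lemma massDiag_ne_zero (hΔx : 0 < Δx) (i : Fin N) : massDiag N Δx i ≠ 0 := by
  unfold massDiag; split_ifs <;> positivity

private lemma ker_iff (hΔx : 0 < Δx) (x : Fin N → ℝ) :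
    x ∈ LinearMap.ker ((sbp2Mass N Δx)⁻¹ * (sbp2Deriv N Δx)ᵀ * sbp2Mass N Δx).mulVecLin ↔
      ∀ j : Fin N, sbpEq N Δx x j := by
  have hM : sbp2Mass N Δx = Matrix.diagonal (massDiag N Δx) := rfl
  have hdet : IsUnit (sbp2Mass N Δx).det := by
    rw [hM, Matrix.det_diagonal]
    exact (Finset.prod_ne_zero_iff.mpr fun i _ => massDiag_ne_zero hΔx i).isUnit
  have hcancel : ∀ y : Fin N → ℝ, (sbp2Mass N Δx)⁻¹ *ᵥ y = 0 ↔ y = 0 := by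
    intro y
    constructor
    · intro h
      have : (sbp2Mass N Δx) *ᵥ ((sbp2Mass N Δx)⁻¹ *ᵥ y) = 0 := by rw [h, Matrix.mulVec_zero]
      rwa [Matrix.mulVec_mulVec, Matrix.mul_nonsing_inv _ hdet, Matrix.one_mulVec] at this
    · intro h; rw [h, Matrix.mulVec_zero]
  rw [LinearMap.mem_ker, Matrix.mulVecLin_apply, Matrix.mul_assoc, ← Matrix.mulVec_mulVec,
    hcancel, ← Matrix.mulVec_mulVec, funext_iff]
  refine forall_congr' fun j => ?_
  unfold sbpEq
  rw [hM]
  have hd : Matrix.diagonal (massDiag N Δx) *ᵥ x = fun i => massDiag N Δx i * x i :=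
    funext fun i => Matrix.mulVec_diagonal _ _ _
  rw [hd]
  simp only [Matrix.mulVec, dotProduct, Matrix.transpose_apply, Pi.zero_apply]

private lemma eq_zero_iff (hN : 3 ≤ N) (hΔx : 0 < Δx) (x : Fin N → ℝ)
    (j b : Fin N) (hj : (j : ℕ) = 0) (hb : (b : ℕ) = 1) :
    sbpEq N Δx x j ↔ x b = - x j := by
  have hΔ : Δx ≠ 0 := ne_of_gt hΔx
  have hjb : j ≠ b := Fin.ne_of_val_ne (by omega)
  have hoff : ∀ i, i ≠ j → i ≠ b → sbp2Deriv N Δx i j * (massDiag N Δx i * x i) = 0 := by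
    intro i hia hib
    have h1 : (i : ℕ) ≠ (j : ℕ) := fun h => hia (Fin.val_injective h)
    have h2 : (i : ℕ) ≠ (b : ℕ) := fun h => hib (Fin.val_injective h)
    have h3 := i.isLt
    have h4 : sbp2Deriv N Δx i j = 0 := by
      simp only [sbp2Deriv, Matrix.of_apply]
      split_ifs <;> first | rfl | omega
    rw [h4, zero_mul]
  unfold sbpEq
  rw [sum_eq_pair _ j b hjb hoff]
  have e1 : sbp2Deriv N Δx j j * (massDiag N Δx j * x j) = -(x j) / 2 := by
    simp only [sbp2Deriv, Matrix.of_apply, massDiag]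
    split_ifs <;> first | omega | (field_simp; try ring)
  have e2 : sbp2Deriv N Δx b j * (massDiag N Δx b * x b) = -(x b) / 2 := by
    simp only [sbp2Deriv, Matrix.of_apply, massDiag]
    split_ifs <;> first | omega | (field_simp; try ring)
  rw [e1, e2]
  constructor <;> intro h <;> linarith

private lemma eq_int_iff (hN : 3 ≤ N) (hΔx : 0 < Δx) (x : Fin N → ℝ)
    (j a b : Fin N) (hj1 : 0 < (j : ℕ)) (hj2 : (j : ℕ) < N - 1)
    (ha : (a : ℕ) + 1 = (j : ℕ)) (hb : (b : ℕ) = (j : ℕ) + 1) :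
    sbpEq N Δx x j ↔ x b = x a := by
  have hΔ : Δx ≠ 0 := ne_of_gt hΔx
  have hab : a ≠ b := Fin.ne_of_val_ne (by omega)
  have hoff : ∀ i, i ≠ a → i ≠ b → sbp2Deriv N Δx i j * (massDiag N Δx i * x i) = 0 := by
    intro i hia hib
    have h1 : (i : ℕ) ≠ (a : ℕ) := fun h => hia (Fin.val_injective h)
    have h2 : (i : ℕ) ≠ (b : ℕ) := fun h => hib (Fin.val_injective h)
    have h3 := i.isLt
    have h4 : sbp2Deriv N Δx i j = 0 := by
      simp only [sbp2Deriv, Matrix.of_apply]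
      split_ifs <;> first | rfl | omega
    rw [h4, zero_mul]
  unfold sbpEq
  rw [sum_eq_pair _ a b hab hoff]
  have hbl := b.isLt
  have e1 : sbp2Deriv N Δx a j * (massDiag N Δx a * x a) = x a / 2 := by
    simp only [sbp2Deriv, Matrix.of_apply, massDiag]
    split_ifs <;> first | omega | (field_simp; try ring)
  have e2 : sbp2Deriv N Δx b j * (massDiag N Δx b * x b) = -(x b) / 2 := by
    simp only [sbp2Deriv, Matrix.of_apply, massDiag]
    split_ifs <;> first | omega | (field_simp; try ring)
  rw [e1, e2]
  constructor <;> intro h <;> linarith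

private lemma eq_last_iff (hN : 3 ≤ N) (hΔx : 0 < Δx) (x : Fin N → ℝ)
    (j a : Fin N) (hj : (j : ℕ) = N - 1) (ha : (a : ℕ) = N - 2) :
    sbpEq N Δx x j ↔ x j = - x a := by
  have hΔ : Δx ≠ 0 := ne_of_gt hΔx
  have haj : a ≠ j := Fin.ne_of_val_ne (by omega)
  have hoff : ∀ i, i ≠ a → i ≠ j → sbp2Deriv N Δx i j * (massDiag N Δx i * x i) = 0 := by
    intro i hia hib
    have h1 : (i : ℕ) ≠ (a : ℕ) := fun h => hia (Fin.val_injective h)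
    have h2 : (i : ℕ) ≠ (j : ℕ) := fun h => hib (Fin.val_injective h)
    have h3 := i.isLt
    have h4 : sbp2Deriv N Δx i j = 0 := by
      simp only [sbp2Deriv, Matrix.of_apply]
      split_ifs <;> first | rfl | omega
    rw [h4, zero_mul]
  unfold sbpEq
  rw [sum_eq_pair _ a j haj hoff]
  have e1 : sbp2Deriv N Δx a j * (massDiag N Δx a * x a) = x a / 2 := by
    simp only [sbp2Deriv, Matrix.of_apply, massDiag]
    split_ifs <;> first | omega | (field_simp; try ring)
  have e2 : sbp2Deriv N Δx j j * (massDiag N Δx j * x j) = x j / 2 := by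
    simp only [sbp2Deriv, Matrix.of_apply, massDiag]
    split_ifs <;> first | omega | (field_simp; try ring)
  rw [e1, e2]
  constructor <;> intro h <;> linarith

end Aux

/-- For the classical second-order SBP derivative operator `D` on `N` nodes with diagonal mass
matrix `M = Δx·diag(1/2, 1, ..., 1, 1/2)`, the kernel of `D* = M⁻¹ Dᵀ M` is spanned by the
alternating grid-oscillation vector `osc` with `osc⁽ᵃ⁾ = (-1)^(a+1)`. -/
theorem ker_adjoint_sbp2_eq_span_osc (N : ℕ) (hN : 3 ≤ N) (Δx : ℝ) (hΔx : 0 < Δx) :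
    LinearMap.ker ((sbp2Mass N Δx)⁻¹ * (sbp2Deriv N Δx)ᵀ * sbp2Mass N Δx).mulVecLin =
      Submodule.span ℝ {(fun i => (-1 : ℝ) ^ (i : ℕ) : Fin N → ℝ)} := by
  ext x
  rw [ker_iff hΔx x, Submodule.mem_span_singleton]
  have h0N : 0 < N := by omega
  constructor
  · intro h
    have key : ∀ n, ∀ hn : n < N, x ⟨n, hn⟩ = (-1) ^ n * x ⟨0, h0N⟩ := by
      intro n
      induction n using Nat.strong_induction_on with
      | _ n ih =>
        match n with
        | 0 => intro hn; norm_num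
        | 1 =>
          intro hn
          have h1 := (eq_zero_iff hN hΔx x ⟨0, h0N⟩ ⟨1, hn⟩ rfl rfl).mp (h _)
          rw [h1]; ring
        | (k+2) =>
          intro hn
          have hk1 : k + 1 < N := by omega
          have hk : k < N := by omega
          have h1 := (eq_int_iff hN hΔx x ⟨k+1, hk1⟩ ⟨k, hk⟩ ⟨k+2, hn⟩
            (by simp only [Fin.val_mk]; omega) (by simp only [Fin.val_mk]; omega)
            (by simp only [Fin.val_mk]) (by simp only [Fin.val_mk])).mp (h _)
          rw [h1, ih k (by omega) hk, pow_add]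
          norm_num
    refine ⟨x ⟨0, h0N⟩, funext fun i => ?_⟩
    have hi := key i.val i.isLt
    simp only [Fin.eta] at hi
    simp only [Pi.smul_apply, smul_eq_mul]
    rw [hi]; ring
  · rintro ⟨c, rfl⟩
    intro j
    have hjl := j.isLt
    rcases eq_or_ne (j : ℕ) 0 with hj0 | hj0
    · rw [eq_zero_iff hN hΔx _ j ⟨1, by omega⟩ hj0 rfl]
      simp only [Pi.smul_apply, smul_eq_mul, Fin.val_mk, hj0]
      norm_num
    · rcases eq_or_ne (j : ℕ) (N - 1) with hjN | hjN
      · rw [eq_last_iff hN hΔx _ j ⟨N - 2, by omega⟩ hjN rfl]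
        simp only [Pi.smul_apply, smul_eq_mul, Fin.val_mk, hjN]
        rw [show N - 1 = (N - 2) + 1 by omega, pow_succ]
        ring
      · rw [eq_int_iff hN hΔx _ j ⟨(j : ℕ) - 1, by omega⟩ ⟨(j : ℕ) + 1, by omega⟩
          (by omega) (by omega) (by simp only [Fin.val_mk]; omega) (by simp only [Fin.val_mk])]
        simp only [Pi.smul_apply, smul_eq_mul, Fin.val_mk]
        rw [show (j : ℕ) + 1 = ((j : ℕ) - 1) + 2 by omega, pow_add]
        ring
end

section
/- The classical second-order SBP derivative operator D on N ≥ 3 nodes is nullspace consistent: its kernel is exactly the span of the constant vector. -/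
open Matrix

lemma sum_two (N : ℕ) (v : Fin N → ℝ) (a b : ℕ) (ha : a < N) (hb : b < N) (hab : a ≠ b)
    (c d : ℝ) :
    ∑ j : Fin N, (if (j:ℕ) = a then c else if (j:ℕ) = b then d else 0) * v j
      = c * v ⟨a,ha⟩ + d * v ⟨b,hb⟩ := by
  have h : ∀ j : Fin N, (if (j:ℕ) = a then c else if (j:ℕ) = b then d else 0) * v j
      = (if j = ⟨a,ha⟩ then c * v ⟨a,ha⟩ else 0) + (if j = ⟨b,hb⟩ then d * v ⟨b,hb⟩ else 0) := by
    intro j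
    by_cases h1 : j = ⟨a, ha⟩
    · subst h1; simp [Fin.ext_iff, hab]
    · by_cases h2 : j = ⟨b, hb⟩
      · subst h2; simp [Fin.ext_iff, hab, Ne.symm hab]
      · rw [Fin.ext_iff] at h1 h2
        simp [h1, h2, Fin.ext_iff]
  simp [h, Finset.sum_add_distrib, Finset.sum_ite_eq']

lemma row0_eval (N : ℕ) (hN : 3 ≤ N) (Δx : ℝ) (v : Fin N → ℝ) (i : Fin N) (h0 : (i:ℕ) = 0) :
    (sbp2Deriv N Δx).mulVec v i = (-1/Δx) * v ⟨0, by omega⟩ + (1/Δx) * v ⟨1, by omega⟩ := by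
  rw [Matrix.mulVec, dotProduct]
  simp only [sbp2Deriv, Matrix.of_apply, h0, if_true]
  exact sum_two N v 0 1 (by omega) (by omega) (by omega) _ _

lemma rowlast_eval (N : ℕ) (hN : 3 ≤ N) (Δx : ℝ) (v : Fin N → ℝ) (i : Fin N)
    (h0 : (i:ℕ) ≠ 0) (h1 : (i:ℕ) = N - 1) :
    (sbp2Deriv N Δx).mulVec v i = (-1/Δx) * v ⟨N-2, by omega⟩ + (1/Δx) * v ⟨N-1, by omega⟩ := by
  rw [Matrix.mulVec, dotProduct]
  have hf : ((N:ℕ) - 1 = 0) = False := by simp; omega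
  simp only [sbp2Deriv, Matrix.of_apply, h0, if_false, h1, hf, if_true]
  exact sum_two N v (N-2) (N-1) (by omega) (by omega) (by omega) _ _

lemma rowmid_eval (N : ℕ) (hN : 3 ≤ N) (Δx : ℝ) (v : Fin N → ℝ) (i : Fin N)
    (h0 : (i:ℕ) ≠ 0) (h1 : (i:ℕ) ≠ N - 1) :
    (sbp2Deriv N Δx).mulVec v i
      = (-1/(2*Δx)) * v ⟨(i:ℕ)-1, by omega⟩
        + (1/(2*Δx)) * v ⟨(i:ℕ)+1, by have := i.isLt; omega⟩ := by
  rw [Matrix.mulVec, dotProduct]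
  simp only [sbp2Deriv, Matrix.of_apply, h0, h1, if_false]
  have hc : ∀ j : Fin N, (if (j:ℕ) + 1 = (i:ℕ) then -1 / (2 * Δx)
      else if (j:ℕ) = (i:ℕ) + 1 then 1 / (2 * Δx) else 0)
    = (if (j:ℕ) = (i:ℕ)-1 then -1 / (2 * Δx)
      else if (j:ℕ) = (i:ℕ) + 1 then 1 / (2 * Δx) else 0) := by
    intro j
    have he : ((j:ℕ) + 1 = (i:ℕ)) = ((j:ℕ) = (i:ℕ) - 1) := by
      apply propext; omega
    simp only [he]
  simp only [hc]
  exact sum_two N v ((i:ℕ)-1) ((i:ℕ)+1) (by omega) (by have := i.isLt; omega) (by omega) _ _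

/-- The classical second-order SBP derivative operator on `N ≥ 3` nodes is nullspace
consistent: its kernel is exactly the span of the constant vector. -/
theorem sbp2_nullspace_consistent (N : ℕ) (hN : 3 ≤ N) (Δx : ℝ) (hΔx : 0 < Δx) :
    LinearMap.ker (sbp2Deriv N Δx).mulVecLin =
      Submodule.span ℝ {(fun _ => 1 : Fin N → ℝ)} := by
  have hΔ : Δx ≠ 0 := ne_of_gt hΔx
  apply le_antisymm
  · intro v hv
    rw [LinearMap.mem_ker] at hv
    have hv' : (sbp2Deriv N Δx).mulVec v = 0 := hv
    have key : ∀ k : ℕ, ∀ hk : k < N, v ⟨k, hk⟩ = v ⟨0, by omega⟩ := by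
      intro k
      induction k using Nat.strong_induction_on with
      | _ k ih =>
        intro hk
        match k, hk with
        | 0, hk => rfl
        | 1, hk =>
          have h := congrFun hv' ⟨0, by omega⟩
          rw [row0_eval N hN Δx v ⟨0, by omega⟩ rfl] at h
          simp only [Pi.zero_apply] at h
          field_simp at h
          nlinarith [hΔx]
        | (m+2), hk =>
          have hm1 : m + 1 < N := by omega
          have h := congrFun hv' ⟨m+1, hm1⟩
          rw [rowmid_eval N hN Δx v ⟨m+1, hm1⟩ (by simp) (by simp; omega)] at h
          simp only [Pi.zero_apply, Nat.add_sub_cancel] at h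
          have h2 : v ⟨m+1+1, by omega⟩ = v ⟨m, by omega⟩ := by
            have h2Δ : (2:ℝ) * Δx ≠ 0 := by positivity
            field_simp at h
            nlinarith [hΔx]
          have he : (⟨m+2, hk⟩ : Fin N) = ⟨m+1+1, by omega⟩ := rfl
          rw [he, h2]
          exact ih m (by omega) (by omega)
    have hvconst : v = v ⟨0, by omega⟩ • (fun _ => 1 : Fin N → ℝ) := by
      funext j
      have := key (j:ℕ) j.isLt
      simp only [Fin.eta] at this
      simpa using this
    rw [hvconst]
    exact Submodule.smul_mem _ _ (Submodule.mem_span_singleton_self _)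
  · rw [Submodule.span_le, Set.singleton_subset_iff]
    rw [SetLike.mem_coe, LinearMap.mem_ker]
    show (sbp2Deriv N Δx).mulVec (fun _ => 1) = 0
    funext i
    by_cases h0 : (i:ℕ) = 0
    · rw [row0_eval N hN Δx _ i h0]; simp; ring
    · by_cases h1 : (i:ℕ) = N - 1
      · rw [rowlast_eval N hN Δx _ i h0 h1]; simp; ring
      · rw [rowmid_eval N hN Δx _ i h0 h1]; simp; ring
end

section
/- For nullspace consistent tensor product SBP operators in two dimensions, the kernel of the discrete curl is the M-orthogonal direct sum of the image of the discrete gradient and the two-dimensional space spanned by (osc₁, 0) and (0, osc₂), where osc₁ = osc_x ⊗ 𝟙 and osc₂ = 𝟙 ⊗ osc_y. -/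
open Matrix Kronecker Module

section Helpers

/-- The oscillatory vector satisfies `Dᵀ M osc = 0`. -/
lemma DtM_osc_eq_zero {n : ℕ} (D M : Matrix (Fin n) (Fin n) ℝ) (hM : M.PosDef)
    (osc : Fin n → ℝ)
    (hosc : LinearMap.ker (M⁻¹ * Dᵀ * M).mulVecLin = Submodule.span ℝ {osc}) :
    Dᵀ *ᵥ (M *ᵥ osc) = 0 := by
  have h1 : osc ∈ LinearMap.ker (M⁻¹ * Dᵀ * M).mulVecLin := by
    rw [hosc]; exact Submodule.mem_span_singleton_self _
  have h2 : (M⁻¹ * Dᵀ * M) *ᵥ osc = 0 := h1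
  have hMM : M * M⁻¹ = 1 := Matrix.mul_nonsing_inv M hM.det_pos.ne'.isUnit
  have : M *ᵥ ((M⁻¹ * Dᵀ * M) *ᵥ osc) = Dᵀ *ᵥ (M *ᵥ osc) := by
    rw [mulVec_mulVec, ← Matrix.mul_assoc, ← Matrix.mul_assoc, hMM, Matrix.one_mul,
      ← mulVec_mulVec]
  rw [h2, mulVec_zero] at this
  exact this.symm

lemma osc_ne_zero {n : ℕ} (D M : Matrix (Fin n) (Fin n) ℝ) (hM : M.PosDef)
    (hD : LinearMap.ker D.mulVecLin = Submodule.span ℝ {(fun _ => 1 : Fin n → ℝ)})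
    (osc : Fin n → ℝ)
    (hosc : LinearMap.ker (M⁻¹ * Dᵀ * M).mulVecLin = Submodule.span ℝ {osc})
    (hn : 0 < n) : osc ≠ 0 := by
  have h1 : (fun _ => (1:ℝ) : Fin n → ℝ) ∈ LinearMap.ker D.mulVecLin := by
    rw [hD]; exact Submodule.mem_span_singleton_self _
  have hone : (fun _ => (1:ℝ) : Fin n → ℝ) ≠ 0 := by
    intro h; have := congrFun h ⟨0, hn⟩; simp at this
  have hdet : D.det = 0 := by
    rw [← Matrix.exists_mulVec_eq_zero_iff]
    exact ⟨_, hone, h1⟩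
  have hdetT : Dᵀ.det = 0 := by rw [Matrix.det_transpose]; exact hdet
  obtain ⟨y, hy0, hy⟩ := Matrix.exists_mulVec_eq_zero_iff.mpr hdetT
  have hMM : M * M⁻¹ = 1 := Matrix.mul_nonsing_inv M hM.det_pos.ne'.isUnit
  set x := M⁻¹ *ᵥ y with hx
  have hMx : M *ᵥ x = y := by rw [hx, mulVec_mulVec, hMM, one_mulVec]
  have hx0 : x ≠ 0 := by
    intro h; rw [h, mulVec_zero] at hMx; exact hy0 hMx.symm
  have hker : x ∈ LinearMap.ker (M⁻¹ * Dᵀ * M).mulVecLin := by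
    show (M⁻¹ * Dᵀ * M) *ᵥ x = 0
    rw [← mulVec_mulVec, ← mulVec_mulVec, hMx, hy, mulVec_zero]
  rw [hosc] at hker
  intro h
  rw [h, Submodule.span_zero_singleton, Submodule.mem_bot] at hker
  exact hx0 hker

lemma mem_range_of_orth {n : ℕ} (D M : Matrix (Fin n) (Fin n) ℝ)
    (hD : LinearMap.ker D.mulVecLin = Submodule.span ℝ {(fun _ => 1 : Fin n → ℝ)})
    (osc : Fin n → ℝ) (hq : (M *ᵥ osc) ⬝ᵥ osc ≠ 0)
    (hDtM : Dᵀ *ᵥ (M *ᵥ osc) = 0) (hn : 0 < n)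
    (x : Fin n → ℝ) (hx : (M *ᵥ osc) ⬝ᵥ x = 0) : ∃ v, D *ᵥ v = x := by
  set z := M *ᵥ osc with hz
  let f : (Fin n → ℝ) →ₗ[ℝ] ℝ :=
    { toFun := fun y => z ⬝ᵥ y
      map_add' := fun a b => dotProduct_add _ a b
      map_smul' := fun c a => by simp [dotProduct_smul] }
  have hfr : LinearMap.range D.mulVecLin ≤ LinearMap.ker f := by
    rintro y ⟨v, rfl⟩
    show z ⬝ᵥ (D *ᵥ v) = 0
    rw [dotProduct_mulVec, ← mulVec_transpose, hDtM, zero_dotProduct]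
  have hone : (fun _ => (1:ℝ) : Fin n → ℝ) ≠ 0 := by
    intro h; have := congrFun h ⟨0, hn⟩; simp at this
  have hcard : finrank ℝ (Fin n → ℝ) = n := by
    simp [Module.finrank_pi]
  have hkD : finrank ℝ (LinearMap.ker D.mulVecLin) = 1 := by
    rw [hD]; exact finrank_span_singleton hone
  have hrD : finrank ℝ (LinearMap.range D.mulVecLin) + 1 = n := by
    rw [← hkD, LinearMap.finrank_range_add_finrank_ker, hcard]
  have hfsurj : Function.Surjective f := by
    intro r
    refine ⟨(r / (z ⬝ᵥ osc)) • osc, ?_⟩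
    show z ⬝ᵥ ((r / (z ⬝ᵥ osc)) • osc) = r
    rw [dotProduct_smul, smul_eq_mul]
    field_simp
  have hrf : finrank ℝ (LinearMap.range f) = 1 := by
    rw [LinearMap.range_eq_top.mpr hfsurj]; simp
  have hkf : finrank ℝ (LinearMap.ker f) + 1 = n := by
    have := LinearMap.finrank_range_add_finrank_ker f
    rw [hrf, hcard, add_comm] at this
    omega
  have heq : LinearMap.range D.mulVecLin = LinearMap.ker f :=
    Submodule.eq_of_le_of_finrank_eq hfr (by omega)
  have : x ∈ LinearMap.ker f := hx
  rw [← heq] at this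
  obtain ⟨v, hv⟩ := this
  exact ⟨v, hv⟩

lemma kron_mulVec_apply {m n : ℕ} (A : Matrix (Fin m) (Fin m) ℝ)
    (B : Matrix (Fin n) (Fin n) ℝ) (u : Fin m × Fin n → ℝ) (p : Fin m × Fin n) :
    ((A ⊗ₖ B) *ᵥ u) p = ∑ k, ∑ l, A p.1 k * B p.2 l * u (k, l) := by
  simp [Matrix.mulVec, dotProduct, Fintype.sum_prod_type, kroneckerMap_apply]

lemma kron_one_mulVec_apply {m n : ℕ} (A : Matrix (Fin m) (Fin m) ℝ)
    (u : Fin m × Fin n → ℝ) (p : Fin m × Fin n) :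
    ((A ⊗ₖ (1 : Matrix (Fin n) (Fin n) ℝ)) *ᵥ u) p = ∑ k, A p.1 k * u (k, p.2) := by
  rw [kron_mulVec_apply]
  refine Finset.sum_congr rfl fun k _ => ?_
  rw [Finset.sum_eq_single p.2] <;> simp +contextual [Matrix.one_apply, eq_comm]

lemma one_kron_mulVec_apply {m n : ℕ} (B : Matrix (Fin n) (Fin n) ℝ)
    (u : Fin m × Fin n → ℝ) (p : Fin m × Fin n) :
    (((1 : Matrix (Fin m) (Fin m) ℝ) ⊗ₖ B) *ᵥ u) p = ∑ l, B p.2 l * u (p.1, l) := by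
  rw [kron_mulVec_apply, Finset.sum_eq_single p.1] <;>
    simp +contextual [Matrix.one_apply, eq_comm]

lemma sum_helper_x {m n : ℕ} (d : Matrix (Fin m) (Fin m) ℝ) (e : Fin m → ℝ)
    (he : dᵀ *ᵥ e = 0) (g : Fin n → ℝ) (φ : Fin m × Fin n → ℝ) :
    ∑ p : Fin m × Fin n, (e p.1 * g p.2) * (∑ k, d p.1 k * φ (k, p.2)) = 0 := by
  have hz : ∀ k, ∑ i, d i k * e i = 0 := fun k => by
    have := congrFun he k
    simpa [Matrix.mulVec, dotProduct, Matrix.transpose_apply] using this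
  have key : ∀ j : Fin n, ∑ i, (e i * g j) * (∑ k, d i k * φ (k, j)) = 0 := by
    intro j
    calc ∑ i, (e i * g j) * (∑ k, d i k * φ (k, j))
        = ∑ i, ∑ k, (e i * g j) * (d i k * φ (k, j)) := by simp_rw [Finset.mul_sum]
      _ = ∑ k, ∑ i, (e i * g j) * (d i k * φ (k, j)) := Finset.sum_comm
      _ = ∑ k, (∑ i, d i k * e i) * (g j * φ (k, j)) :=
          Finset.sum_congr rfl fun k _ => by
            rw [Finset.sum_mul]; exact Finset.sum_congr rfl fun i _ => by ring
      _ = 0 := by simp [hz]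
  rw [Fintype.sum_prod_type, Finset.sum_comm]
  exact Finset.sum_eq_zero fun j _ => key j

lemma sum_helper_y {m n : ℕ} (d : Matrix (Fin n) (Fin n) ℝ) (e : Fin n → ℝ)
    (he : dᵀ *ᵥ e = 0) (g : Fin m → ℝ) (φ : Fin m × Fin n → ℝ) :
    ∑ p : Fin m × Fin n, (g p.1 * e p.2) * (∑ l, d p.2 l * φ (p.1, l)) = 0 := by
  have hz : ∀ l, ∑ j, d j l * e j = 0 := fun l => by
    have := congrFun he l
    simpa [Matrix.mulVec, dotProduct, Matrix.transpose_apply] using this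
  have key : ∀ i : Fin m, ∑ j, (g i * e j) * (∑ l, d j l * φ (i, l)) = 0 := by
    intro i
    calc ∑ j, (g i * e j) * (∑ l, d j l * φ (i, l))
        = ∑ j, ∑ l, (g i * e j) * (d j l * φ (i, l)) := by simp_rw [Finset.mul_sum]
      _ = ∑ l, ∑ j, (g i * e j) * (d j l * φ (i, l)) := Finset.sum_comm
      _ = ∑ l, (∑ j, d j l * e j) * (g i * φ (i, l)) :=
          Finset.sum_congr rfl fun l _ => by
            rw [Finset.sum_mul]; exact Finset.sum_congr rfl fun j _ => by ring
      _ = 0 := by simp [hz]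
  rw [Fintype.sum_prod_type]
  exact Finset.sum_eq_zero fun i _ => key i

lemma sum_swap_mul {m n : ℕ} (f : Fin m → ℝ) (g : Fin n → ℝ) (h : Fin m → Fin n → ℝ) :
    ∑ k, f k * ∑ l, g l * h k l = ∑ l, g l * ∑ k, f k * h k l := by
  calc ∑ k, f k * ∑ l, g l * h k l
      = ∑ k, ∑ l, f k * (g l * h k l) := by simp_rw [Finset.mul_sum]
    _ = ∑ l, ∑ k, f k * (g l * h k l) := Finset.sum_comm
    _ = ∑ l, g l * ∑ k, f k * h k l := by
        refine Finset.sum_congr rfl fun l _ => ?_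
        rw [Finset.mul_sum]
        exact Finset.sum_congr rfl fun k _ => by ring

lemma sum_mul_sub_const {m : ℕ} (f x : Fin m → ℝ) (c : ℝ) :
    ∑ k, f k * (x k - c) = (∑ k, f k * x k) - c * ∑ k, f k := by
  rw [Finset.mul_sum, ← Finset.sum_sub_distrib]
  exact Finset.sum_congr rfl fun k _ => by ring

lemma sum_mul_sub_mul {m : ℕ} (f x y : Fin m → ℝ) (c : ℝ) :
    ∑ k, f k * (x k - c * y k) = (∑ k, f k * x k) - c * ∑ k, f k * y k := by
  rw [Finset.mul_sum, ← Finset.sum_sub_distrib]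
  exact Finset.sum_congr rfl fun k _ => by ring

end Helpers

/-- For nullspace consistent tensor product SBP operators in two dimensions, the kernel of the
discrete curl is the `M`-orthogonal direct sum of the image of the discrete gradient and the
two-dimensional space spanned by `(osc₁, 0)` and `(0, osc₂)`, where `osc₁ = osc_x ⊗ 𝟙` and
`osc₂ = 𝟙 ⊗ osc_y`. -/
theorem ker_curl_eq_im_grad_oplus_osc_2D (N₁ N₂ : ℕ)
    (Dx Mx : Matrix (Fin N₁) (Fin N₁) ℝ) (Dy My : Matrix (Fin N₂) (Fin N₂) ℝ)
    (hMx : Mx.PosDef) (hMxsym : Mx.IsSymm) (hMy : My.PosDef) (hMysym : My.IsSymm)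
    (hDx : LinearMap.ker Dx.mulVecLin = Submodule.span ℝ {(fun _ => 1 : Fin N₁ → ℝ)})
    (hDy : LinearMap.ker Dy.mulVecLin = Submodule.span ℝ {(fun _ => 1 : Fin N₂ → ℝ)})
    (oscx : Fin N₁ → ℝ) (oscy : Fin N₂ → ℝ)
    (hoscx : LinearMap.ker (Mx⁻¹ * Dxᵀ * Mx).mulVecLin = Submodule.span ℝ {oscx})
    (hoscy : LinearMap.ker (My⁻¹ * Dyᵀ * My).mulVecLin = Submodule.span ℝ {oscy})
    (D₁ D₂ : Matrix (Fin N₁ × Fin N₂) (Fin N₁ × Fin N₂) ℝ)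
    (hD₁ : D₁ = Dx ⊗ₖ (1 : Matrix (Fin N₂) (Fin N₂) ℝ))
    (hD₂ : D₂ = (1 : Matrix (Fin N₁) (Fin N₁) ℝ) ⊗ₖ Dy)
    (grad : (Fin N₁ × Fin N₂ → ℝ) →ₗ[ℝ] (Fin N₁ × Fin N₂ → ℝ) × (Fin N₁ × Fin N₂ → ℝ))
    (hgrad : grad = LinearMap.prod D₁.mulVecLin D₂.mulVecLin)
    (curl : (Fin N₁ × Fin N₂ → ℝ) × (Fin N₁ × Fin N₂ → ℝ) →ₗ[ℝ] (Fin N₁ × Fin N₂ → ℝ))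
    (hcurl : curl = D₁.mulVecLin ∘ₗ LinearMap.snd ℝ _ _ - D₂.mulVecLin ∘ₗ LinearMap.fst ℝ _ _)
    (osc₁ osc₂ : Fin N₁ × Fin N₂ → ℝ)
    (hosc₁ : osc₁ = fun p => oscx p.1) (hosc₂ : osc₂ = fun p => oscy p.2)
    (O : Submodule ℝ ((Fin N₁ × Fin N₂ → ℝ) × (Fin N₁ × Fin N₂ → ℝ)))
    (hO : O = Submodule.span ℝ {(osc₁, (0 : Fin N₁ × Fin N₂ → ℝ)), ((0 : Fin N₁ × Fin N₂ → ℝ), osc₂)}) :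
    LinearMap.ker curl = LinearMap.range grad ⊔ O ∧
      Disjoint (LinearMap.range grad) O ∧
      (∀ u ∈ LinearMap.range grad, ∀ w ∈ O,
        u.1 ⬝ᵥ (Mx ⊗ₖ My).mulVec w.1 + u.2 ⬝ᵥ (Mx ⊗ₖ My).mulVec w.2 = 0) := by
  subst hD₁ hD₂ hgrad hcurl hosc₁ hosc₂ hO
  by_cases hdeg : N₁ = 0 ∨ N₂ = 0
  · -- degenerate case: the index type is empty
    have hie : IsEmpty (Fin N₁ × Fin N₂) := by
      rcases hdeg with h | h <;> subst h
      · exact ⟨fun p => p.1.elim0⟩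
      · exact ⟨fun p => p.2.elim0⟩
    haveI := hie
    haveI : Subsingleton (Fin N₁ × Fin N₂ → ℝ) := ⟨fun a b => funext fun p => hie.elim p⟩
    haveI : Subsingleton ((Fin N₁ × Fin N₂ → ℝ) × (Fin N₁ × Fin N₂ → ℝ)) :=
      ⟨fun a b => Prod.ext (Subsingleton.elim _ _) (Subsingleton.elim _ _)⟩
    refine ⟨Subsingleton.elim _ _, ?_, ?_⟩
    · rw [disjoint_iff]; exact Subsingleton.elim _ _
    · intro u _ w _
      simp [dotProduct]
  · push_neg at hdeg
    have h₁ : 0 < N₁ := Nat.pos_of_ne_zero hdeg.1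
    have h₂ : 0 < N₂ := Nat.pos_of_ne_zero hdeg.2

    -- basic facts
    have hone₁ : (fun _ => (1:ℝ) : Fin N₁ → ℝ) ≠ 0 := by
      intro h; have := congrFun h ⟨0, h₁⟩; simp at this
    have hone₂ : (fun _ => (1:ℝ) : Fin N₂ → ℝ) ≠ 0 := by
      intro h; have := congrFun h ⟨0, h₂⟩; simp at this
    have hDx1 : Dx *ᵥ (fun _ => (1:ℝ)) = 0 := by
      have : (fun _ => (1:ℝ) : Fin N₁ → ℝ) ∈ LinearMap.ker Dx.mulVecLin := by
        rw [hDx]; exact Submodule.mem_span_singleton_self _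
      exact this
    have hDy1 : Dy *ᵥ (fun _ => (1:ℝ)) = 0 := by
      have : (fun _ => (1:ℝ) : Fin N₂ → ℝ) ∈ LinearMap.ker Dy.mulVecLin := by
        rw [hDy]; exact Submodule.mem_span_singleton_self _
      exact this
    have hDx1' : ∀ i, ∑ k, Dx i k = 0 := fun i => by
      have := congrFun hDx1 i
      simpa [Matrix.mulVec, dotProduct] using this
    have hDy1' : ∀ j, ∑ l, Dy j l = 0 := fun j => by
      have := congrFun hDy1 j
      simpa [Matrix.mulVec, dotProduct] using this
    have hkerx : ∀ x : Fin N₁ → ℝ, Dx *ᵥ x = 0 → ∃ c : ℝ, ∀ i, x i = c := by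
      intro x hx
      have : x ∈ LinearMap.ker Dx.mulVecLin := hx
      rw [hDx, Submodule.mem_span_singleton] at this
      obtain ⟨c, hc⟩ := this
      exact ⟨c, fun i => by rw [← hc]; simp⟩
    have hkery : ∀ x : Fin N₂ → ℝ, Dy *ᵥ x = 0 → ∃ c : ℝ, ∀ j, x j = c := by
      intro x hx
      have : x ∈ LinearMap.ker Dy.mulVecLin := hx
      rw [hDy, Submodule.mem_span_singleton] at this
      obtain ⟨c, hc⟩ := this
      exact ⟨c, fun j => by rw [← hc]; simp⟩
    have hDtMx : Dxᵀ *ᵥ (Mx *ᵥ oscx) = 0 := DtM_osc_eq_zero Dx Mx hMx oscx hoscx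
    have hDtMy : Dyᵀ *ᵥ (My *ᵥ oscy) = 0 := DtM_osc_eq_zero Dy My hMy oscy hoscy
    have hoscx0 : oscx ≠ 0 := osc_ne_zero Dx Mx hMx hDx oscx hoscx h₁
    have hoscy0 : oscy ≠ 0 := osc_ne_zero Dy My hMy hDy oscy hoscy h₂
    have hqx0 : 0 < (Mx *ᵥ oscx) ⬝ᵥ oscx := by
      rw [dotProduct_comm]
      simpa using hMx.dotProduct_mulVec_pos hoscx0
    have hqy0 : 0 < (My *ᵥ oscy) ⬝ᵥ oscy := by
      rw [dotProduct_comm]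
      simpa using hMy.dotProduct_mulVec_pos hoscy0
    have hqx : (Mx *ᵥ oscx) ⬝ᵥ oscx ≠ 0 := ne_of_gt hqx0
    have hqy : (My *ᵥ oscy) ⬝ᵥ oscy ≠ 0 := ne_of_gt hqy0
    have hzx : ∀ k, ∑ i, Dx i k * (Mx *ᵥ oscx) i = 0 := fun k => by
      have := congrFun hDtMx k
      simpa [Matrix.mulVec, dotProduct, Matrix.transpose_apply] using this
    have hzy : ∀ l, ∑ j, Dy j l * (My *ᵥ oscy) j = 0 := fun l => by
      have := congrFun hDtMy l
      simpa [Matrix.mulVec, dotProduct, Matrix.transpose_apply] using this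
    -- pointwise formulas for M ⊗ M applied to the oscillation modes
    have hKosc₁ : ∀ p : Fin N₁ × Fin N₂,
        ((Mx ⊗ₖ My) *ᵥ (fun p => oscx p.1)) p = (Mx *ᵥ oscx) p.1 * (∑ l, My p.2 l) := by
      intro p
      rw [kron_mulVec_apply]
      show ∑ k, ∑ l, Mx p.1 k * My p.2 l * oscx k = _
      calc ∑ k, ∑ l, Mx p.1 k * My p.2 l * oscx k
          = ∑ k, (Mx p.1 k * oscx k) * ∑ l, My p.2 l := by
            refine Finset.sum_congr rfl fun k _ => ?_
            rw [Finset.mul_sum]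
            exact Finset.sum_congr rfl fun l _ => by ring
        _ = (∑ k, Mx p.1 k * oscx k) * ∑ l, My p.2 l := by rw [Finset.sum_mul]
        _ = (Mx *ᵥ oscx) p.1 * ∑ l, My p.2 l := rfl
    have hKosc₂ : ∀ p : Fin N₁ × Fin N₂,
        ((Mx ⊗ₖ My) *ᵥ (fun p => oscy p.2)) p = (∑ k, Mx p.1 k) * (My *ᵥ oscy) p.2 := by
      intro p
      rw [kron_mulVec_apply]
      show ∑ k, ∑ l, Mx p.1 k * My p.2 l * oscy l = _
      calc ∑ k, ∑ l, Mx p.1 k * My p.2 l * oscy l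
          = ∑ k, Mx p.1 k * ∑ l, My p.2 l * oscy l := by
            refine Finset.sum_congr rfl fun k _ => ?_
            rw [Finset.mul_sum]
            exact Finset.sum_congr rfl fun l _ => by ring
        _ = (∑ k, Mx p.1 k) * ∑ l, My p.2 l * oscy l := by rw [Finset.sum_mul]
        _ = (∑ k, Mx p.1 k) * (My *ᵥ oscy) p.2 := rfl
    -- the two fundamental orthogonality computations
    have claimA : ∀ φ : Fin N₁ × Fin N₂ → ℝ,
        ((Dx ⊗ₖ (1 : Matrix (Fin N₂) (Fin N₂) ℝ)) *ᵥ φ) ⬝ᵥ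
          ((Mx ⊗ₖ My) *ᵥ (fun p => oscx p.1)) = 0 := by
      intro φ
      have hs := sum_helper_x Dx (Mx *ᵥ oscx) hDtMx (fun j => ∑ l, My j l) φ
      rw [show ((Dx ⊗ₖ (1 : Matrix (Fin N₂) (Fin N₂) ℝ)) *ᵥ φ) ⬝ᵥ
          ((Mx ⊗ₖ My) *ᵥ (fun p => oscx p.1)) =
          ∑ p : Fin N₁ × Fin N₂, ((Mx *ᵥ oscx) p.1 * (∑ l, My p.2 l)) *
            (∑ k, Dx p.1 k * φ (k, p.2)) from ?_]
      · exact hs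
      · rw [dotProduct]
        refine Finset.sum_congr rfl fun p _ => ?_
        rw [kron_one_mulVec_apply, hKosc₁]
        ring
    have claimB : ∀ φ : Fin N₁ × Fin N₂ → ℝ,
        (((1 : Matrix (Fin N₁) (Fin N₁) ℝ) ⊗ₖ Dy) *ᵥ φ) ⬝ᵥ
          ((Mx ⊗ₖ My) *ᵥ (fun p => oscy p.2)) = 0 := by
      intro φ
      have hs := sum_helper_y Dy (My *ᵥ oscy) hDtMy (fun i => ∑ k, Mx i k) φ
      rw [show (((1 : Matrix (Fin N₁) (Fin N₁) ℝ) ⊗ₖ Dy) *ᵥ φ) ⬝ᵥ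
          ((Mx ⊗ₖ My) *ᵥ (fun p => oscy p.2)) =
          ∑ p : Fin N₁ × Fin N₂, ((∑ k, Mx p.1 k) * (My *ᵥ oscy) p.2) *
            (∑ l, Dy p.2 l * φ (p.1, l)) from ?_]
      · exact hs
      · rw [dotProduct]
        refine Finset.sum_congr rfl fun p _ => ?_
        rw [one_kron_mulVec_apply, hKosc₂]
        ring
    -- part 3 : orthogonality
    have horth : ∀ u ∈ LinearMap.range
          (LinearMap.prod (Dx ⊗ₖ (1 : Matrix (Fin N₂) (Fin N₂) ℝ)).mulVecLin
            ((1 : Matrix (Fin N₁) (Fin N₁) ℝ) ⊗ₖ Dy).mulVecLin),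
        ∀ w ∈ Submodule.span ℝ {((fun p => oscx p.1 : Fin N₁ × Fin N₂ → ℝ),
            (0 : Fin N₁ × Fin N₂ → ℝ)),
            ((0 : Fin N₁ × Fin N₂ → ℝ), (fun p => oscy p.2 : Fin N₁ × Fin N₂ → ℝ))},
        u.1 ⬝ᵥ (Mx ⊗ₖ My).mulVec w.1 + u.2 ⬝ᵥ (Mx ⊗ₖ My).mulVec w.2 = 0 := by
      rintro u ⟨φ, rfl⟩ w hw
      rw [Submodule.mem_span_pair] at hw
      obtain ⟨s, t, rfl⟩ := hw
      simp only [LinearMap.prod_apply, Function.prod, Matrix.mulVecLin_apply, Prod.fst_add,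
        Prod.snd_add, Prod.smul_fst, Prod.smul_snd, smul_zero, add_zero, zero_add,
        Matrix.mulVec_smul, dotProduct_smul]
      rw [claimA φ, claimB φ]
      simp
    refine ⟨?_, ?_, horth⟩
    · -- part 1 : kernel of curl equals range of grad ⊔ O
      apply le_antisymm
      · -- the hard inclusion
        intro u hu
        have hcc : ((1 : Matrix (Fin N₁) (Fin N₁) ℝ) ⊗ₖ Dy) *ᵥ u.1 =
            (Dx ⊗ₖ (1 : Matrix (Fin N₂) (Fin N₂) ℝ)) *ᵥ u.2 := by
          have h0 : (Dx ⊗ₖ (1 : Matrix (Fin N₂) (Fin N₂) ℝ)).mulVecLin u.2 -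
              ((1 : Matrix (Fin N₁) (Fin N₁) ℝ) ⊗ₖ Dy).mulVecLin u.1 = 0 := by
            have := LinearMap.mem_ker.mp hu
            simpa [LinearMap.sub_apply, LinearMap.comp_apply] using this
          have := sub_eq_zero.mp h0
          simpa [Matrix.mulVecLin_apply] using this.symm
        have hcc' : ∀ i j, ∑ l, Dy j l * u.1 (i, l) = ∑ k, Dx i k * u.2 (k, j) := by
          intro i j
          have h := congrFun hcc (i, j)
          rw [one_kron_mulVec_apply, kron_one_mulVec_apply] at h
          exact h
        -- the x-oscillation coefficient of u.1 is constant in j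
        have hc₁ : Dy *ᵥ (fun j => ∑ i, (Mx *ᵥ oscx) i * u.1 (i, j)) = 0 := by
          funext j
          show ∑ l, Dy j l * ∑ i, (Mx *ᵥ oscx) i * u.1 (i, l) = (0 : ℝ)
          calc ∑ l, Dy j l * ∑ i, (Mx *ᵥ oscx) i * u.1 (i, l)
              = ∑ i, (Mx *ᵥ oscx) i * ∑ l, Dy j l * u.1 (i, l) := sum_swap_mul _ _ _
            _ = ∑ i, (Mx *ᵥ oscx) i * ∑ k, Dx i k * u.2 (k, j) := by
                exact Finset.sum_congr rfl fun i _ => by rw [hcc' i j]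
            _ = ∑ i, ∑ k, (Mx *ᵥ oscx) i * (Dx i k * u.2 (k, j)) := by
                simp_rw [Finset.mul_sum]
            _ = ∑ k, ∑ i, (Mx *ᵥ oscx) i * (Dx i k * u.2 (k, j)) := Finset.sum_comm
            _ = ∑ k, (∑ i, Dx i k * (Mx *ᵥ oscx) i) * u.2 (k, j) := by
                refine Finset.sum_congr rfl fun k _ => ?_
                rw [Finset.sum_mul]
                exact Finset.sum_congr rfl fun i _ => by ring
            _ = 0 := by simp [hzx]
        obtain ⟨α, hα⟩ := hkery _ hc₁
        obtain ⟨a, ha⟩ : ∃ a : ℝ, a * ((Mx *ᵥ oscx) ⬝ᵥ oscx) = α :=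
          ⟨α / _, div_mul_cancel₀ α hqx⟩
        -- decompose each column of u.1
        have hv₁ : ∀ j : Fin N₂, (Mx *ᵥ oscx) ⬝ᵥ (fun i => u.1 (i, j) - a * oscx i) = 0 := by
          intro j
          show ∑ i, (Mx *ᵥ oscx) i * (u.1 (i, j) - a * oscx i) = 0
          rw [sum_mul_sub_mul]
          have h1 : ∑ i, (Mx *ᵥ oscx) i * u.1 (i, j) = α := hα j
          have h2 : ∑ i, (Mx *ᵥ oscx) i * oscx i = (Mx *ᵥ oscx) ⬝ᵥ oscx := rfl
          rw [h1, h2, ha, sub_self]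
        choose ψ hψ using fun j =>
          mem_range_of_orth Dx Mx hDx oscx hqx hDtMx h₁ _ (hv₁ j)
        have hψ' : ∀ i j, ∑ k, Dx i k * ψ j k = u.1 (i, j) - a * oscx i := by
          intro i j
          exact congrFun (hψ j) i
        -- the y-oscillation coefficient at the row i₀
        set i₀ : Fin N₁ := ⟨0, h₁⟩ with hi₀
        obtain ⟨b, hb⟩ : ∃ b : ℝ, b * ((My *ᵥ oscy) ⬝ᵥ oscy) =
            ∑ j, (My *ᵥ oscy) j * u.2 (i₀, j) :=
          ⟨_ / _, div_mul_cancel₀ _ hqy⟩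
        have hv₂ : (My *ᵥ oscy) ⬝ᵥ (fun j => u.2 (i₀, j) - b * oscy j) = 0 := by
          show ∑ j, (My *ᵥ oscy) j * (u.2 (i₀, j) - b * oscy j) = 0
          rw [sum_mul_sub_mul]
          have h2 : ∑ j, (My *ᵥ oscy) j * oscy j = (My *ᵥ oscy) ⬝ᵥ oscy := rfl
          rw [h2, hb, sub_self]
        -- the defect w and its properties
        set w : Fin N₁ × Fin N₂ → ℝ :=
          fun p => (∑ l, Dy p.2 l * ψ l p.1) - (u.2 p - b * oscy p.2) with hwdef
        have hwapp : ∀ i j, w (i, j) = (∑ l, Dy j l * ψ l i) - (u.2 (i, j) - b * oscy j) :=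
          fun i j => rfl
        have hw : ∀ i j, ∑ k, Dx i k * w (k, j) = 0 := by
          intro i j
          have t1 : ∑ k, Dx i k * ∑ l, Dy j l * ψ l k = ∑ k, Dx i k * u.2 (k, j) := by
            rw [sum_swap_mul]
            calc ∑ l, Dy j l * ∑ k, Dx i k * ψ l k
                = ∑ l, Dy j l * (u.1 (i, l) - a * oscx i) := by
                  exact Finset.sum_congr rfl fun l _ => by rw [hψ' i l]
              _ = (∑ l, Dy j l * u.1 (i, l)) - (a * oscx i) * ∑ l, Dy j l :=
                  sum_mul_sub_const _ _ _
              _ = ∑ k, Dx i k * u.2 (k, j) := by rw [hDy1' j, hcc' i j]; ring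
          calc ∑ k, Dx i k * w (k, j)
              = ∑ k, Dx i k * ((∑ l, Dy j l * ψ l k) - (u.2 (k, j) - b * oscy j)) := by
                exact Finset.sum_congr rfl fun k _ => by rw [hwapp k j]
            _ = ((∑ k, Dx i k * ∑ l, Dy j l * ψ l k) - ∑ k, Dx i k * u.2 (k, j)) +
                  (b * oscy j) * ∑ k, Dx i k := by
                rw [Finset.mul_sum, ← Finset.sum_sub_distrib, ← Finset.sum_add_distrib]
                exact Finset.sum_congr rfl fun k _ => by ring
            _ = 0 := by rw [t1, hDx1' i]; ring
        have hwconst : ∀ i j, w (i, j) = w (i₀, j) := by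
          intro i j
          have hker0 : Dx *ᵥ (fun i => w (i, j)) = 0 := by
            funext i'
            show ∑ k, Dx i' k * w (k, j) = (0 : ℝ)
            exact hw i' j
          obtain ⟨c, hc⟩ := hkerx (fun i => w (i, j)) hker0
          exact (hc i).trans (hc i₀).symm
        -- solve for the y-part
        obtain ⟨h₂v, hh₂⟩ := mem_range_of_orth Dy My hDy oscy hqy hDtMy h₂ _ hv₂
        have hhv : Dy *ᵥ ((fun l => ψ l i₀) - h₂v) = fun j => w (i₀, j) := by
          rw [Matrix.mulVec_sub, hh₂]
          funext j
          show (∑ l, Dy j l * ψ l i₀) - (u.2 (i₀, j) - b * oscy j) = w (i₀, j)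
          rw [hwapp i₀ j]
        set hv : Fin N₂ → ℝ := (fun l => ψ l i₀) - h₂v with hhvdef
        have hhv' : ∀ j, ∑ l, Dy j l * hv l = w (i₀, j) := fun j => congrFun hhv j
        -- the potential
        set φ : Fin N₁ × Fin N₂ → ℝ := fun p => ψ p.2 p.1 - hv p.2 with hφdef
        have hφ₁ : ∀ i j, ∑ k, Dx i k * φ (k, j) = u.1 (i, j) - a * oscx i := by
          intro i j
          calc ∑ k, Dx i k * φ (k, j)
              = ∑ k, Dx i k * (ψ j k - hv j) :=
                Finset.sum_congr rfl fun k _ => rfl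
            _ = (∑ k, Dx i k * ψ j k) - (hv j) * ∑ k, Dx i k := sum_mul_sub_const _ _ _
            _ = u.1 (i, j) - a * oscx i := by rw [hψ' i j, hDx1' i]; ring
        have hφ₂ : ∀ i j, ∑ l, Dy j l * φ (i, l) = u.2 (i, j) - b * oscy j := by
          intro i j
          calc ∑ l, Dy j l * φ (i, l)
              = ∑ l, (Dy j l * ψ l i - Dy j l * hv l) :=
                Finset.sum_congr rfl fun l _ => by show Dy j l * (ψ l i - hv l) = _; ring
            _ = (∑ l, Dy j l * ψ l i) - ∑ l, Dy j l * hv l := Finset.sum_sub_distrib _ _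
            _ = (∑ l, Dy j l * ψ l i) - w (i, j) := by rw [hhv' j, ← hwconst i j]
            _ = u.2 (i, j) - b * oscy j := by rw [hwapp i j]; ring
        -- assemble
        have hfin : u = (LinearMap.prod (Dx ⊗ₖ (1 : Matrix (Fin N₂) (Fin N₂) ℝ)).mulVecLin
              ((1 : Matrix (Fin N₁) (Fin N₁) ℝ) ⊗ₖ Dy).mulVecLin) φ +
            (a • ((fun p => oscx p.1 : Fin N₁ × Fin N₂ → ℝ), (0 : Fin N₁ × Fin N₂ → ℝ)) +
             b • ((0 : Fin N₁ × Fin N₂ → ℝ), (fun p => oscy p.2 : Fin N₁ × Fin N₂ → ℝ))) := by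
          have e1 : u.1 = (Dx ⊗ₖ (1 : Matrix (Fin N₂) (Fin N₂) ℝ)) *ᵥ φ +
              a • (fun p : Fin N₁ × Fin N₂ => oscx p.1) := by
            funext p
            obtain ⟨i, j⟩ := p
            have h := kron_one_mulVec_apply Dx φ (i, j)
            show u.1 (i, j) = ((Dx ⊗ₖ (1 : Matrix (Fin N₂) (Fin N₂) ℝ)) *ᵥ φ) (i, j)
              + a * oscx i
            rw [h]
            have h2 : ∑ k, Dx (i, j).1 k * φ (k, (i, j).2) = u.1 (i, j) - a * oscx i :=
              hφ₁ i j
            rw [h2]; ring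
          have e2 : u.2 = ((1 : Matrix (Fin N₁) (Fin N₁) ℝ) ⊗ₖ Dy) *ᵥ φ +
              b • (fun p : Fin N₁ × Fin N₂ => oscy p.2) := by
            funext p
            obtain ⟨i, j⟩ := p
            have h := one_kron_mulVec_apply Dy φ (i, j)
            show u.2 (i, j) = (((1 : Matrix (Fin N₁) (Fin N₁) ℝ) ⊗ₖ Dy) *ᵥ φ) (i, j)
              + b * oscy j
            rw [h]
            have h2 : ∑ l, Dy (i, j).2 l * φ ((i, j).1, l) = u.2 (i, j) - b * oscy j :=
              hφ₂ i j
            rw [h2]; ring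
          refine Prod.ext ?_ ?_
          · simpa [Matrix.mulVecLin_apply] using e1
          · simpa [Matrix.mulVecLin_apply] using e2
        rw [hfin]
        refine Submodule.add_mem_sup ⟨φ, rfl⟩ ?_
        refine Submodule.add_mem _
          (Submodule.smul_mem _ a (Submodule.subset_span (by simp)))
          (Submodule.smul_mem _ b (Submodule.subset_span (by simp)))
      · -- the easy inclusion
        have hcomm : ∀ ψ : Fin N₁ × Fin N₂ → ℝ,
            (Dx ⊗ₖ (1 : Matrix (Fin N₂) (Fin N₂) ℝ)) *ᵥ
              (((1 : Matrix (Fin N₁) (Fin N₁) ℝ) ⊗ₖ Dy) *ᵥ ψ) =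
            ((1 : Matrix (Fin N₁) (Fin N₁) ℝ) ⊗ₖ Dy) *ᵥ
              ((Dx ⊗ₖ (1 : Matrix (Fin N₂) (Fin N₂) ℝ)) *ᵥ ψ) := by
          intro ψ
          funext p
          obtain ⟨i, j⟩ := p
          rw [kron_one_mulVec_apply, one_kron_mulVec_apply]
          have l1 : ∀ k, (((1 : Matrix (Fin N₁) (Fin N₁) ℝ) ⊗ₖ Dy) *ᵥ ψ) (k, (i, j).2) =
              ∑ l, Dy j l * ψ (k, l) := fun k => one_kron_mulVec_apply Dy ψ (k, j)
          have l2 : ∀ l, ((Dx ⊗ₖ (1 : Matrix (Fin N₂) (Fin N₂) ℝ)) *ᵥ ψ) ((i, j).1, l) =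
              ∑ k, Dx i k * ψ (k, l) := fun l => kron_one_mulVec_apply Dx ψ (i, l)
          simp_rw [l1, l2]
          exact sum_swap_mul _ _ _
        rw [sup_le_iff]
        constructor
        · rintro x ⟨ψ, rfl⟩
          simp only [LinearMap.mem_ker, LinearMap.sub_apply, LinearMap.comp_apply,
            LinearMap.snd_apply, LinearMap.fst_apply, LinearMap.prod_apply, Function.prod,
            Matrix.mulVecLin_apply]
          rw [hcomm ψ, sub_self]
        · rw [Submodule.span_le]
          rintro x hx
          simp only [Set.mem_insert_iff, Set.mem_singleton_iff] at hx
          have hgen₁ : (((1 : Matrix (Fin N₁) (Fin N₁) ℝ) ⊗ₖ Dy) *ᵥ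
              (fun p : Fin N₁ × Fin N₂ => oscx p.1)) = 0 := by
            funext p
            rw [one_kron_mulVec_apply]
            show ∑ l, Dy p.2 l * oscx p.1 = (0 : ℝ)
            rw [← Finset.sum_mul, hDy1' p.2, zero_mul]
          have hgen₂ : ((Dx ⊗ₖ (1 : Matrix (Fin N₂) (Fin N₂) ℝ)) *ᵥ
              (fun p : Fin N₁ × Fin N₂ => oscy p.2)) = 0 := by
            funext p
            rw [kron_one_mulVec_apply]
            show ∑ k, Dx p.1 k * oscy p.2 = (0 : ℝ)
            rw [← Finset.sum_mul, hDx1' p.1, zero_mul]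
          rcases hx with rfl | rfl
          · simp only [SetLike.mem_coe, LinearMap.mem_ker, LinearMap.sub_apply,
              LinearMap.comp_apply, LinearMap.snd_apply, LinearMap.fst_apply,
              Matrix.mulVecLin_apply, Matrix.mulVec_zero, zero_sub, neg_eq_zero]
            exact hgen₁
          · simp only [SetLike.mem_coe, LinearMap.mem_ker, LinearMap.sub_apply,
              LinearMap.comp_apply, LinearMap.snd_apply, LinearMap.fst_apply,
              Matrix.mulVecLin_apply, Matrix.mulVec_zero, sub_zero]
            exact hgen₂

    · -- disjointness
      rw [Submodule.disjoint_def]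
      rintro x ⟨φ, rfl⟩ hxO
      rw [Submodule.mem_span_pair] at hxO
      obtain ⟨s, t, heq⟩ := hxO
      have h1 : (Dx ⊗ₖ (1 : Matrix (Fin N₂) (Fin N₂) ℝ)) *ᵥ φ = s • (fun p => oscx p.1) := by
        have := congrArg Prod.fst heq
        simpa [Matrix.mulVecLin_apply] using this.symm
      have h2 : ((1 : Matrix (Fin N₁) (Fin N₁) ℝ) ⊗ₖ Dy) *ᵥ φ = t • (fun p => oscy p.2) := by
        have := congrArg Prod.snd heq
        simpa [Matrix.mulVecLin_apply] using this.symm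
      have hSy : 0 < (fun _ => (1:ℝ)) ⬝ᵥ (My *ᵥ (fun _ => (1:ℝ))) := by
        simpa using hMy.dotProduct_mulVec_pos hone₂
      have hSx : 0 < (fun _ => (1:ℝ)) ⬝ᵥ (Mx *ᵥ (fun _ => (1:ℝ))) := by
        simpa using hMx.dotProduct_mulVec_pos hone₁
      have hosc₁K : (fun p : Fin N₁ × Fin N₂ => oscx p.1) ⬝ᵥ
          ((Mx ⊗ₖ My) *ᵥ (fun p => oscx p.1)) =
          ((Mx *ᵥ oscx) ⬝ᵥ oscx) * ((fun _ => (1:ℝ)) ⬝ᵥ (My *ᵥ (fun _ => (1:ℝ)))) := by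
        rw [dotProduct]
        simp_rw [hKosc₁]
        rw [Fintype.sum_prod_type]
        rw [show ((Mx *ᵥ oscx) ⬝ᵥ oscx) * ((fun _ => (1:ℝ)) ⬝ᵥ (My *ᵥ (fun _ => (1:ℝ)))) =
          (∑ i, (Mx *ᵥ oscx) i * oscx i) * (∑ j, ∑ l, My j l) from ?_]
        · rw [Finset.sum_mul_sum]
          refine Finset.sum_congr rfl fun i _ => Finset.sum_congr rfl fun j _ => by ring
        · have e1 : (Mx *ᵥ oscx) ⬝ᵥ oscx = ∑ i, (Mx *ᵥ oscx) i * oscx i := rfl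
          have e2 : (fun _ => (1:ℝ)) ⬝ᵥ (My *ᵥ (fun _ => (1:ℝ))) = ∑ j, ∑ l, My j l := by
            rw [dotProduct]
            refine Finset.sum_congr rfl fun j _ => ?_
            have : (My *ᵥ fun _ => (1:ℝ)) j = ∑ l, My j l * 1 := rfl
            simp [this]
          rw [e1, e2]
      have hosc₂K : (fun p : Fin N₁ × Fin N₂ => oscy p.2) ⬝ᵥ
          ((Mx ⊗ₖ My) *ᵥ (fun p => oscy p.2)) =
          ((fun _ => (1:ℝ)) ⬝ᵥ (Mx *ᵥ (fun _ => (1:ℝ)))) * ((My *ᵥ oscy) ⬝ᵥ oscy) := by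
        rw [dotProduct]
        simp_rw [hKosc₂]
        rw [Fintype.sum_prod_type]
        rw [show ((fun _ => (1:ℝ)) ⬝ᵥ (Mx *ᵥ (fun _ => (1:ℝ)))) * ((My *ᵥ oscy) ⬝ᵥ oscy) =
          (∑ i, ∑ k, Mx i k) * (∑ j, (My *ᵥ oscy) j * oscy j) from ?_]
        · rw [Finset.sum_mul_sum]
          refine Finset.sum_congr rfl fun i _ => Finset.sum_congr rfl fun j _ => by ring
        · have e1 : (fun _ => (1:ℝ)) ⬝ᵥ (Mx *ᵥ (fun _ => (1:ℝ))) = ∑ i, ∑ k, Mx i k := by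
            rw [dotProduct]
            refine Finset.sum_congr rfl fun i _ => ?_
            have : (Mx *ᵥ fun _ => (1:ℝ)) i = ∑ k, Mx i k * 1 := rfl
            simp [this]
          have e2 : (My *ᵥ oscy) ⬝ᵥ oscy = ∑ j, (My *ᵥ oscy) j * oscy j := rfl
          rw [e1, e2]
      have hs0 : s = 0 := by
        have hA := claimA φ
        rw [h1, smul_dotProduct, hosc₁K] at hA
        have := mul_ne_zero hqx (ne_of_gt hSy)
        rcases mul_eq_zero.mp hA with h | h
        · exact h
        · exact absurd h this
      have ht0 : t = 0 := by
        have hB := claimB φ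
        rw [h2, smul_dotProduct, hosc₂K] at hB
        have := mul_ne_zero (ne_of_gt hSx) hqy
        rcases mul_eq_zero.mp hB with h | h
        · exact h
        · exact absurd h this
      rw [← heq, hs0, ht0]
      simp
end

section
/- For nullspace consistent tensor product SBP operators in two dimensions, the kernel of the discrete divergence is the orthogonal direct sum of the image of the discrete rotation rot v = (D₂v, -D₁v) and the span of (0, osc₁) and (osc₂, 0). -/
open Matrix Kronecker

namespace SBPDiv2D

variable {m n : Type*} [Fintype m] [Fintype n]

lemma kron_mulVec (A : Matrix m m ℝ) (B : Matrix n n ℝ) (v : m × n → ℝ) (p : m × n) :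
    ((A ⊗ₖ B) *ᵥ v) p = ∑ k, ∑ l, A p.1 k * B p.2 l * v (k, l) := by
  rw [Matrix.mulVec, dotProduct, Fintype.sum_prod_type]
  exact Finset.sum_congr rfl fun k _ => Finset.sum_congr rfl fun l _ => by
    rw [Matrix.kroneckerMap_apply]

lemma kron_mulVec_fst (A : Matrix m m ℝ) (B : Matrix n n ℝ) (f : m → ℝ) :
    (A ⊗ₖ B) *ᵥ (fun p => f p.1) = fun p => (A *ᵥ f) p.1 * (B *ᵥ fun _ => 1) p.2 := by
  funext p
  rw [kron_mulVec, Matrix.mulVec, Matrix.mulVec, dotProduct, dotProduct,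
    Finset.sum_mul_sum]
  exact Finset.sum_congr rfl fun k _ => Finset.sum_congr rfl fun l _ => by ring

lemma kron_mulVec_snd (A : Matrix m m ℝ) (B : Matrix n n ℝ) (g : n → ℝ) :
    (A ⊗ₖ B) *ᵥ (fun p => g p.2) = fun p => (A *ᵥ fun _ => 1) p.1 * (B *ᵥ g) p.2 := by
  funext p
  rw [kron_mulVec, Matrix.mulVec, Matrix.mulVec, dotProduct, dotProduct,
    Finset.sum_mul_sum]
  exact Finset.sum_congr rfl fun k _ => Finset.sum_congr rfl fun l _ => by ring

lemma kron_id_mulVec [DecidableEq n] (A : Matrix m m ℝ) (v : m × n → ℝ) (p : m × n) :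
    ((A ⊗ₖ (1 : Matrix n n ℝ)) *ᵥ v) p = (A *ᵥ fun k => v (k, p.2)) p.1 := by
  rw [kron_mulVec, Matrix.mulVec, dotProduct]
  refine Finset.sum_congr rfl fun k _ => ?_
  rw [Finset.sum_eq_single p.2]
  · simp
  · intro l _ hl
    simp [Matrix.one_apply_ne (Ne.symm hl)]
  · simp

lemma id_kron_mulVec [DecidableEq m] (B : Matrix n n ℝ) (v : m × n → ℝ) (p : m × n) :
    (((1 : Matrix m m ℝ) ⊗ₖ B) *ᵥ v) p = (B *ᵥ fun l => v (p.1, l)) p.2 := by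
  rw [kron_mulVec, Matrix.mulVec, dotProduct, Finset.sum_comm]
  refine Finset.sum_congr rfl fun l _ => ?_
  rw [Finset.sum_eq_single p.1]
  · simp
  · intro k _ hk
    simp [Matrix.one_apply_ne (Ne.symm hk)]
  · simp

lemma dot_split (f f' : m → ℝ) (g g' : n → ℝ) :
    (fun p : m × n => f p.1 * g p.2) ⬝ᵥ (fun p => f' p.1 * g' p.2) = (f ⬝ᵥ f') * (g ⬝ᵥ g') := by
  rw [dotProduct, dotProduct, dotProduct, Fintype.sum_prod_type,
    Finset.sum_mul_sum]
  exact Finset.sum_congr rfl fun k _ => Finset.sum_congr rfl fun l _ => by ring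

lemma dot_fst_split (f f' : m → ℝ) (g' : n → ℝ) :
    (fun p : m × n => f p.1) ⬝ᵥ (fun p => f' p.1 * g' p.2)
      = (f ⬝ᵥ f') * ((fun _ => 1 : n → ℝ) ⬝ᵥ g') := by
  rw [dotProduct, dotProduct, dotProduct, Fintype.sum_prod_type,
    Finset.sum_mul_sum]
  exact Finset.sum_congr rfl fun k _ => Finset.sum_congr rfl fun l _ => by ring

lemma dot_snd_split (g g' : n → ℝ) (f' : m → ℝ) :
    (fun p : m × n => g p.2) ⬝ᵥ (fun p => f' p.1 * g' p.2)
      = ((fun _ => 1 : m → ℝ) ⬝ᵥ f') * (g ⬝ᵥ g') := by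
  rw [dotProduct, dotProduct, dotProduct, Fintype.sum_prod_type,
    Finset.sum_mul_sum]
  exact Finset.sum_congr rfl fun k _ => Finset.sum_congr rfl fun l _ => by ring

lemma mulVec_dot (A : Matrix m m ℝ) (v x : m → ℝ) :
    (A *ᵥ v) ⬝ᵥ x = v ⬝ᵥ (Aᵀ *ᵥ x) := by
  rw [Matrix.dotProduct_mulVec, Matrix.vecMul_transpose, dotProduct_comm]

lemma dot_self_nonneg (v : m → ℝ) : 0 ≤ v ⬝ᵥ v :=
  Finset.sum_nonneg fun i _ => mul_self_nonneg _

variable [DecidableEq m]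

lemma adjoint_ker (D M : Matrix m m ℝ) (hM : IsUnit M.det) (osc : m → ℝ)
    (hosc : LinearMap.ker (M⁻¹ * Dᵀ * M).mulVecLin = Submodule.span ℝ {osc}) :
    (Dᵀ * M) *ᵥ osc = 0 ∧ LinearMap.ker Dᵀ.mulVecLin = Submodule.span ℝ {M *ᵥ osc} := by
  have hmem : (M⁻¹ * Dᵀ * M) *ᵥ osc = 0 := by
    have : osc ∈ LinearMap.ker (M⁻¹ * Dᵀ * M).mulVecLin := by
      rw [hosc]; exact Submodule.mem_span_singleton_self osc
    simpa only [LinearMap.mem_ker, Matrix.mulVecLin_apply] using this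
  have hMM : M * (M⁻¹ * Dᵀ * M) = Dᵀ * M := by
    rw [← Matrix.mul_assoc, ← Matrix.mul_assoc, Matrix.mul_nonsing_inv _ hM, Matrix.one_mul]
  have h1 : (Dᵀ * M) *ᵥ osc = 0 := by
    rw [← hMM, ← Matrix.mulVec_mulVec, hmem, Matrix.mulVec_zero]
  refine ⟨h1, ?_⟩
  ext v
  rw [LinearMap.mem_ker, Matrix.mulVecLin_apply, Submodule.mem_span_singleton]
  constructor
  · intro hv
    have hvv : M *ᵥ (M⁻¹ *ᵥ v) = v := by
      rw [Matrix.mulVec_mulVec, Matrix.mul_nonsing_inv _ hM, Matrix.one_mulVec]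
    have hker : (M⁻¹ * Dᵀ * M) *ᵥ (M⁻¹ *ᵥ v) = 0 := by
      rw [← Matrix.mulVec_mulVec, ← Matrix.mulVec_mulVec, hvv, hv, Matrix.mulVec_zero]
    have : M⁻¹ *ᵥ v ∈ LinearMap.ker (M⁻¹ * Dᵀ * M).mulVecLin := by
      simpa only [LinearMap.mem_ker, Matrix.mulVecLin_apply] using hker
    rw [hosc, Submodule.mem_span_singleton] at this
    obtain ⟨c, hc⟩ := this
    exact ⟨c, by rw [← hvv, ← hc, Matrix.mulVec_smul]⟩
  · rintro ⟨c, rfl⟩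
    rw [Matrix.mulVec_smul, Matrix.mulVec_mulVec, h1, smul_zero]

lemma osc_ne_zero {N : ℕ} (hN : 0 < N) (D M : Matrix (Fin N) (Fin N) ℝ)
    (hD : LinearMap.ker D.mulVecLin = Submodule.span ℝ {(fun _ => 1 : Fin N → ℝ)})
    (osc : Fin N → ℝ)
    (hosc : LinearMap.ker (M⁻¹ * Dᵀ * M).mulVecLin = Submodule.span ℝ {osc}) : osc ≠ 0 := by
  intro h
  subst h
  rw [Submodule.span_zero_singleton] at hosc
  have hinj : Function.Injective (M⁻¹ * Dᵀ * M).mulVec := by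
    have h2 := LinearMap.ker_eq_bot.mp hosc
    intro a b hab
    exact h2 (by simpa only [Matrix.mulVecLin_apply] using hab)
  have hdet : IsUnit (M⁻¹ * Dᵀ * M) := Matrix.mulVec_injective_iff_isUnit.mp hinj
  have hdet' : IsUnit (M⁻¹ * Dᵀ * M).det := (Matrix.isUnit_iff_isUnit_det _).mp hdet
  rw [Matrix.det_mul, Matrix.det_mul, Matrix.det_transpose] at hdet'
  have hDdet : IsUnit D.det := by
    rw [isUnit_iff_ne_zero] at hdet' ⊢
    intro h0
    exact hdet' (by rw [h0, mul_zero, zero_mul])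
  have hDinj : Function.Injective D.mulVec := Matrix.mulVec_injective_iff_isUnit.mpr
    ((Matrix.isUnit_iff_isUnit_det _).mpr hDdet)
  have hker : LinearMap.ker D.mulVecLin = ⊥ := LinearMap.ker_eq_bot.mpr (by
    intro a b hab
    exact hDinj (by simpa only [Matrix.mulVecLin_apply] using hab))
  rw [hD] at hker
  have h1 : (fun _ => 1 : Fin N → ℝ) ∈ (⊥ : Submodule ℝ (Fin N → ℝ)) :=
    hker ▸ Submodule.mem_span_singleton_self _
  have := congrFun (Submodule.mem_bot ℝ |>.mp h1) ⟨0, hN⟩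
  exact one_ne_zero this

end SBPDiv2D

/-- For nullspace consistent tensor product SBP operators in two dimensions, the kernel of the
discrete divergence is the `M`-orthogonal direct sum of the image of the discrete rotation
`rot v = (D₂ v, -D₁ v)` and the span of `(0, osc₁)` and `(osc₂, 0)`. -/
theorem ker_div_eq_im_rot_oplus_osc_2D (N₁ N₂ : ℕ)
    (Dx Mx : Matrix (Fin N₁) (Fin N₁) ℝ) (Dy My : Matrix (Fin N₂) (Fin N₂) ℝ)
    (hMx : Mx.PosDef) (hMxsym : Mx.IsSymm) (hMy : My.PosDef) (hMysym : My.IsSymm)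
    (hDx : LinearMap.ker Dx.mulVecLin = Submodule.span ℝ {(fun _ => 1 : Fin N₁ → ℝ)})
    (hDy : LinearMap.ker Dy.mulVecLin = Submodule.span ℝ {(fun _ => 1 : Fin N₂ → ℝ)})
    (oscx : Fin N₁ → ℝ) (oscy : Fin N₂ → ℝ)
    (hoscx : LinearMap.ker (Mx⁻¹ * Dxᵀ * Mx).mulVecLin = Submodule.span ℝ {oscx})
    (hoscy : LinearMap.ker (My⁻¹ * Dyᵀ * My).mulVecLin = Submodule.span ℝ {oscy})
    (D₁ D₂ : Matrix (Fin N₁ × Fin N₂) (Fin N₁ × Fin N₂) ℝ)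
    (hD₁ : D₁ = Dx ⊗ₖ (1 : Matrix (Fin N₂) (Fin N₂) ℝ))
    (hD₂ : D₂ = (1 : Matrix (Fin N₁) (Fin N₁) ℝ) ⊗ₖ Dy)
    (rot : (Fin N₁ × Fin N₂ → ℝ) →ₗ[ℝ] (Fin N₁ × Fin N₂ → ℝ) × (Fin N₁ × Fin N₂ → ℝ))
    (hrot : rot = LinearMap.prod D₂.mulVecLin (-D₁.mulVecLin))
    (div : (Fin N₁ × Fin N₂ → ℝ) × (Fin N₁ × Fin N₂ → ℝ) →ₗ[ℝ] (Fin N₁ × Fin N₂ → ℝ))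
    (hdiv : div = D₁.mulVecLin ∘ₗ LinearMap.fst ℝ _ _ + D₂.mulVecLin ∘ₗ LinearMap.snd ℝ _ _)
    (osc₁ osc₂ : Fin N₁ × Fin N₂ → ℝ)
    (hosc₁ : osc₁ = fun p => oscx p.1) (hosc₂ : osc₂ = fun p => oscy p.2)
    (O : Submodule ℝ ((Fin N₁ × Fin N₂ → ℝ) × (Fin N₁ × Fin N₂ → ℝ)))
    (hO : O = Submodule.span ℝ {((0 : Fin N₁ × Fin N₂ → ℝ), osc₁), (osc₂, (0 : Fin N₁ × Fin N₂ → ℝ))}) :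
    LinearMap.ker div = LinearMap.range rot ⊔ O ∧
      Disjoint (LinearMap.range rot) O ∧
      (∀ u ∈ LinearMap.range rot, ∀ w ∈ O,
        u.1 ⬝ᵥ (Mx ⊗ₖ My).mulVec w.1 + u.2 ⬝ᵥ (Mx ⊗ₖ My).mulVec w.2 = 0) := by
  subst hD₁ hD₂ hosc₁ hosc₂
  have hdetx : IsUnit Mx.det := hMx.det_pos.ne'.isUnit
  have hdety : IsUnit My.det := hMy.det_pos.ne'.isUnit
  obtain ⟨hadjx, hkerDxT⟩ := SBPDiv2D.adjoint_ker Dx Mx hdetx oscx hoscx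
  obtain ⟨hadjy, hkerDyT⟩ := SBPDiv2D.adjoint_ker Dy My hdety oscy hoscy
  have hDx1 : Dx *ᵥ (fun _ => 1) = 0 := by
    have : (fun _ => 1 : Fin N₁ → ℝ) ∈ LinearMap.ker Dx.mulVecLin := by
      rw [hDx]; exact Submodule.mem_span_singleton_self _
    simpa only [LinearMap.mem_ker, Matrix.mulVecLin_apply] using this
  have hDy1 : Dy *ᵥ (fun _ => 1) = 0 := by
    have : (fun _ => 1 : Fin N₂ → ℝ) ∈ LinearMap.ker Dy.mulVecLin := by
      rw [hDy]; exact Submodule.mem_span_singleton_self _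
    simpa only [LinearMap.mem_ker, Matrix.mulVecLin_apply] using this
  have hT₁ : (Dx ⊗ₖ (1 : Matrix (Fin N₂) (Fin N₂) ℝ))ᵀ
      = Dxᵀ ⊗ₖ (1 : Matrix (Fin N₂) (Fin N₂) ℝ) := by
    rw [← Matrix.kroneckerMap_transpose, Matrix.transpose_one]
  have hT₂ : ((1 : Matrix (Fin N₁) (Fin N₁) ℝ) ⊗ₖ Dy)ᵀ
      = (1 : Matrix (Fin N₁) (Fin N₁) ℝ) ⊗ₖ Dyᵀ := by
    rw [← Matrix.kroneckerMap_transpose, Matrix.transpose_one]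
  have hadj₁ : ((Dx ⊗ₖ (1 : Matrix (Fin N₂) (Fin N₂) ℝ))ᵀ * (Mx ⊗ₖ My)) *ᵥ
      (fun p : Fin N₁ × Fin N₂ => oscx p.1) = 0 := by
    rw [hT₁, ← Matrix.mul_kronecker_mul, Matrix.one_mul, SBPDiv2D.kron_mulVec_fst, hadjx]
    funext p; simp
  have hadj₂ : (((1 : Matrix (Fin N₁) (Fin N₁) ℝ) ⊗ₖ Dy)ᵀ * (Mx ⊗ₖ My)) *ᵥ
      (fun p : Fin N₁ × Fin N₂ => oscy p.2) = 0 := by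
    rw [hT₂, ← Matrix.mul_kronecker_mul, Matrix.one_mul, SBPDiv2D.kron_mulVec_snd, hadjy]
    funext p; simp
  have key3 : ∀ u ∈ LinearMap.range rot, ∀ w ∈ O,
      u.1 ⬝ᵥ (Mx ⊗ₖ My).mulVec w.1 + u.2 ⬝ᵥ (Mx ⊗ₖ My).mulVec w.2 = 0 := by
    intro u hu w hw
    rw [hrot] at hu
    rw [hO, Submodule.mem_span_pair] at hw
    obtain ⟨v, rfl⟩ := hu
    obtain ⟨c, d, rfl⟩ := hw
    have t1 : ((Dx ⊗ₖ (1 : Matrix (Fin N₂) (Fin N₂) ℝ)) *ᵥ v) ⬝ᵥ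
        ((Mx ⊗ₖ My) *ᵥ (fun p : Fin N₁ × Fin N₂ => oscx p.1)) = 0 := by
      rw [SBPDiv2D.mulVec_dot, Matrix.mulVec_mulVec, hadj₁, dotProduct_zero]
    have t2 : (((1 : Matrix (Fin N₁) (Fin N₁) ℝ) ⊗ₖ Dy) *ᵥ v) ⬝ᵥ
        ((Mx ⊗ₖ My) *ᵥ (fun p : Fin N₁ × Fin N₂ => oscy p.2)) = 0 := by
      rw [SBPDiv2D.mulVec_dot, Matrix.mulVec_mulVec, hadj₂, dotProduct_zero]
    simp only [LinearMap.prod_apply, Function.prod, LinearMap.neg_apply, Matrix.mulVecLin_apply,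
      Prod.smul_mk, Prod.mk_add_mk, smul_zero, zero_add, add_zero, Matrix.mulVec_smul,
      dotProduct_smul, neg_dotProduct]
    rw [t1, t2]
    simp
  by_cases hdeg : N₁ = 0 ∨ N₂ = 0
  · haveI : IsEmpty (Fin N₁ × Fin N₂) := by
      rcases hdeg with h | h
      · subst h; exact ⟨fun p => p.1.elim0⟩
      · subst h; exact ⟨fun p => p.2.elim0⟩
    have hzero : ∀ x : (Fin N₁ × Fin N₂ → ℝ) × (Fin N₁ × Fin N₂ → ℝ), x = 0 :=
      fun x => Subsingleton.elim x 0
    refine ⟨?_, ?_, key3⟩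
    · ext x
      rw [hzero x]
      simp
    · rw [Submodule.disjoint_def]
      exact fun x _ _ => hzero x
  · push_neg at hdeg
    have hN₁ : 0 < N₁ := Nat.pos_of_ne_zero hdeg.1
    have hN₂ : 0 < N₂ := Nat.pos_of_ne_zero hdeg.2
    obtain ⟨i₀⟩ : Nonempty (Fin N₁) := ⟨⟨0, hN₁⟩⟩
    obtain ⟨j₀⟩ : Nonempty (Fin N₂) := ⟨⟨0, hN₂⟩⟩
    have hone₁ : (fun _ => 1 : Fin N₁ → ℝ) ≠ 0 := fun h => one_ne_zero (congrFun h i₀)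
    have hone₂ : (fun _ => 1 : Fin N₂ → ℝ) ≠ 0 := fun h => one_ne_zero (congrFun h j₀)
    have hoscxne := SBPDiv2D.osc_ne_zero hN₁ Dx Mx hDx oscx hoscx
    have hoscyne := SBPDiv2D.osc_ne_zero hN₂ Dy My hDy oscy hoscy
    have hosc₁ne : (fun p : Fin N₁ × Fin N₂ => oscx p.1) ≠ 0 := by
      obtain ⟨i, hi⟩ := Function.ne_iff.mp hoscxne
      exact fun h => hi (congrFun h (i, j₀))
    have hosc₂ne : (fun p : Fin N₁ × Fin N₂ => oscy p.2) ≠ 0 := by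
      obtain ⟨j, hj⟩ := Function.ne_iff.mp hoscyne
      exact fun h => hj (congrFun h (i₀, j))
    -- positivity of the M-norms of the oscillating modes
    have hstar : ∀ {k : ℕ} (v : Fin k → ℝ), star v = v := fun v => rfl
    have hMosc₁pos : (0:ℝ) < (fun p : Fin N₁ × Fin N₂ => oscx p.1) ⬝ᵥ
        ((Mx ⊗ₖ My) *ᵥ (fun p : Fin N₁ × Fin N₂ => oscx p.1)) := by
      rw [SBPDiv2D.kron_mulVec_fst, SBPDiv2D.dot_fst_split]
      have h1 := hMx.dotProduct_mulVec_pos hoscxne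
      have h2 := hMy.dotProduct_mulVec_pos hone₂
      rw [hstar] at h1 h2
      exact mul_pos h1 (by rwa [Matrix.dotProduct_mulVec] at h2 ⊢)
    have hMosc₂pos : (0:ℝ) < (fun p : Fin N₁ × Fin N₂ => oscy p.2) ⬝ᵥ
        ((Mx ⊗ₖ My) *ᵥ (fun p : Fin N₁ × Fin N₂ => oscy p.2)) := by
      rw [SBPDiv2D.kron_mulVec_snd, SBPDiv2D.dot_snd_split]
      have h1 := hMx.dotProduct_mulVec_pos hone₁
      have h2 := hMy.dotProduct_mulVec_pos hoscyne
      rw [hstar] at h1 h2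
      exact mul_pos (by rwa [Matrix.dotProduct_mulVec] at h1 ⊢) h2
    have hmem₁ : ((0 : Fin N₁ × Fin N₂ → ℝ), fun p : Fin N₁ × Fin N₂ => oscx p.1) ∈ O := by
      rw [hO]; exact Submodule.subset_span (Set.mem_insert _ _)
    have hmem₂ : ((fun p : Fin N₁ × Fin N₂ => oscy p.2), (0 : Fin N₁ × Fin N₂ → ℝ)) ∈ O := by
      rw [hO]; exact Submodule.subset_span (Set.mem_insert_of_mem _ rfl)
    have hdisj : Disjoint (LinearMap.range rot) O := by
      rw [Submodule.disjoint_def]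
      intro x hx hxO
      have h1 := key3 x hx _ hmem₁
      have h2 := key3 x hx _ hmem₂
      rw [hO, Submodule.mem_span_pair] at hxO
      obtain ⟨c, d, hcd⟩ := hxO
      have hx1 : x.1 = d • (fun p : Fin N₁ × Fin N₂ => oscy p.2) := by
        rw [← hcd]; simp
      have hx2 : x.2 = c • (fun p : Fin N₁ × Fin N₂ => oscx p.1) := by
        rw [← hcd]; simp
      rw [hx2] at h1
      rw [Matrix.mulVec_zero, dotProduct_zero, zero_add, smul_dotProduct] at h1
      have hc0 : c = 0 := by
        have := hMosc₁pos.ne'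
        rw [smul_eq_mul] at h1
        exact (mul_eq_zero.mp h1).resolve_right this
      rw [hx1] at h2
      rw [Matrix.mulVec_zero, dotProduct_zero, add_zero, smul_dotProduct] at h2
      have hd0 : d = 0 := by
        have := hMosc₂pos.ne'
        rw [smul_eq_mul] at h2
        exact (mul_eq_zero.mp h2).resolve_right this
      rw [← hcd, hc0, hd0, zero_smul, zero_smul, add_zero]
    -- kernel of rot
    have hkerrot : LinearMap.ker rot
        = Submodule.span ℝ {(fun _ => (1:ℝ) : Fin N₁ × Fin N₂ → ℝ)} := by
      apply le_antisymm
      · intro u hu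
        rw [LinearMap.mem_ker, hrot] at hu
        have h2 : ((1 : Matrix (Fin N₁) (Fin N₁) ℝ) ⊗ₖ Dy) *ᵥ u = 0 := by
          have := congrArg Prod.fst hu
          simpa only [LinearMap.prod_apply, Function.prod, Matrix.mulVecLin_apply, Prod.fst_zero] using this
        have h1 : (Dx ⊗ₖ (1 : Matrix (Fin N₂) (Fin N₂) ℝ)) *ᵥ u = 0 := by
          have := congrArg Prod.snd hu
          simpa only [LinearMap.prod_apply, Function.prod, LinearMap.neg_apply,
            Matrix.mulVecLin_apply, Prod.snd_zero, neg_eq_zero] using this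
        have hcol : ∀ j : Fin N₂, ∃ c : ℝ, ∀ i, u (i, j) = c := by
          intro j
          have hc : Dx *ᵥ (fun i => u (i, j)) = 0 := by
            funext i
            have := congrFun h1 (i, j)
            rwa [SBPDiv2D.kron_id_mulVec] at this
          have hmem : (fun i => u (i, j)) ∈ LinearMap.ker Dx.mulVecLin := by
            simpa only [LinearMap.mem_ker, Matrix.mulVecLin_apply] using hc
          rw [hDx, Submodule.mem_span_singleton] at hmem
          obtain ⟨c, hc'⟩ := hmem
          exact ⟨c, fun i => by simpa using (congrFun hc' i).symm⟩
        have hrow : ∀ i : Fin N₁, ∃ d : ℝ, ∀ j, u (i, j) = d := by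
          intro i
          have hc : Dy *ᵥ (fun j => u (i, j)) = 0 := by
            funext j
            have := congrFun h2 (i, j)
            rwa [SBPDiv2D.id_kron_mulVec] at this
          have hmem : (fun j => u (i, j)) ∈ LinearMap.ker Dy.mulVecLin := by
            simpa only [LinearMap.mem_ker, Matrix.mulVecLin_apply] using hc
          rw [hDy, Submodule.mem_span_singleton] at hmem
          obtain ⟨c, hc'⟩ := hmem
          exact ⟨c, fun j => by simpa using (congrFun hc' j).symm⟩
        rw [Submodule.mem_span_singleton]
        refine ⟨u (i₀, j₀), ?_⟩
        funext p
        obtain ⟨c, hc⟩ := hcol p.2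
        obtain ⟨d, hd⟩ := hrow i₀
        have e1 : u (p.1, p.2) = c := hc p.1
        have e2 : u (i₀, p.2) = c := hc i₀
        have e3 : u (i₀, p.2) = d := hd p.2
        have e4 : u (i₀, j₀) = d := hd j₀
        have : u (i₀, j₀) = u (p.1, p.2) := by rw [e4, ← e3, e2, ← e1]
        simpa using this
      · rw [Submodule.span_le, Set.singleton_subset_iff, SetLike.mem_coe,
          LinearMap.mem_ker, hrot]
        have e2 : ((1 : Matrix (Fin N₁) (Fin N₁) ℝ) ⊗ₖ Dy) *ᵥ (fun _ => (1:ℝ)) = 0 := by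
          funext p
          rw [SBPDiv2D.id_kron_mulVec]
          exact congrFun hDy1 p.2
        have e1 : (Dx ⊗ₖ (1 : Matrix (Fin N₂) (Fin N₂) ℝ)) *ᵥ (fun _ => (1:ℝ)) = 0 := by
          funext p
          rw [SBPDiv2D.kron_id_mulVec]
          exact congrFun hDx1 p.1
        simp only [LinearMap.prod_apply, Function.prod, LinearMap.neg_apply, Matrix.mulVecLin_apply,
          e1, e2, neg_zero]
        rfl
    have honeι : (fun _ => (1:ℝ) : Fin N₁ × Fin N₂ → ℝ) ≠ 0 :=
      fun h => one_ne_zero (congrFun h (i₀, j₀))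
    have hfV : Module.finrank ℝ (Fin N₁ × Fin N₂ → ℝ) = N₁ * N₂ := by
      rw [Module.finrank_pi]; simp
    have hfrot : Module.finrank ℝ (LinearMap.range rot) + 1 = N₁ * N₂ := by
      have h := LinearMap.finrank_range_add_finrank_ker rot
      rwa [hkerrot, finrank_span_singleton honeι, hfV] at h
    -- finrank of O
    have ha_ne : ((0 : Fin N₁ × Fin N₂ → ℝ), fun p : Fin N₁ × Fin N₂ => oscx p.1) ≠ 0 :=
      fun h => hosc₁ne (congrArg Prod.snd h)
    have hb_ne : ((fun p : Fin N₁ × Fin N₂ => oscy p.2), (0 : Fin N₁ × Fin N₂ → ℝ)) ≠ 0 :=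
      fun h => hosc₂ne (congrArg Prod.fst h)
    have hO2 : Module.finrank ℝ O = 2 := by
      rw [hO, Submodule.span_insert]
      have hinf : (ℝ ∙ ((0 : Fin N₁ × Fin N₂ → ℝ), fun p : Fin N₁ × Fin N₂ => oscx p.1)) ⊓
          (Submodule.span ℝ {((fun p : Fin N₁ × Fin N₂ => oscy p.2),
            (0 : Fin N₁ × Fin N₂ → ℝ))}) = ⊥ := by
        rw [eq_bot_iff]
        intro x hx
        obtain ⟨hx1, hx2⟩ := Submodule.mem_inf.mp hx
        rw [Submodule.mem_span_singleton] at hx1 hx2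
        obtain ⟨c, hc⟩ := hx1
        obtain ⟨d, hd⟩ := hx2
        have h2 : c • (fun p : Fin N₁ × Fin N₂ => oscx p.1) = 0 := by
          have := congrArg Prod.snd (hc.trans hd.symm)
          simpa using this
        have hc0 : c = 0 := by
          rcases smul_eq_zero.mp h2 with h | h
          · exact h
          · exact absurd h hosc₁ne
        rw [Submodule.mem_bot, ← hc, hc0, zero_smul]
      have h := Submodule.finrank_sup_add_finrank_inf_eq
        (ℝ ∙ ((0 : Fin N₁ × Fin N₂ → ℝ), fun p : Fin N₁ × Fin N₂ => oscx p.1))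
        (Submodule.span ℝ {((fun p : Fin N₁ × Fin N₂ => oscy p.2),
          (0 : Fin N₁ × Fin N₂ → ℝ))})
      rw [hinf, finrank_bot, finrank_span_singleton ha_ne, finrank_span_singleton hb_ne] at h
      omega
    -- range rot ⊔ O ≤ ker div
    have hcomm : (Dx ⊗ₖ (1 : Matrix (Fin N₂) (Fin N₂) ℝ)) * ((1 : Matrix (Fin N₁) (Fin N₁) ℝ) ⊗ₖ Dy)
        = ((1 : Matrix (Fin N₁) (Fin N₁) ℝ) ⊗ₖ Dy) * (Dx ⊗ₖ (1 : Matrix (Fin N₂) (Fin N₂) ℝ)) := by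
      rw [← Matrix.mul_kronecker_mul, ← Matrix.mul_kronecker_mul, Matrix.mul_one,
        Matrix.one_mul, Matrix.one_mul, Matrix.mul_one]
    have hsup_le : LinearMap.range rot ⊔ O ≤ LinearMap.ker div := by
      apply sup_le
      · rintro x ⟨v, rfl⟩
        rw [LinearMap.mem_ker, hdiv, hrot]
        simp only [LinearMap.add_apply, LinearMap.coe_comp, Function.comp_apply,
          LinearMap.fst_apply, LinearMap.snd_apply, LinearMap.prod_apply, Function.prod,
          LinearMap.neg_apply, Matrix.mulVecLin_apply]
        rw [Matrix.mulVec_neg, Matrix.mulVec_mulVec, Matrix.mulVec_mulVec, hcomm]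
        exact add_neg_cancel _
      · rw [hO, Submodule.span_le]
        intro x hx
        simp only [Set.mem_insert_iff, Set.mem_singleton_iff] at hx
        have hosc1ker : ((1 : Matrix (Fin N₁) (Fin N₁) ℝ) ⊗ₖ Dy) *ᵥ
            (fun p : Fin N₁ × Fin N₂ => oscx p.1) = 0 := by
          rw [SBPDiv2D.kron_mulVec_fst, hDy1]
          funext p; simp
        have hosc2ker : (Dx ⊗ₖ (1 : Matrix (Fin N₂) (Fin N₂) ℝ)) *ᵥ
            (fun p : Fin N₁ × Fin N₂ => oscy p.2) = 0 := by
          rw [SBPDiv2D.kron_mulVec_snd, hDx1]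
          funext p; simp
        rcases hx with rfl | rfl
        · rw [SetLike.mem_coe, LinearMap.mem_ker, hdiv]
          simp only [LinearMap.add_apply, LinearMap.coe_comp, Function.comp_apply,
            LinearMap.fst_apply, LinearMap.snd_apply, Matrix.mulVecLin_apply]
          rw [Matrix.mulVec_zero, zero_add, hosc1ker]
        · rw [SetLike.mem_coe, LinearMap.mem_ker, hdiv]
          simp only [LinearMap.add_apply, LinearMap.coe_comp, Function.comp_apply,
            LinearMap.fst_apply, LinearMap.snd_apply, Matrix.mulVecLin_apply]
          rw [Matrix.mulVec_zero, add_zero, hosc2ker]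
    -- the discrete gradient-transpose operator
    set T : (Fin N₁ × Fin N₂ → ℝ) →ₗ[ℝ] (Fin N₁ × Fin N₂ → ℝ) × (Fin N₁ × Fin N₂ → ℝ) :=
      LinearMap.prod ((Dx ⊗ₖ (1 : Matrix (Fin N₂) (Fin N₂) ℝ))ᵀ).mulVecLin
        (((1 : Matrix (Fin N₁) (Fin N₁) ℝ) ⊗ₖ Dy)ᵀ).mulVecLin with hTdef
    have hMxinj : Function.Injective Mx.mulVec :=
      Matrix.mulVec_injective_iff_isUnit.mpr ((Matrix.isUnit_iff_isUnit_det _).mpr hdetx)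
    have hMyinj : Function.Injective My.mulVec :=
      Matrix.mulVec_injective_iff_isUnit.mpr ((Matrix.isUnit_iff_isUnit_det _).mpr hdety)
    have hzx_ne : Mx *ᵥ oscx ≠ 0 := fun h => hoscxne (hMxinj (by rw [h, Matrix.mulVec_zero]))
    have hzy_ne : My *ᵥ oscy ≠ 0 := fun h => hoscyne (hMyinj (by rw [h, Matrix.mulVec_zero]))
    obtain ⟨i₁, hi₁⟩ := Function.ne_iff.mp hzx_ne
    obtain ⟨j₁, hj₁⟩ := Function.ne_iff.mp hzy_ne
    simp only [Pi.zero_apply] at hi₁ hj₁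
    have hz_ne : (fun p : Fin N₁ × Fin N₂ => (Mx *ᵥ oscx) p.1 * (My *ᵥ oscy) p.2) ≠ 0 := by
      intro h
      have h2 := congrFun h (i₁, j₁)
      simp only [Pi.zero_apply] at h2
      rcases mul_eq_zero.mp h2 with h' | h'
      exacts [hi₁ h', hj₁ h']
    have hkerT : LinearMap.ker T ≤ Submodule.span ℝ
        {(fun p : Fin N₁ × Fin N₂ => (Mx *ᵥ oscx) p.1 * (My *ᵥ oscy) p.2)} := by
      intro w hw
      rw [LinearMap.mem_ker, hTdef] at hw
      have h1 : (Dxᵀ ⊗ₖ (1 : Matrix (Fin N₂) (Fin N₂) ℝ)) *ᵥ w = 0 := by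
        have := congrArg Prod.fst hw
        rw [← hT₁]
        simpa only [LinearMap.prod_apply, Function.prod, Matrix.mulVecLin_apply, Prod.fst_zero] using this
      have h2 : ((1 : Matrix (Fin N₁) (Fin N₁) ℝ) ⊗ₖ Dyᵀ) *ᵥ w = 0 := by
        have := congrArg Prod.snd hw
        rw [← hT₂]
        simpa only [LinearMap.prod_apply, Function.prod, Matrix.mulVecLin_apply, Prod.snd_zero] using this
      have hcol : ∀ j, ∃ c : ℝ, (fun i => w (i, j)) = c • (Mx *ᵥ oscx) := by
        intro j
        have hc : Dxᵀ *ᵥ (fun i => w (i, j)) = 0 := by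
          funext i
          have := congrFun h1 (i, j)
          rwa [SBPDiv2D.kron_id_mulVec] at this
        have hmem : (fun i => w (i, j)) ∈ LinearMap.ker Dxᵀ.mulVecLin := by
          simpa only [LinearMap.mem_ker, Matrix.mulVecLin_apply] using hc
        rw [hkerDxT, Submodule.mem_span_singleton] at hmem
        obtain ⟨c, hc'⟩ := hmem
        exact ⟨c, hc'.symm⟩
      have hrow : ∀ i, ∃ d : ℝ, (fun j => w (i, j)) = d • (My *ᵥ oscy) := by
        intro i
        have hc : Dyᵀ *ᵥ (fun j => w (i, j)) = 0 := by
          funext j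
          have := congrFun h2 (i, j)
          rwa [SBPDiv2D.id_kron_mulVec] at this
        have hmem : (fun j => w (i, j)) ∈ LinearMap.ker Dyᵀ.mulVecLin := by
          simpa only [LinearMap.mem_ker, Matrix.mulVecLin_apply] using hc
        rw [hkerDyT, Submodule.mem_span_singleton] at hmem
        obtain ⟨d, hd'⟩ := hmem
        exact ⟨d, hd'.symm⟩
      obtain ⟨d, hd⟩ := hrow i₁
      rw [Submodule.mem_span_singleton]
      refine ⟨d / (Mx *ᵥ oscx) i₁, ?_⟩
      funext p
      obtain ⟨c, hc⟩ := hcol p.2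
      have e1 : w (p.1, p.2) = c * (Mx *ᵥ oscx) p.1 := by
        have := congrFun hc p.1; simpa using this
      have e2 : w (i₁, p.2) = c * (Mx *ᵥ oscx) i₁ := by
        have := congrFun hc i₁; simpa using this
      have e3 : w (i₁, p.2) = d * (My *ᵥ oscy) p.2 := by
        have := congrFun hd p.2; simpa using this
      have hc' : c * (Mx *ᵥ oscx) i₁ = d * (My *ᵥ oscy) p.2 := by rw [← e2, e3]
      have hcv : c = d * (My *ᵥ oscy) p.2 / (Mx *ᵥ oscx) i₁ := (eq_div_iff hi₁).mpr hc'
      have hwp : w p = c * (Mx *ᵥ oscx) p.1 := e1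
      rw [Pi.smul_apply, smul_eq_mul, hwp, hcv]
      field_simp
    have hkerT1 : Module.finrank ℝ (LinearMap.ker T) ≤ 1 := by
      have := Submodule.finrank_mono hkerT
      rwa [finrank_span_singleton hz_ne] at this
    have hTrange := LinearMap.finrank_range_add_finrank_ker T
    rw [hfV] at hTrange
    have hTorth : ∀ x ∈ LinearMap.ker div, ∀ y ∈ LinearMap.range T,
        x.1 ⬝ᵥ y.1 + x.2 ⬝ᵥ y.2 = 0 := by
      rintro x hx y ⟨w, rfl⟩
      rw [LinearMap.mem_ker, hdiv] at hx
      simp only [LinearMap.add_apply, LinearMap.coe_comp, Function.comp_apply,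
        LinearMap.fst_apply, LinearMap.snd_apply, Matrix.mulVecLin_apply] at hx
      simp only [hTdef, LinearMap.prod_apply, Function.prod, Matrix.mulVecLin_apply]
      rw [← SBPDiv2D.mulVec_dot, ← SBPDiv2D.mulVec_dot, ← add_dotProduct, hx,
        zero_dotProduct]
    have hdisjT : Disjoint (LinearMap.ker div) (LinearMap.range T) := by
      rw [Submodule.disjoint_def]
      intro x hx1 hx2
      have h := hTorth x hx1 x hx2
      have n1 := SBPDiv2D.dot_self_nonneg x.1
      have n2 := SBPDiv2D.dot_self_nonneg x.2
      have hx1' : x.1 = 0 := dotProduct_self_eq_zero.mp (by linarith)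
      have hx2' : x.2 = 0 := dotProduct_self_eq_zero.mp (by linarith)
      calc x = (x.1, x.2) := rfl
        _ = 0 := by rw [hx1', hx2']; rfl
    have hVV : Module.finrank ℝ ((Fin N₁ × Fin N₂ → ℝ) × (Fin N₁ × Fin N₂ → ℝ))
        = N₁ * N₂ + N₁ * N₂ := by
      rw [Module.finrank_prod, hfV]
    have hkerdivle : Module.finrank ℝ (LinearMap.ker div) ≤ N₁ * N₂ + 1 := by
      have hs := Submodule.finrank_sup_add_finrank_inf_eq (LinearMap.ker div) (LinearMap.range T)
      rw [Disjoint.eq_bot hdisjT, finrank_bot] at hs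
      have hle : Module.finrank ℝ ↥(LinearMap.ker div ⊔ LinearMap.range T)
          ≤ Module.finrank ℝ ((Fin N₁ × Fin N₂ → ℝ) × (Fin N₁ × Fin N₂ → ℝ)) :=
        Submodule.finrank_le _
      rw [hVV] at hle
      omega
    have hsupfr : Module.finrank ℝ ↥(LinearMap.range rot ⊔ O) = N₁ * N₂ + 1 := by
      have hs := Submodule.finrank_sup_add_finrank_inf_eq (LinearMap.range rot) O
      rw [Disjoint.eq_bot hdisj, finrank_bot, hO2] at hs
      omega
    refine ⟨?_, hdisj, key3⟩
    exact (Submodule.eq_of_le_of_finrank_le hsup_le (by rw [hsupfr]; exact hkerdivle)).symm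
end

section
/- Let D₁ = D_x⊗I_y, D₂ = I_x⊗D_y be nullspace consistent tensor product SBP operators with SPD mass matrix M = M_x⊗M_y. If a discrete vector field (u₁,u₂) satisfies D₁u₂ = D₂u₁ and u₂ is M-orthogonal to osc₂ = 𝟙⊗osc_y, then u₂ lies in the image of D₂. -/
open Matrix Kronecker

lemma key_surj (N₂ : ℕ) (Dy My : Matrix (Fin N₂) (Fin N₂) ℝ)
    (hMy : My.PosDef)
    (hDy : LinearMap.ker Dy.mulVecLin = Submodule.span ℝ {(fun _ => 1 : Fin N₂ → ℝ)})
    (oscy : Fin N₂ → ℝ)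
    (hoscy : LinearMap.ker (My⁻¹ * Dyᵀ * My).mulVecLin = Submodule.span ℝ {oscy})
    (w : Fin N₂ → ℝ) (hw : w ⬝ᵥ My.mulVec oscy = 0) :
    ∃ v, Dy.mulVec v = w := by
  rcases Nat.eq_zero_or_pos N₂ with h0 | hpos
  · subst h0
    exact ⟨0, funext fun x => x.elim0⟩
  have hone : (fun _ => 1 : Fin N₂ → ℝ) ≠ 0 := by
    intro h
    have := congrFun h ⟨0, hpos⟩
    simp at this
  have hMydet : IsUnit My.det := isUnit_iff_ne_zero.mpr (ne_of_gt hMy.det_pos)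
  have hMyinvdet : IsUnit My⁻¹.det := My.isUnit_nonsing_inv_det hMydet
  -- rank of Dy
  have hfinfun : Module.finrank ℝ (Fin N₂ → ℝ) = N₂ := by simp
  have hkerDy : Module.finrank ℝ (LinearMap.ker Dy.mulVecLin) = 1 := by
    rw [hDy]; exact finrank_span_singleton hone
  have hrankDy : Dy.rank + 1 = N₂ := by
    have := LinearMap.finrank_range_add_finrank_ker Dy.mulVecLin
    rw [hkerDy, hfinfun] at this
    exact this
  -- rank of B = My⁻¹ * Dyᵀ * My equals rank Dy
  have hrankB : (My⁻¹ * Dyᵀ * My).rank = Dy.rank := by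
    rw [Matrix.rank_mul_eq_left_of_isUnit_det _ _ hMydet,
        Matrix.rank_mul_eq_right_of_isUnit_det _ _ hMyinvdet,
        Matrix.rank_transpose]
  -- hence ker B has finrank 1, so oscy ≠ 0
  have hkerB : Module.finrank ℝ (LinearMap.ker (My⁻¹ * Dyᵀ * My).mulVecLin) = 1 := by
    have := LinearMap.finrank_range_add_finrank_ker (My⁻¹ * Dyᵀ * My).mulVecLin
    rw [hfinfun] at this
    have h2 : (My⁻¹ * Dyᵀ * My).rank
        + Module.finrank ℝ (LinearMap.ker (My⁻¹ * Dyᵀ * My).mulVecLin) = N₂ := this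
    rw [hrankB, hoscy] at h2
    rw [hoscy]
    omega
  -- oscy ≠ 0
  have hoscne : oscy ≠ 0 := by
    intro h
    rw [hoscy, h, Submodule.span_zero_singleton] at hkerB
    simp at hkerB
  -- the functional w ↦ w ⬝ᵥ m, m = My *ᵥ oscy
  set m : Fin N₂ → ℝ := My.mulVec oscy with hm
  have hphios : oscy ⬝ᵥ m ≠ 0 := by
    have := hMy.dotProduct_mulVec_pos hoscne
    simp only [star_trivial] at this
    exact ne_of_gt this
  let φ : (Fin N₂ → ℝ) →ₗ[ℝ] ℝ :=
    { toFun := fun x => x ⬝ᵥ m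
      map_add' := fun x y => add_dotProduct x y m
      map_smul' := fun c x => smul_dotProduct c x m }
  have hrange : LinearMap.range Dy.mulVecLin ≤ LinearMap.ker φ := by
    rintro x ⟨v, rfl⟩
    show (Dy.mulVec v) ⬝ᵥ m = 0
    have hB : oscy ∈ LinearMap.ker (My⁻¹ * Dyᵀ * My).mulVecLin := by
      rw [hoscy]; exact Submodule.mem_span_singleton_self oscy
    have hB0 : (My⁻¹ * Dyᵀ * My).mulVec oscy = 0 := hB
    have hDyTm : Dyᵀ.mulVec m = 0 := by
      have hmm : Dyᵀ * My = My * (My⁻¹ * Dyᵀ * My) := by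
        rw [← Matrix.mul_assoc, ← Matrix.mul_assoc, Matrix.mul_nonsing_inv _ hMydet,
            Matrix.one_mul]
      rw [hm, Matrix.mulVec_mulVec, hmm, ← Matrix.mulVec_mulVec, hB0, Matrix.mulVec_zero]
    calc (Dy.mulVec v) ⬝ᵥ m = v ᵥ* Dyᵀ ⬝ᵥ m := by rw [Matrix.vecMul_transpose]
      _ = v ⬝ᵥ Dyᵀ.mulVec m := (Matrix.dotProduct_mulVec v Dyᵀ m).symm
      _ = 0 := by rw [hDyTm, dotProduct_zero]
  have hkerφ : Module.finrank ℝ (LinearMap.ker φ) ≤ Dy.rank := by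
    have hr := LinearMap.finrank_range_add_finrank_ker φ
    rw [hfinfun] at hr
    have hrpos : 0 < Module.finrank ℝ (LinearMap.range φ) := by
      rw [Module.finrank_pos_iff]
      refine ⟨⟨⟨oscy ⬝ᵥ m, ⟨oscy, rfl⟩⟩, 0, fun h => hphios ?_⟩⟩
      simpa using congrArg Subtype.val h
    omega
  have heq : LinearMap.range Dy.mulVecLin = LinearMap.ker φ :=
    Submodule.eq_of_le_of_finrank_le hrange hkerφ
  have : w ∈ LinearMap.range Dy.mulVecLin := by
    rw [heq]
    exact hw
  exact this

lemma DyT_mulVec_m_eq_zero (N₂ : ℕ) (Dy My : Matrix (Fin N₂) (Fin N₂) ℝ)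
    (hMydet : IsUnit My.det) (oscy : Fin N₂ → ℝ)
    (hB0 : (My⁻¹ * Dyᵀ * My).mulVec oscy = 0) :
    Dyᵀ.mulVec (My.mulVec oscy) = 0 := by
  have hmm : Dyᵀ * My = My * (My⁻¹ * Dyᵀ * My) := by
    rw [← Matrix.mul_assoc, ← Matrix.mul_assoc, Matrix.mul_nonsing_inv _ hMydet, Matrix.one_mul]
  rw [Matrix.mulVec_mulVec, hmm, ← Matrix.mulVec_mulVec, hB0, Matrix.mulVec_zero]

lemma mulVec_dot_eq_zero (N₂ : ℕ) (Dy : Matrix (Fin N₂) (Fin N₂) ℝ) (m v : Fin N₂ → ℝ)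
    (hDyTm : Dyᵀ.mulVec m = 0) : (Dy.mulVec v) ⬝ᵥ m = 0 :=
  calc (Dy.mulVec v) ⬝ᵥ m = v ᵥ* Dyᵀ ⬝ᵥ m := by rw [Matrix.vecMul_transpose]
    _ = v ⬝ᵥ Dyᵀ.mulVec m := (Matrix.dotProduct_mulVec v Dyᵀ m).symm
    _ = 0 := by rw [hDyTm, dotProduct_zero]


/-- Let `D₁ = D_x ⊗ I_y`, `D₂ = I_x ⊗ D_y` be nullspace consistent tensor product SBP operators
with SPD mass matrix `M = M_x ⊗ M_y`. If a discrete vector field `(u₁, u₂)` satisfies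
`D₁ u₂ = D₂ u₁` and `u₂` is `M`-orthogonal to `osc₂ = 𝟙 ⊗ osc_y`, then `u₂` lies in the image
of `D₂`. -/
theorem u₂_mem_image_D₂ (N₁ N₂ : ℕ)
    (Dx Mx : Matrix (Fin N₁) (Fin N₁) ℝ) (Dy My : Matrix (Fin N₂) (Fin N₂) ℝ)
    (hMx : Mx.PosDef) (hMxsym : Mx.IsSymm) (hMy : My.PosDef) (hMysym : My.IsSymm)
    (hDx : LinearMap.ker Dx.mulVecLin = Submodule.span ℝ {(fun _ => 1 : Fin N₁ → ℝ)})
    (hDy : LinearMap.ker Dy.mulVecLin = Submodule.span ℝ {(fun _ => 1 : Fin N₂ → ℝ)})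
    (oscy : Fin N₂ → ℝ)
    (hoscy : LinearMap.ker (My⁻¹ * Dyᵀ * My).mulVecLin = Submodule.span ℝ {oscy})
    (D₁ D₂ : Matrix (Fin N₁ × Fin N₂) (Fin N₁ × Fin N₂) ℝ)
    (hD₁ : D₁ = Dx ⊗ₖ (1 : Matrix (Fin N₂) (Fin N₂) ℝ))
    (hD₂ : D₂ = (1 : Matrix (Fin N₁) (Fin N₁) ℝ) ⊗ₖ Dy)
    (osc₂ : Fin N₁ × Fin N₂ → ℝ) (hosc₂ : osc₂ = fun p => oscy p.2)
    (u₁ u₂ : Fin N₁ × Fin N₂ → ℝ)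
    (hcurlfree : D₁.mulVec u₂ = D₂.mulVec u₁)
    (horth : u₂ ⬝ᵥ (Mx ⊗ₖ My).mulVec osc₂ = 0) :
    ∃ v₂, D₂.mulVec v₂ = u₂ := by
  subst hD₁ hD₂ hosc₂
  set m : Fin N₂ → ℝ := My.mulVec oscy with hm
  set c : Fin N₁ → ℝ := fun i => ∑ j, u₂ (i, j) * m j with hc
  -- pointwise curl-free identity
  have hcf : ∀ i j, ∑ i', Dx i i' * u₂ (i', j) = ∑ j', Dy j j' * u₁ (i, j') := by
    intro i j
    have h := congrFun hcurlfree (i, j)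
    simp only [Matrix.mulVec, dotProduct, Fintype.sum_prod_type, Matrix.kroneckerMap_apply,
      Matrix.one_apply, ite_mul, mul_ite, mul_zero, zero_mul, mul_one, one_mul,
      Finset.sum_ite_eq, Finset.sum_ite_eq', Finset.mem_univ, if_true] at h
    rw [Finset.sum_comm] at h
    simp only [Finset.sum_ite_eq, Finset.mem_univ, if_true] at h
    exact h
  -- Dyᵀ m = 0
  have hMydet : IsUnit My.det := isUnit_iff_ne_zero.mpr (ne_of_gt hMy.det_pos)
  have hB0 : (My⁻¹ * Dyᵀ * My).mulVec oscy = 0 := by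
    have : oscy ∈ LinearMap.ker (My⁻¹ * Dyᵀ * My).mulVecLin := by
      rw [hoscy]; exact Submodule.mem_span_singleton_self oscy
    exact this
  have hDyTm : Dyᵀ.mulVec m = 0 := DyT_mulVec_m_eq_zero N₂ Dy My hMydet oscy hB0
  -- Dx c = 0
  have hDxc : Dx.mulVec c = 0 := by
    funext i
    show ∑ i', Dx i i' * c i' = 0
    calc ∑ i', Dx i i' * c i'
        = ∑ i', ∑ j, Dx i i' * (u₂ (i', j) * m j) := by
          simp [hc, Finset.mul_sum]
      _ = ∑ j, ∑ i', Dx i i' * (u₂ (i', j) * m j) := Finset.sum_comm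
      _ = ∑ j, (∑ i', Dx i i' * u₂ (i', j)) * m j := by
          simp [Finset.sum_mul, mul_assoc]
      _ = ∑ j, (∑ j', Dy j j' * u₁ (i, j')) * m j := by
          exact Finset.sum_congr rfl fun j _ => by rw [hcf i j]
      _ = (Dy.mulVec (fun j' => u₁ (i, j'))) ⬝ᵥ m := rfl
      _ = 0 := mulVec_dot_eq_zero N₂ Dy m _ hDyTm
  -- c ∈ span {1}
  obtain ⟨t, ht⟩ : ∃ t : ℝ, c = t • (fun _ => 1 : Fin N₁ → ℝ) := by
    have : c ∈ LinearMap.ker Dx.mulVecLin := hDxc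
    rw [hDx, Submodule.mem_span_singleton] at this
    obtain ⟨t, ht⟩ := this
    exact ⟨t, ht.symm⟩
  -- orthogonality sum
  have horth' : ∑ i, (Mx.mulVec (fun _ => 1)) i * c i = 0 := by
    rw [← horth]
    show _ = ∑ p : Fin N₁ × Fin N₂, u₂ p * ((Mx ⊗ₖ My).mulVec (fun p => oscy p.2)) p
    rw [Fintype.sum_prod_type]
    refine Finset.sum_congr rfl fun i _ => ?_
    have hkv : ∀ j, ((Mx ⊗ₖ My).mulVec (fun p => oscy p.2)) (i, j)
        = (Mx.mulVec (fun _ => 1)) i * m j := by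
      intro j
      show ∑ p : Fin N₁ × Fin N₂, (Mx i p.1 * My j p.2) * oscy p.2 = _
      rw [Fintype.sum_prod_type]
      show ∑ i', ∑ j', (Mx i i' * My j j') * oscy j'
          = (∑ i', Mx i i' * 1) * (∑ j', My j j' * oscy j')
      rw [Finset.sum_mul_sum]
      exact Finset.sum_congr rfl fun i' _ => Finset.sum_congr rfl fun j' _ => by ring
    calc (Mx.mulVec (fun _ => 1)) i * c i
        = ∑ j, u₂ (i, j) * ((Mx.mulVec (fun _ => 1)) i * m j) := by
          rw [hc]; rw [Finset.mul_sum]; exact Finset.sum_congr rfl fun j _ => by ring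
      _ = ∑ j, u₂ (i, j) * ((Mx ⊗ₖ My).mulVec (fun p => oscy p.2)) (i, j) := by
          exact Finset.sum_congr rfl fun j _ => by rw [hkv j]
  -- conclude c = 0
  have hc0 : ∀ i, c i = 0 := by
    rcases Nat.eq_zero_or_pos N₁ with h0 | hpos
    · intro i; exact absurd i.2 (by omega)
    · have hone : (fun _ => 1 : Fin N₁ → ℝ) ≠ 0 := by
        intro h
        have := congrFun h ⟨0, hpos⟩
        simp at this
      have hq : 0 < (fun _ => 1 : Fin N₁ → ℝ) ⬝ᵥ Mx.mulVec (fun _ => 1) := by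
        have := hMx.dotProduct_mulVec_pos hone
        simpa using this
      have hsum : ∑ i, (Mx.mulVec (fun _ => 1)) i * c i
          = t * ((fun _ => 1 : Fin N₁ → ℝ) ⬝ᵥ Mx.mulVec (fun _ => 1)) := by
        rw [ht]
        show ∑ i, (Mx.mulVec fun _ => 1) i * (t * 1) = t * ∑ i, 1 * (Mx.mulVec fun _ => 1) i
        rw [Finset.mul_sum]
        exact Finset.sum_congr rfl fun i _ => by ring
      rw [horth'] at hsum
      have ht0 : t = 0 := by
        rcases mul_eq_zero.mp hsum.symm with h | h
        · exact h
        · exact absurd h (ne_of_gt hq)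
      intro i
      rw [ht, ht0]
      simp
  -- apply the key surjectivity lemma columnwise
  choose v hv using fun i : Fin N₁ =>
    key_surj N₂ Dy My hMy hDy oscy hoscy (fun j => u₂ (i, j)) (hc0 i)
  refine ⟨fun p => v p.1 p.2, ?_⟩
  funext p
  obtain ⟨i, j⟩ := p
  show ∑ q : Fin N₁ × Fin N₂, ((1 : Matrix (Fin N₁) (Fin N₁) ℝ) i q.1 * Dy j q.2) * v q.1 q.2
      = u₂ (i, j)
  rw [Fintype.sum_prod_type]
  have : ∑ i', ∑ j', ((1 : Matrix (Fin N₁) (Fin N₁) ℝ) i i' * Dy j j') * v i' j'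
      = ∑ j', Dy j j' * v i j' := by
    simp only [Matrix.one_apply, ite_mul, mul_ite, mul_zero, zero_mul, mul_one, one_mul]
    rw [Finset.sum_comm]
    simp [Finset.sum_ite_eq, Finset.mem_univ, if_true]
  rw [this]
  exact congrFun (hv i) j
end

section
/- Let D₁, D₂ be nullspace consistent tensor product SBP operators in two dimensions. If a discrete vector field (u₁,u₂) satisfies D₁u₂ = D₂u₁, u₁ ⊥_M osc₁, and u₂ ⊥_M osc₂, then there exists a discrete scalar potential φ with D₁φ = u₁ and D₂φ = u₂. -/
open Matrix Kronecker


lemma mem_range_of_dot_eq_zero {n : ℕ} (A : Matrix (Fin n) (Fin n) ℝ) (a v : Fin n → ℝ)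
    (h : LinearMap.ker Aᵀ.mulVecLin = Submodule.span ℝ {a}) (hv : a ⬝ᵥ v = 0) :
    v ∈ LinearMap.range A.mulVecLin := by
  by_cases ha : a = 0
  · -- kernel of Aᵀ is trivial, so A is surjective
    have hker : LinearMap.ker Aᵀ.mulVecLin = ⊥ := by
      rw [h, ha]; simp
    have hrk : Aᵀ.rank = n := by
      have := LinearMap.finrank_range_add_finrank_ker Aᵀ.mulVecLin
      rw [hker] at this
      simpa [Matrix.rank] using this
    have hrkA : A.rank = n := by rw [← Matrix.rank_transpose]; exact hrk
    have : LinearMap.range A.mulVecLin = ⊤ := by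
      apply Submodule.eq_top_of_finrank_eq
      simpa [Matrix.rank] using hrkA
    rw [this]; trivial
  · -- range A = {v | a ⬝ᵥ v = 0}
    set f : (Fin n → ℝ) →ₗ[ℝ] ℝ :=
      { toFun := fun w => a ⬝ᵥ w
        map_add' := fun x y => dotProduct_add a x y
        map_smul' := fun c x => by simp [dotProduct_smul] } with hf
    have hATa : Aᵀ.mulVec a = 0 := by
      have : a ∈ LinearMap.ker Aᵀ.mulVecLin := by
        rw [h]; exact Submodule.mem_span_singleton_self a
      simpa [Matrix.mulVecLin_apply, Matrix.mulVec_transpose] using this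
    have hle : LinearMap.range A.mulVecLin ≤ LinearMap.ker f := by
      rintro w ⟨x, rfl⟩
      simp only [LinearMap.mem_ker, hf, LinearMap.coe_mk, AddHom.coe_mk,
        Matrix.mulVecLin_apply]
      rw [dotProduct_mulVec, ← Matrix.mulVec_transpose, hATa]
      simp
    have hfsurj : LinearMap.range f = ⊤ := by
      rw [LinearMap.range_eq_top]
      intro c
      refine ⟨(c / (a ⬝ᵥ a)) • a, ?_⟩
      have haa : a ⬝ᵥ a ≠ 0 := by
        intro h0
        exact ha ((dotProduct_self_eq_zero).mp h0)
      simp [hf, dotProduct_smul, smul_eq_mul]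
      field_simp
  -- dims
    have hkerT : Module.finrank ℝ (LinearMap.ker Aᵀ.mulVecLin) = 1 := by
      rw [h]; exact finrank_span_singleton ha
    have h1 := LinearMap.finrank_range_add_finrank_ker Aᵀ.mulVecLin
    have h2 := LinearMap.finrank_range_add_finrank_ker f
    have h3 := LinearMap.finrank_range_add_finrank_ker A.mulVecLin
    rw [hkerT] at h1
    have hrangef : Module.finrank ℝ (LinearMap.range f) = 1 := by
      rw [hfsurj]; simp
    rw [hrangef] at h2
    have hrkeq : Module.finrank ℝ (LinearMap.range A.mulVecLin)
        = Module.finrank ℝ (LinearMap.range Aᵀ.mulVecLin) := by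
      have := Matrix.rank_transpose A
      simpa [Matrix.rank] using this.symm
    have : Module.finrank ℝ (LinearMap.range A.mulVecLin)
        = Module.finrank ℝ (LinearMap.ker f) := by
      omega
    have heq := Submodule.eq_of_le_of_finrank_eq hle this
    rw [heq]
    simpa [hf] using hv

lemma ker_transpose_of_osc {n : ℕ} (A M : Matrix (Fin n) (Fin n) ℝ) (hM : M.PosDef)
    (o : Fin n → ℝ)
    (h : LinearMap.ker (M⁻¹ * Aᵀ * M).mulVecLin = Submodule.span ℝ {o}) :
    LinearMap.ker Aᵀ.mulVecLin = Submodule.span ℝ {M.mulVec o} := by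
  have hMunit : IsUnit M := hM.isUnit
  have hMinv : M⁻¹ * M = 1 := Matrix.nonsing_inv_mul M (Matrix.isUnit_iff_isUnit_det M |>.mp hMunit)
  have hMinv' : M * M⁻¹ = 1 := Matrix.mul_nonsing_inv M (Matrix.isUnit_iff_isUnit_det M |>.mp hMunit)
  ext w
  simp only [LinearMap.mem_ker, Matrix.mulVecLin_apply]
  constructor
  · intro hw
    -- v := M⁻¹ w is in ker (M⁻¹AᵀM)
    have hv : (M⁻¹ * Aᵀ * M).mulVec (M⁻¹.mulVec w) = 0 := by
      rw [Matrix.mulVec_mulVec, Matrix.mul_assoc (M⁻¹ * Aᵀ) M M⁻¹, hMinv', Matrix.mul_one,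
        ← Matrix.mulVec_mulVec, hw, Matrix.mulVec_zero]
    have : M⁻¹.mulVec w ∈ Submodule.span ℝ {o} := by
      rw [← h]; exact hv
    rw [Submodule.mem_span_singleton] at this ⊢
    obtain ⟨c, hc⟩ := this
    refine ⟨c, ?_⟩
    have := congrArg M.mulVec hc
    rw [Matrix.mulVec_smul, Matrix.mulVec_mulVec, hMinv', Matrix.one_mulVec] at this
    exact this
  · intro hw
    rw [Submodule.mem_span_singleton] at hw
    obtain ⟨c, hc⟩ := hw
    have ho : (M⁻¹ * Aᵀ * M).mulVec o = 0 := by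
      have : o ∈ LinearMap.ker (M⁻¹ * Aᵀ * M).mulVecLin := by
        rw [h]; exact Submodule.mem_span_singleton_self o
      exact this
    have hAo : Aᵀ.mulVec (M.mulVec o) = 0 := by
      have := congrArg M.mulVec ho
      rw [Matrix.mulVec_zero, Matrix.mulVec_mulVec, ← Matrix.mul_assoc, ← Matrix.mul_assoc,
        hMinv', Matrix.one_mul, ← Matrix.mulVec_mulVec] at this
      exact this
    rw [← hc, Matrix.mulVec_smul, hAo, smul_zero]

lemma kron_mulVec {m n : Type*} [Fintype m] [Fintype n]
    (A : Matrix m m ℝ) (B : Matrix n n ℝ) (u : m × n → ℝ) (i : m) (j : n) :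
    (A ⊗ₖ B).mulVec u (i, j) = ∑ k, ∑ l, A i k * B j l * u (k, l) := by
  simp [Matrix.mulVec, dotProduct, Fintype.sum_prod_type, kroneckerMap_apply]

lemma kron_one_mulVec {m n : Type*} [Fintype m] [Fintype n] [DecidableEq n]
    (A : Matrix m m ℝ) (u : m × n → ℝ) (i : m) (j : n) :
    (A ⊗ₖ (1 : Matrix n n ℝ)).mulVec u (i, j) = ∑ k, A i k * u (k, j) := by
  rw [kron_mulVec]
  congr 1; ext k
  simp [Matrix.one_apply, mul_ite, ite_mul, Finset.sum_ite_eq]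

lemma one_kron_mulVec {m n : Type*} [Fintype m] [Fintype n] [DecidableEq m]
    (B : Matrix n n ℝ) (u : m × n → ℝ) (i : m) (j : n) :
    ((1 : Matrix m m ℝ) ⊗ₖ B).mulVec u (i, j) = ∑ l, B j l * u (i, l) := by
  rw [kron_mulVec]
  simp [Matrix.one_apply, ite_mul, Finset.sum_ite_eq]


lemma sum_comm_mul {n m : Type*} [Fintype n] [Fintype m] (F : n → m → ℝ) (G : m → n → ℝ)
    (h : ∀ x y, F x y = G y x) : ∑ x, ∑ y, F x y = ∑ y, ∑ x, G y x := by
  simp_rw [h]; exact Finset.sum_comm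

/-- Let `D₁ = D_x ⊗ I_y`, `D₂ = I_x ⊗ D_y` be nullspace consistent tensor product SBP operators
with SPD mass matrix `M = M_x ⊗ M_y`. If a discrete vector field `(u₁, u₂)` satisfies
`D₁ u₂ = D₂ u₁`, `u₁ ⊥_M osc₁`, and `u₂ ⊥_M osc₂`, then there exists a discrete scalar
potential `φ` with `D₁ φ = u₁` and `D₂ φ = u₂`. -/
theorem exists_discrete_scalar_potential_2D (N₁ N₂ : ℕ)
    (Dx Mx : Matrix (Fin N₁) (Fin N₁) ℝ) (Dy My : Matrix (Fin N₂) (Fin N₂) ℝ)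
    (hMx : Mx.PosDef) (hMxsym : Mx.IsSymm) (hMy : My.PosDef) (hMysym : My.IsSymm)
    (hDx : LinearMap.ker Dx.mulVecLin = Submodule.span ℝ {(fun _ => 1 : Fin N₁ → ℝ)})
    (hDy : LinearMap.ker Dy.mulVecLin = Submodule.span ℝ {(fun _ => 1 : Fin N₂ → ℝ)})
    (oscx : Fin N₁ → ℝ) (oscy : Fin N₂ → ℝ)
    (hoscx : LinearMap.ker (Mx⁻¹ * Dxᵀ * Mx).mulVecLin = Submodule.span ℝ {oscx})
    (hoscy : LinearMap.ker (My⁻¹ * Dyᵀ * My).mulVecLin = Submodule.span ℝ {oscy})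
    (D₁ D₂ : Matrix (Fin N₁ × Fin N₂) (Fin N₁ × Fin N₂) ℝ)
    (hD₁ : D₁ = Dx ⊗ₖ (1 : Matrix (Fin N₂) (Fin N₂) ℝ))
    (hD₂ : D₂ = (1 : Matrix (Fin N₁) (Fin N₁) ℝ) ⊗ₖ Dy)
    (osc₁ osc₂ : Fin N₁ × Fin N₂ → ℝ)
    (hosc₁ : osc₁ = fun p => oscx p.1) (hosc₂ : osc₂ = fun p => oscy p.2)
    (u₁ u₂ : Fin N₁ × Fin N₂ → ℝ)
    (hcurlfree : D₁.mulVec u₂ = D₂.mulVec u₁)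
    (horth₁ : u₁ ⬝ᵥ (Mx ⊗ₖ My).mulVec osc₁ = 0)
    (horth₂ : u₂ ⬝ᵥ (Mx ⊗ₖ My).mulVec osc₂ = 0) :
    ∃ φ : Fin N₁ × Fin N₂ → ℝ, D₁.mulVec φ = u₁ ∧ D₂.mulVec φ = u₂ := by
  subst hD₁ hD₂ hosc₁ hosc₂
  rcases Nat.eq_zero_or_pos N₁ with hN₁ | hN₁
  · subst hN₁
    exact ⟨0, funext fun p => p.1.elim0, funext fun p => p.1.elim0⟩
  rcases Nat.eq_zero_or_pos N₂ with hN₂ | hN₂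
  · subst hN₂
    exact ⟨0, funext fun p => p.2.elim0, funext fun p => p.2.elim0⟩
  -- kernels of transposes
  have hkerDxT := ker_transpose_of_osc Dx Mx hMx oscx hoscx
  have hkerDyT := ker_transpose_of_osc Dy My hMy oscy hoscy
  set a : Fin N₁ → ℝ := Mx.mulVec oscx with ha
  set b : Fin N₂ → ℝ := My.mulVec oscy with hb
  have hDxTa : Dxᵀ.mulVec a = 0 := by
    have : a ∈ LinearMap.ker Dxᵀ.mulVecLin := by
      rw [hkerDxT]; exact Submodule.mem_span_singleton_self _
    exact this
  have hDyTb : Dyᵀ.mulVec b = 0 := by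
    have : b ∈ LinearMap.ker Dyᵀ.mulVecLin := by
      rw [hkerDyT]; exact Submodule.mem_span_singleton_self _
    exact this
  have hDx1 : Dx.mulVec (fun _ => 1) = 0 := by
    have : (fun _ => 1 : Fin N₁ → ℝ) ∈ LinearMap.ker Dx.mulVecLin := by
      rw [hDx]; exact Submodule.mem_span_singleton_self _
    exact this
  have hDy1 : Dy.mulVec (fun _ => 1) = 0 := by
    have : (fun _ => 1 : Fin N₂ → ℝ) ∈ LinearMap.ker Dy.mulVecLin := by
      rw [hDy]; exact Submodule.mem_span_singleton_self _
    exact this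
  -- componentwise curl-free
  have hcurl : ∀ i j, ∑ k, Dx i k * u₂ (k, j) = ∑ l, Dy j l * u₁ (i, l) := by
    intro i j
    have := congrFun hcurlfree (i, j)
    rwa [kron_one_mulVec, one_kron_mulVec] at this
  -- positivity facts
  have hone₁ : (fun _ => 1 : Fin N₁ → ℝ) ≠ 0 := by
    intro h; have := congrFun h ⟨0, hN₁⟩; norm_num at this
  have hone₂ : (fun _ => 1 : Fin N₂ → ℝ) ≠ 0 := by
    intro h; have := congrFun h ⟨0, hN₂⟩; norm_num at this
  have hMxpos : 0 < ∑ i, ∑ k, Mx i k := by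
    have := hMx.dotProduct_mulVec_pos hone₁
    simpa [dotProduct, Matrix.mulVec] using this
  have hMypos : 0 < ∑ j, ∑ l, My j l := by
    have := hMy.dotProduct_mulVec_pos hone₂
    simpa [dotProduct, Matrix.mulVec] using this
  -- expand orthogonality 1
  have horth₁' : ∑ i, ∑ j, u₁ (i, j) * (a i * ∑ l, My j l) = 0 := by
    rw [← horth₁]
    rw [dotProduct, Fintype.sum_prod_type]
    refine Finset.sum_congr rfl fun i _ => Finset.sum_congr rfl fun j _ => ?_
    rw [kron_mulVec]
    congr 1
    have hai : a i = ∑ k, Mx i k * oscx k := by simp [ha, Matrix.mulVec, dotProduct]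
    rw [hai, Finset.sum_mul_sum]
    refine Finset.sum_congr rfl fun k _ => Finset.sum_congr rfl fun l _ => ?_
    show Mx i k * oscx k * My j l = Mx i k * My j l * oscx k
    ring
  -- step A : a ⬝ columns of u₁ vanish
  have hxT : ∀ k, (Dxᵀ.mulVec a) k = ∑ x, Dx x k * a x := fun k => by
    simp [Matrix.mulVec, dotProduct]
  have hyT : ∀ l, (Dyᵀ.mulVec b) l = ∑ x, Dy x l * b x := fun l => by
    simp [Matrix.mulVec, dotProduct]
  have hr : Dy.mulVec (fun j => ∑ i, a i * u₁ (i, j)) = 0 := by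
    funext j
    have e1 : Dy.mulVec (fun j => ∑ i, a i * u₁ (i, j)) j
        = ∑ i, a i * ∑ l, Dy j l * u₁ (i, l) := by
      rw [Matrix.mulVec, dotProduct]
      simp_rw [Finset.mul_sum]
      exact sum_comm_mul _ _ fun l i => by ring
    have e2 : ∑ i, a i * ∑ l, Dy j l * u₁ (i, l)
        = ∑ k, (Dxᵀ.mulVec a) k * u₂ (k, j) := by
      simp_rw [← hcurl, hxT, Finset.sum_mul, Finset.mul_sum]
      exact sum_comm_mul _ _ fun x k => by ring
    rw [e1, e2]
    simp [hDxTa]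
  have hcol0 : ∀ j, ∑ i, a i * u₁ (i, j) = 0 := by
    have hmem : (fun j => ∑ i, a i * u₁ (i, j)) ∈ LinearMap.ker Dy.mulVecLin := hr
    rw [hDy, Submodule.mem_span_singleton] at hmem
    obtain ⟨α, hα⟩ := hmem
    have hval : ∀ j, ∑ i, a i * u₁ (i, j) = α := fun j => by
      rw [← congrFun hα j]; simp
    have hα0 : α = 0 := by
      have h1 : ∑ i, ∑ j, u₁ (i, j) * (a i * ∑ l, My j l)
          = ∑ j, (∑ l, My j l) * (∑ i, a i * u₁ (i, j)) := by
        rw [Finset.sum_comm]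
        refine Finset.sum_congr rfl fun j _ => ?_
        rw [Finset.mul_sum]
        refine Finset.sum_congr rfl fun i _ => by ring
      rw [h1] at horth₁'
      simp_rw [hval] at horth₁'
      rw [← Finset.sum_mul] at horth₁'
      rcases mul_eq_zero.mp horth₁' with h | h
      · exact absurd h hMypos.ne'
      · exact h
    intro j; rw [hval j, hα0]
  -- step B : lift columns of u₁ through Dx
  have hrange : ∀ j : Fin N₂, ∃ ψ : Fin N₁ → ℝ, Dx.mulVec ψ = fun i => u₁ (i, j) := by
    intro j
    have hd : a ⬝ᵥ (fun i => u₁ (i, j)) = 0 := by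
      simpa [dotProduct] using hcol0 j
    obtain ⟨x, hx⟩ := mem_range_of_dot_eq_zero Dx a _ hkerDxT hd
    exact ⟨x, hx⟩
  choose ψ hψ using hrange
  have hψ' : ∀ j i, ∑ k, Dx i k * ψ j k = u₁ (i, j) := by
    intro j i
    have := congrFun (hψ j) i
    simpa [Matrix.mulVec, dotProduct] using this
  -- step C : defect is constant in i
  have hE : ∀ j, Dx.mulVec (fun i => (∑ l, Dy j l * ψ l i) - u₂ (i, j)) = 0 := by
    intro j
    funext i
    have : Dx.mulVec (fun i => (∑ l, Dy j l * ψ l i) - u₂ (i, j)) i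
        = (∑ l, Dy j l * ∑ k, Dx i k * ψ l k) - ∑ k, Dx i k * u₂ (k, j) := by
      rw [Matrix.mulVec, dotProduct]
      simp_rw [mul_sub, Finset.sum_sub_distrib]
      congr 1
      simp_rw [Finset.mul_sum]
      exact sum_comm_mul _ _ fun x l => by ring
    rw [this]
    simp_rw [hψ']
    rw [hcurl]
    simp
  have hEc : ∀ j, ∃ cj : ℝ, ∀ i, (∑ l, Dy j l * ψ l i) - u₂ (i, j) = cj := by
    intro j
    have hmem : (fun i => (∑ l, Dy j l * ψ l i) - u₂ (i, j)) ∈ LinearMap.ker Dx.mulVecLin :=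
      hE j
    rw [hDx, Submodule.mem_span_singleton] at hmem
    obtain ⟨cj, hcj⟩ := hmem
    exact ⟨cj, fun i => by rw [← congrFun hcj i]; simp⟩
  choose c hc using hEc
  -- step D : b ⬝ c = 0
  have hrow : ∀ i, ∑ j, b j * u₂ (i, j) = -(∑ j, b j * c j) := by
    intro i
    have h1 : ∑ j, b j * c j = ∑ j, b j * ((∑ l, Dy j l * ψ l i) - u₂ (i, j)) := by
      refine Finset.sum_congr rfl fun j _ => by rw [hc j i]
    have h2 : ∑ j, b j * ((∑ l, Dy j l * ψ l i) - u₂ (i, j))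
        = ∑ l, (Dyᵀ.mulVec b) l * ψ l i - ∑ j, b j * u₂ (i, j) := by
      simp_rw [mul_sub, Finset.sum_sub_distrib]
      congr 1
      simp_rw [hyT, Finset.sum_mul, Finset.mul_sum]
      exact sum_comm_mul _ _ fun x l => by ring
    have h3 : ∑ l, (Dyᵀ.mulVec b) l * ψ l i = 0 := by simp [hDyTb]
    linarith [h1, h2, h3]
  have horth₂' : ∑ i, ∑ j, u₂ (i, j) * ((∑ k, Mx i k) * b j) = 0 := by
    rw [← horth₂]
    rw [dotProduct, Fintype.sum_prod_type]
    refine Finset.sum_congr rfl fun i _ => Finset.sum_congr rfl fun j _ => ?_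
    rw [kron_mulVec]
    congr 1
    have hbj : b j = ∑ l, My j l * oscy l := by simp [hb, Matrix.mulVec, dotProduct]
    rw [hbj, Finset.sum_mul_sum]
    refine Finset.sum_congr rfl fun k _ => Finset.sum_congr rfl fun l _ => ?_
    show Mx i k * (My j l * oscy l) = Mx i k * My j l * oscy l
    ring
  have hbc : ∑ j, b j * c j = 0 := by
    have h1 : ∑ i, ∑ j, u₂ (i, j) * ((∑ k, Mx i k) * b j)
        = ∑ i, (∑ k, Mx i k) * (∑ j, b j * u₂ (i, j)) := by
      refine Finset.sum_congr rfl fun i _ => ?_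
      rw [Finset.mul_sum]
      refine Finset.sum_congr rfl fun j _ => by ring
    rw [h1] at horth₂'
    simp_rw [hrow] at horth₂'
    rw [← Finset.sum_mul] at horth₂'
    rcases mul_eq_zero.mp horth₂' with h | h
    · exact absurd h hMxpos.ne'
    · linarith [h]
  -- lift c through Dy
  have hcrange : ∃ g : Fin N₂ → ℝ, Dy.mulVec g = c := by
    have hd : b ⬝ᵥ c = 0 := by simpa [dotProduct] using hbc
    obtain ⟨g, hg⟩ := mem_range_of_dot_eq_zero Dy b c hkerDyT hd
    exact ⟨g, hg⟩
  obtain ⟨g, hg⟩ := hcrange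
  have hg' : ∀ j, ∑ l, Dy j l * g l = c j := by
    intro j
    have := congrFun hg j
    simpa [Matrix.mulVec, dotProduct] using this
  -- the potential
  refine ⟨fun p => ψ p.2 p.1 - g p.2, ?_, ?_⟩
  · funext p
    obtain ⟨i, j⟩ := p
    rw [kron_one_mulVec]
    have : ∑ k, Dx i k * (ψ j k - g j)
        = (∑ k, Dx i k * ψ j k) - g j * (Dx.mulVec (fun _ => 1)) i := by
      simp_rw [mul_sub, Finset.sum_sub_distrib, Matrix.mulVec, dotProduct]
      congr 1
      rw [Finset.mul_sum]
      refine Finset.sum_congr rfl fun k _ => by ring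
    rw [this, hDx1, hψ']
    simp
  · funext p
    obtain ⟨i, j⟩ := p
    rw [one_kron_mulVec]
    have : ∑ l, Dy j l * (ψ l i - g l)
        = (∑ l, Dy j l * ψ l i) - ∑ l, Dy j l * g l := by
      simp_rw [mul_sub, Finset.sum_sub_distrib]
    rw [this, hg']
    have := hc j i
    linarith [this]
end

section
/- For nullspace consistent tensor product SBP operators in two dimensions, dim(ker curl) = dim(im grad) + 2. -/
open Matrix Kronecker

namespace SBPAux

variable {m n : ℕ}

/-- Pairing a vector against the first index of a two-index array. -/
def phiL (v : Fin m → ℝ) : (Fin m × Fin n → ℝ) →ₗ[ℝ] (Fin n → ℝ) where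
  toFun u := fun j => ∑ i, v i * u (i, j)
  map_add' u w := by
    funext j
    simp [mul_add, Finset.sum_add_distrib]
  map_smul' c u := by
    funext j
    simp [Finset.mul_sum]
    exact Finset.sum_congr rfl fun i _ => by ring

/-- Pairing a vector against the second index of a two-index array. -/
def phiR (w : Fin n → ℝ) : (Fin m × Fin n → ℝ) →ₗ[ℝ] (Fin m → ℝ) where
  toFun u := fun i => ∑ j, w j * u (i, j)
  map_add' u z := by
    funext i
    simp [mul_add, Finset.sum_add_distrib]
  map_smul' c u := by
    funext i
    simp [Finset.mul_sum]
    exact Finset.sum_congr rfl fun j _ => by ring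

/-- Dot product as a linear functional. -/
def dotL (v : Fin m → ℝ) : (Fin m → ℝ) →ₗ[ℝ] ℝ where
  toFun u := ∑ i, v i * u i
  map_add' u w := by simp [mul_add, Finset.sum_add_distrib]
  map_smul' c u := by
    simp [Finset.mul_sum]
    exact Finset.sum_congr rfl fun i _ => by ring

lemma mulVec_kron_left (A : Matrix (Fin m) (Fin m) ℝ) (u : Fin m × Fin n → ℝ)
    (p : Fin m × Fin n) :
    (A ⊗ₖ (1 : Matrix (Fin n) (Fin n) ℝ)).mulVec u p = ∑ k, A p.1 k * u (k, p.2) := by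
  obtain ⟨i, j⟩ := p
  simp [Matrix.mulVec, dotProduct, Fintype.sum_prod_type, Matrix.one_apply,
    mul_ite, ite_mul, mul_comm, mul_assoc]

lemma mulVec_kron_right (B : Matrix (Fin n) (Fin n) ℝ) (u : Fin m × Fin n → ℝ)
    (p : Fin m × Fin n) :
    ((1 : Matrix (Fin m) (Fin m) ℝ) ⊗ₖ B).mulVec u p = ∑ l, B p.2 l * u (p.1, l) := by
  obtain ⟨i, j⟩ := p
  simp [Matrix.mulVec, dotProduct, Fintype.sum_prod_type, Matrix.one_apply,
    mul_ite, ite_mul, mul_comm, mul_assoc]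

end SBPAux

open SBPAux

/-- For nullspace consistent tensor product SBP operators in two dimensions,
`dim (ker curl) = dim (im grad) + 2`. -/
theorem dim_ker_curl_eq_dim_im_grad_add_two_2D (N₁ N₂ : ℕ) (hN₁ : 1 ≤ N₁) (hN₂ : 1 ≤ N₂)
    (Dx : Matrix (Fin N₁) (Fin N₁) ℝ) (Dy : Matrix (Fin N₂) (Fin N₂) ℝ)
    (hDx : LinearMap.ker Dx.mulVecLin = Submodule.span ℝ {(fun _ => 1 : Fin N₁ → ℝ)})
    (hDy : LinearMap.ker Dy.mulVecLin = Submodule.span ℝ {(fun _ => 1 : Fin N₂ → ℝ)})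
    (D₁ D₂ : Matrix (Fin N₁ × Fin N₂) (Fin N₁ × Fin N₂) ℝ)
    (hD₁ : D₁ = Dx ⊗ₖ (1 : Matrix (Fin N₂) (Fin N₂) ℝ))
    (hD₂ : D₂ = (1 : Matrix (Fin N₁) (Fin N₁) ℝ) ⊗ₖ Dy)
    (grad : (Fin N₁ × Fin N₂ → ℝ) →ₗ[ℝ] (Fin N₁ × Fin N₂ → ℝ) × (Fin N₁ × Fin N₂ → ℝ))
    (hgrad : grad = LinearMap.prod D₁.mulVecLin D₂.mulVecLin)
    (curl : (Fin N₁ × Fin N₂ → ℝ) × (Fin N₁ × Fin N₂ → ℝ) →ₗ[ℝ] (Fin N₁ × Fin N₂ → ℝ))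
    (hcurl : curl = D₁.mulVecLin ∘ₗ LinearMap.snd ℝ _ _ - D₂.mulVecLin ∘ₗ LinearMap.fst ℝ _ _) :
    Module.finrank ℝ ↥(LinearMap.ker curl) =
      Module.finrank ℝ ↥(LinearMap.range grad) + 2 := by
  haveI i1 : Nonempty (Fin N₁) := ⟨⟨0, hN₁⟩⟩
  haveI i2 : Nonempty (Fin N₂) := ⟨⟨0, hN₂⟩⟩
  obtain ⟨i₀⟩ := i1
  obtain ⟨j₀⟩ := i2
  haveI : Nonempty (Fin N₁) := ⟨i₀⟩
  haveI : Nonempty (Fin N₂) := ⟨j₀⟩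
  -- dimensions of ambient spaces
  have hcard : Module.finrank ℝ (Fin N₁ × Fin N₂ → ℝ) = N₁ * N₂ := by
    rw [Module.finrank_fintype_fun_eq_card]; simp
  have hcard1 : Module.finrank ℝ (Fin N₁ → ℝ) = N₁ := by
    rw [Module.finrank_fintype_fun_eq_card]; simp
  have hcard2 : Module.finrank ℝ (Fin N₂ → ℝ) = N₂ := by
    rw [Module.finrank_fintype_fun_eq_card]; simp
  -- the one vectors are in the kernels
  have h1x : ((fun _ => 1 : Fin N₁ → ℝ)) ≠ 0 := by
    intro h; exact one_ne_zero (congrFun h i₀)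
  have h1y : ((fun _ => 1 : Fin N₂ → ℝ)) ≠ 0 := by
    intro h; exact one_ne_zero (congrFun h j₀)
  have h1memx : Dx.mulVec (fun _ => 1) = 0 := by
    have : (fun _ => 1 : Fin N₁ → ℝ) ∈ LinearMap.ker Dx.mulVecLin := by
      rw [hDx]; exact Submodule.mem_span_singleton_self _
    simpa [Matrix.mulVecLin_apply] using this
  have h1memy : Dy.mulVec (fun _ => 1) = 0 := by
    have : (fun _ => 1 : Fin N₂ → ℝ) ∈ LinearMap.ker Dy.mulVecLin := by
      rw [hDy]; exact Submodule.mem_span_singleton_self _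
    simpa [Matrix.mulVecLin_apply] using this
  have hrowx : ∀ i, ∑ k, Dx i k = 0 := by
    intro i
    have := congrFun h1memx i
    simpa [Matrix.mulVec, dotProduct] using this
  have hrowy : ∀ j, ∑ l, Dy j l = 0 := by
    intro j
    have := congrFun h1memy j
    simpa [Matrix.mulVec, dotProduct] using this
  -- kernels of D₁ and D₂
  have hkerD₁ : LinearMap.ker D₁.mulVecLin =
      LinearMap.range (LinearMap.funLeft ℝ ℝ (Prod.snd : Fin N₁ × Fin N₂ → Fin N₂)) := by
    ext u
    simp only [LinearMap.mem_ker, LinearMap.mem_range, Matrix.mulVecLin_apply]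
    constructor
    · intro hu
      have hcol : ∀ j, (fun i => u (i, j)) ∈ Submodule.span ℝ {(fun _ => 1 : Fin N₁ → ℝ)} := by
        intro j
        rw [← hDx]
        simp only [LinearMap.mem_ker, Matrix.mulVecLin_apply]
        funext i
        have := congrFun hu (i, j)
        rw [hD₁, mulVec_kron_left] at this
        simpa [Matrix.mulVec, dotProduct] using this
      choose c hc using fun j => Submodule.mem_span_singleton.mp (hcol j)
      refine ⟨c, ?_⟩
      funext p
      have := congrFun (hc p.2) p.1
      simpa [LinearMap.funLeft, eq_comm] using this.symm
    · rintro ⟨c, rfl⟩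
      funext p
      rw [hD₁, mulVec_kron_left]
      have : ∑ k, Dx p.1 k * c p.2 = (∑ k, Dx p.1 k) * c p.2 := by
        rw [Finset.sum_mul]
      simp [LinearMap.funLeft, this, hrowx p.1]
  have hkerD₂ : LinearMap.ker D₂.mulVecLin =
      LinearMap.range (LinearMap.funLeft ℝ ℝ (Prod.fst : Fin N₁ × Fin N₂ → Fin N₁)) := by
    ext u
    simp only [LinearMap.mem_ker, LinearMap.mem_range, Matrix.mulVecLin_apply]
    constructor
    · intro hu
      have hrow : ∀ i, (fun j => u (i, j)) ∈ Submodule.span ℝ {(fun _ => 1 : Fin N₂ → ℝ)} := by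
        intro i
        rw [← hDy]
        simp only [LinearMap.mem_ker, Matrix.mulVecLin_apply]
        funext j
        have := congrFun hu (i, j)
        rw [hD₂, mulVec_kron_right] at this
        simpa [Matrix.mulVec, dotProduct] using this
      choose d hd using fun i => Submodule.mem_span_singleton.mp (hrow i)
      refine ⟨d, ?_⟩
      funext p
      have := congrFun (hd p.1) p.2
      simpa [LinearMap.funLeft, eq_comm] using this.symm
    · rintro ⟨d, rfl⟩
      funext p
      rw [hD₂, mulVec_kron_right]
      have : ∑ l, Dy p.2 l * d p.1 = (∑ l, Dy p.2 l) * d p.1 := by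
        rw [Finset.sum_mul]
      simp [LinearMap.funLeft, this, hrowy p.2]
  have hkd1 : Module.finrank ℝ ↥(LinearMap.ker D₁.mulVecLin) = N₂ := by
    rw [hkerD₁, LinearMap.finrank_range_of_inj
      (LinearMap.funLeft_injective_of_surjective ℝ ℝ _ Prod.snd_surjective), hcard2]
  have hkd2 : Module.finrank ℝ ↥(LinearMap.ker D₂.mulVecLin) = N₁ := by
    rw [hkerD₂, LinearMap.finrank_range_of_inj
      (LinearMap.funLeft_injective_of_surjective ℝ ℝ _ Prod.fst_surjective), hcard1]
  -- kernel of grad is the constants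
  have hkergrad : LinearMap.ker grad =
      Submodule.span ℝ {(fun _ => 1 : Fin N₁ × Fin N₂ → ℝ)} := by
    rw [hgrad, LinearMap.ker_prod, hkerD₁, hkerD₂]
    apply le_antisymm
    · rintro u ⟨⟨c, hc⟩, ⟨d, hd⟩⟩
      rw [Submodule.mem_span_singleton]
      refine ⟨u (i₀, j₀), ?_⟩
      funext p
      have h1 : u p = c p.2 := by rw [← hc]; rfl
      have h2 : ∀ q, u q = d q.1 := by intro q; rw [← hd]; rfl
      have h3 : u (i₀, p.2) = c p.2 := by rw [← hc]; rfl
      have h4 : u (i₀, j₀) = d i₀ := h2 (i₀, j₀)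
      have h5 : u (i₀, p.2) = d i₀ := h2 (i₀, p.2)
      simp only [Pi.smul_apply, smul_eq_mul, mul_one]
      rw [h1, ← h3, h5, ← h4]
    · rw [Submodule.span_singleton_le_iff_mem]
      exact ⟨⟨fun _ => 1, rfl⟩, ⟨fun _ => 1, rfl⟩⟩
  have h1xy : ((fun _ => 1 : Fin N₁ × Fin N₂ → ℝ)) ≠ 0 := by
    intro h; exact one_ne_zero (congrFun h (i₀, j₀))
  have hkg : Module.finrank ℝ ↥(LinearMap.ker grad) = 1 := by
    rw [hkergrad, finrank_span_singleton h1xy]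
  -- left null vectors of Dx and Dy
  have hdetx : Dx.det = 0 := by
    rw [← Matrix.exists_mulVec_eq_zero_iff]
    exact ⟨fun _ => 1, h1x, h1memx⟩
  have hdety : Dy.det = 0 := by
    rw [← Matrix.exists_mulVec_eq_zero_iff]
    exact ⟨fun _ => 1, h1y, h1memy⟩
  obtain ⟨v, hv0, hvDx⟩ : ∃ v ≠ 0, Dxᵀ.mulVec v = 0 :=
    Matrix.exists_mulVec_eq_zero_iff.mpr (by rwa [Matrix.det_transpose])
  obtain ⟨w, hw0, hwDy⟩ : ∃ w ≠ 0, Dyᵀ.mulVec w = 0 :=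
    Matrix.exists_mulVec_eq_zero_iff.mpr (by rwa [Matrix.det_transpose])
  have hvcol : ∀ k, ∑ i, Dx i k * v i = 0 := by
    intro k
    have := congrFun hvDx k
    simpa [Matrix.mulVec, dotProduct, Matrix.transpose_apply, mul_comm] using this
  have hwcol : ∀ l, ∑ j, Dy j l * w j = 0 := by
    intro l
    have := congrFun hwDy l
    simpa [Matrix.mulVec, dotProduct, Matrix.transpose_apply, mul_comm] using this
  set Sv : ℝ := ∑ i, v i * v i with hSv
  set Sw : ℝ := ∑ j, w j * w j with hSw
  have hSvpos : 0 < Sv := by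
    obtain ⟨i, hi⟩ := Function.ne_iff.mp hv0
    exact Finset.sum_pos' (fun i _ => mul_self_nonneg (v i))
      ⟨i, Finset.mem_univ i, mul_self_pos.mpr hi⟩
  have hSwpos : 0 < Sw := by
    obtain ⟨j, hj⟩ := Function.ne_iff.mp hw0
    exact Finset.sum_pos' (fun j _ => mul_self_nonneg (w j))
      ⟨j, Finset.mem_univ j, mul_self_pos.mpr hj⟩
  have hSvne : Sv ≠ 0 := ne_of_gt hSvpos
  have hSwne : Sw ≠ 0 := ne_of_gt hSwpos
  set Φ₁ : (Fin N₁ × Fin N₂ → ℝ) →ₗ[ℝ] (Fin N₂ → ℝ) := phiL v with hΦ₁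
  set Φ₂ : (Fin N₁ × Fin N₂ → ℝ) →ₗ[ℝ] (Fin N₁ → ℝ) := phiR w with hΦ₂
  have hΦ₁app : ∀ u j, Φ₁ u j = ∑ i, v i * u (i, j) := fun u j => rfl
  have hΦ₂app : ∀ u i, Φ₂ u i = ∑ j, w j * u (i, j) := fun u i => rfl
  -- Φ₁ is surjective
  have hΦ₁surj : Function.Surjective Φ₁ := by
    intro c
    refine ⟨fun p => v p.1 * c p.2 / Sv, ?_⟩
    funext j
    rw [hΦ₁app]
    have : ∀ i, v i * (v i * c j / Sv) = (v i * v i) * (c j / Sv) := fun i => by ring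
    rw [Finset.sum_congr rfl fun i _ => this i, ← Finset.sum_mul, ← hSv]
    field_simp
  have hΦ₂surj : Function.Surjective Φ₂ := by
    intro d
    refine ⟨fun p => w p.2 * d p.1 / Sw, ?_⟩
    funext i
    rw [hΦ₂app]
    have : ∀ j, w j * (w j * d i / Sw) = (w j * w j) * (d i / Sw) := fun j => by ring
    rw [Finset.sum_congr rfl fun j _ => this j, ← Finset.sum_mul, ← hSw]
    field_simp
  -- range D₁ = ker Φ₁
  have hrngD₁ : LinearMap.range D₁.mulVecLin = LinearMap.ker Φ₁ := by
    have hle : LinearMap.range D₁.mulVecLin ≤ LinearMap.ker Φ₁ := by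
      rintro _ ⟨u, rfl⟩
      simp only [LinearMap.mem_ker]
      funext j
      rw [hΦ₁app]
      simp only [Matrix.mulVecLin_apply, hD₁, mulVec_kron_left, Pi.zero_apply]
      rw [Finset.sum_congr rfl fun i (_ : i ∈ Finset.univ) => Finset.mul_sum _ _ _,
        Finset.sum_comm]
      rw [show (0:ℝ) = ∑ k : Fin N₁, 0 by simp]
      refine Finset.sum_congr rfl fun k _ => ?_
      have : ∀ i, v i * (Dx i k * u (k, j)) = (Dx i k * v i) * u (k, j) := fun i => by ring
      rw [Finset.sum_congr rfl fun i _ => this i, ← Finset.sum_mul, hvcol k, zero_mul]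
    have h1 : Module.finrank ℝ ↥(LinearMap.range D₁.mulVecLin)
        + Module.finrank ℝ ↥(LinearMap.ker D₁.mulVecLin) = N₁ * N₂ := by
      rw [LinearMap.finrank_range_add_finrank_ker, hcard]
    have h2 : Module.finrank ℝ ↥(LinearMap.range Φ₁)
        + Module.finrank ℝ ↥(LinearMap.ker Φ₁) = N₁ * N₂ := by
      rw [LinearMap.finrank_range_add_finrank_ker, hcard]
    have h3 : Module.finrank ℝ ↥(LinearMap.range Φ₁) = N₂ := by
      rw [LinearMap.range_eq_top.mpr hΦ₁surj, finrank_top, hcard2]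
    exact Submodule.eq_of_le_of_finrank_le hle (by omega)
  have hrngD₂ : LinearMap.range D₂.mulVecLin = LinearMap.ker Φ₂ := by
    have hle : LinearMap.range D₂.mulVecLin ≤ LinearMap.ker Φ₂ := by
      rintro _ ⟨u, rfl⟩
      simp only [LinearMap.mem_ker]
      funext i
      rw [hΦ₂app]
      simp only [Matrix.mulVecLin_apply, hD₂, mulVec_kron_right, Pi.zero_apply]
      rw [Finset.sum_congr rfl fun j (_ : j ∈ Finset.univ) => Finset.mul_sum _ _ _,
        Finset.sum_comm]
      rw [show (0:ℝ) = ∑ l : Fin N₂, 0 by simp]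
      refine Finset.sum_congr rfl fun l _ => ?_
      have : ∀ j, w j * (Dy j l * u (i, l)) = (Dy j l * w j) * u (i, l) := fun j => by ring
      rw [Finset.sum_congr rfl fun j _ => this j, ← Finset.sum_mul, hwcol l, zero_mul]
    have h1 : Module.finrank ℝ ↥(LinearMap.range D₂.mulVecLin)
        + Module.finrank ℝ ↥(LinearMap.ker D₂.mulVecLin) = N₁ * N₂ := by
      rw [LinearMap.finrank_range_add_finrank_ker, hcard]
    have h2 : Module.finrank ℝ ↥(LinearMap.range Φ₂)
        + Module.finrank ℝ ↥(LinearMap.ker Φ₂) = N₁ * N₂ := by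
      rw [LinearMap.finrank_range_add_finrank_ker, hcard]
    have h3 : Module.finrank ℝ ↥(LinearMap.range Φ₂) = N₁ := by
      rw [LinearMap.range_eq_top.mpr hΦ₂surj, finrank_top, hcard1]
    exact Submodule.eq_of_le_of_finrank_le hle (by omega)
  -- the functional ψ
  set ψ : (Fin N₂ → ℝ) × (Fin N₁ → ℝ) →ₗ[ℝ] ℝ :=
    dotL w ∘ₗ LinearMap.fst ℝ _ _ - dotL v ∘ₗ LinearMap.snd ℝ _ _ with hψ
  have hψapp : ∀ cd : (Fin N₂ → ℝ) × (Fin N₁ → ℝ),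
      ψ cd = (∑ j, w j * cd.1 j) - ∑ i, v i * cd.2 i := fun cd => rfl
  have hψsurj : Function.Surjective ψ := by
    intro r
    refine ⟨((r / Sw) • w, 0), ?_⟩
    rw [hψapp]
    simp only [Pi.smul_apply, smul_eq_mul, Pi.zero_apply, mul_zero, Finset.sum_const_zero,
      sub_zero]
    have : ∀ j, w j * (r / Sw * w j) = (w j * w j) * (r / Sw) := fun j => by ring
    rw [Finset.sum_congr rfl fun j _ => this j, ← Finset.sum_mul, ← hSw]
    field_simp
  have hrngΦ : LinearMap.range (Φ₁.prod Φ₂) = LinearMap.ker ψ := by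
    apply le_antisymm
    · rintro _ ⟨u, rfl⟩
      simp only [LinearMap.mem_ker, LinearMap.prod_apply, Pi.prod]
      rw [hψapp]
      rw [sub_eq_zero]
      have l1 : (∑ j, w j * Φ₁ u j) = ∑ j, ∑ i, w j * (v i * u (i, j)) :=
        Finset.sum_congr rfl fun j _ => by rw [hΦ₁app, Finset.mul_sum]
      have l2 : (∑ i, v i * Φ₂ u i) = ∑ i, ∑ j, v i * (w j * u (i, j)) :=
        Finset.sum_congr rfl fun i _ => by rw [hΦ₂app, Finset.mul_sum]
      show (∑ j, w j * Φ₁ u j) = ∑ i, v i * Φ₂ u i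
      rw [l1, l2, Finset.sum_comm]
      exact Finset.sum_congr rfl fun i _ => Finset.sum_congr rfl fun j _ => by ring
    · rintro ⟨c, d⟩ hcd
      rw [LinearMap.mem_ker, hψapp] at hcd
      have hcd' : (∑ j, w j * c j) = ∑ i, v i * d i := by
        have := sub_eq_zero.mp hcd; simpa using this
      set t : ℝ := ∑ i, v i * d i with ht
      refine ⟨fun p => v p.1 * c p.2 / Sv + d p.1 * w p.2 / Sw
        - t * (v p.1 * w p.2) / (Sv * Sw), ?_⟩
      have hu1 : Φ₁ (fun p => v p.1 * c p.2 / Sv + d p.1 * w p.2 / Sw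
          - t * (v p.1 * w p.2) / (Sv * Sw)) = c := by
        funext j
        rw [hΦ₁app]
        have e : ∀ i : Fin N₁, v i * (v i * c j / Sv + d i * w j / Sw
            - t * (v i * w j) / (Sv * Sw))
            = (v i * v i) * (c j / Sv) + (v i * d i) * (w j / Sw)
              - (v i * v i) * (t * w j / (Sv * Sw)) := fun i => by ring
        rw [Finset.sum_congr rfl fun i _ => e i, Finset.sum_sub_distrib,
          Finset.sum_add_distrib, ← Finset.sum_mul, ← Finset.sum_mul, ← Finset.sum_mul,
          ← hSv, ← ht]
        field_simp
        ring
      have hu2 : Φ₂ (fun p => v p.1 * c p.2 / Sv + d p.1 * w p.2 / Sw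
          - t * (v p.1 * w p.2) / (Sv * Sw)) = d := by
        funext i
        rw [hΦ₂app]
        have e : ∀ j : Fin N₂, w j * (v i * c j / Sv + d i * w j / Sw
            - t * (v i * w j) / (Sv * Sw))
            = (w j * c j) * (v i / Sv) + (w j * w j) * (d i / Sw)
              - (w j * w j) * (t * v i / (Sv * Sw)) := fun j => by ring
        rw [Finset.sum_congr rfl fun j _ => e j, Finset.sum_sub_distrib,
          Finset.sum_add_distrib, ← Finset.sum_mul, ← Finset.sum_mul, ← Finset.sum_mul,
          ← hSw, hcd']
        field_simp
        ring
      simp only [LinearMap.prod_apply, Function.prod, hu1, hu2]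
  -- dimension bookkeeping
  have hkerψ : Module.finrank ℝ ↥(LinearMap.ker ψ) + 1 = N₂ + N₁ := by
    have h := LinearMap.finrank_range_add_finrank_ker ψ
    rw [LinearMap.range_eq_top.mpr hψsurj, finrank_top, Module.finrank_self,
      Module.finrank_prod, hcard1, hcard2] at h
    omega
  have hinf : Module.finrank ℝ ↥(LinearMap.ker Φ₁ ⊓ LinearMap.ker Φ₂) + (N₂ + N₁)
      = N₁ * N₂ + 1 := by
    have h := LinearMap.finrank_range_add_finrank_ker (Φ₁.prod Φ₂)
    rw [LinearMap.ker_prod, hcard, hrngΦ] at h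
    omega
  -- range of curl
  have hrngcurl : LinearMap.range curl
      = LinearMap.range D₁.mulVecLin ⊔ LinearMap.range D₂.mulVecLin := by
    rw [hcurl]
    apply le_antisymm
    · rintro _ ⟨⟨u₁, u₂⟩, rfl⟩
      simp only [LinearMap.sub_apply, LinearMap.comp_apply, LinearMap.fst_apply,
        LinearMap.snd_apply]
      exact Submodule.sub_mem _ (Submodule.mem_sup_left ⟨u₂, rfl⟩)
        (Submodule.mem_sup_right ⟨u₁, rfl⟩)
    · apply sup_le
      · rintro _ ⟨u, rfl⟩
        exact ⟨(0, u), by simp [Matrix.mulVec_zero]⟩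
      · rintro _ ⟨u, rfl⟩
        exact ⟨(-u, 0), by simp [Matrix.mulVec_neg, Matrix.mulVec_zero]⟩
  have hsup := Submodule.finrank_sup_add_finrank_inf_eq
    (LinearMap.range D₁.mulVecLin) (LinearMap.range D₂.mulVecLin)
  rw [hrngD₁, hrngD₂] at hsup
  have ha : Module.finrank ℝ ↥(LinearMap.range D₁.mulVecLin) + N₂ = N₁ * N₂ := by
    have h := LinearMap.finrank_range_add_finrank_ker D₁.mulVecLin
    rw [hcard, hkd1] at h
    rw [hrngD₁] at h ⊢
    omega
  have hb : Module.finrank ℝ ↥(LinearMap.range D₂.mulVecLin) + N₁ = N₁ * N₂ := by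
    have h := LinearMap.finrank_range_add_finrank_ker D₂.mulVecLin
    rw [hcard, hkd2] at h
    rw [hrngD₂] at h ⊢
    omega
  rw [hrngD₁] at ha
  rw [hrngD₂] at hb
  have hcurlrn : Module.finrank ℝ ↥(LinearMap.range curl)
      + Module.finrank ℝ ↥(LinearMap.ker curl) = N₁ * N₂ + N₁ * N₂ := by
    have h := LinearMap.finrank_range_add_finrank_ker curl
    rwa [Module.finrank_prod, hcard] at h
  rw [hrngcurl, hrngD₁, hrngD₂] at hcurlrn
  have hgradrn : Module.finrank ℝ ↥(LinearMap.range grad) + 1 = N₁ * N₂ := by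
    have h := LinearMap.finrank_range_add_finrank_ker grad
    rwa [hcard, hkg] at h
  have hn : 1 ≤ N₁ * N₂ := Nat.one_le_iff_ne_zero.mpr (by positivity)
  generalize hgen : N₁ * N₂ = n at hinf ha hb hcurlrn hgradrn hn
  omega
end

section
/- For nullspace consistent tensor product SBP operators in three dimensions, the kernel of the discrete curl equals the orthogonal direct sum of the image of the discrete gradient and the three-dimensional span of (osc₁,0,0), (0,osc₂,0), (0,0,osc₃); in particular dim ker curl = N₁N₂N₃ + 2 and dim im grad = N₁N₂N₃ - 1. -/
open Matrix Kronecker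

/-- Grid functions on a three-dimensional tensor product grid. -/
abbrev GridFun3 (N₁ N₂ N₃ : ℕ) := Fin N₁ × Fin N₂ × Fin N₃ → ℝ

section OneD
variable {n : ℕ} (hn : 1 ≤ n) (D M : Matrix (Fin n) (Fin n) ℝ)
  (hM : M.PosDef)
  (hD : LinearMap.ker D.mulVecLin = Submodule.span ℝ {(fun _ => 1 : Fin n → ℝ)})
  (osc : Fin n → ℝ)
  (hosc : LinearMap.ker (M⁻¹ * Dᵀ * M).mulVecLin = Submodule.span ℝ {osc})

include hn in
lemma ones_ne_zero : (fun _ => 1 : Fin n → ℝ) ≠ 0 := by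
  intro h
  have := congrFun h ⟨0, hn⟩
  simp at this

include hD in
lemma sbp_D_one : D *ᵥ (fun _ => 1) = 0 := by
  have : (fun _ => 1 : Fin n → ℝ) ∈ LinearMap.ker D.mulVecLin := by
    rw [hD]; exact Submodule.mem_span_singleton_self _
  simpa using this

include hD in
lemma sbp_D_const (c : ℝ) : D *ᵥ (fun _ => c) = 0 := by
  have h : (fun _ => c : Fin n → ℝ) = c • (fun _ => 1 : Fin n → ℝ) := funext fun _ => by simp
  rw [h, mulVec_smul, sbp_D_one D hD, smul_zero]

include hD in
lemma sbp_const_of_ker {v : Fin n → ℝ} (hv : D *ᵥ v = 0) : ∀ i i', v i = v i' := by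
  have : v ∈ LinearMap.ker D.mulVecLin := by simpa using hv
  rw [hD, Submodule.mem_span_singleton] at this
  obtain ⟨c, rfl⟩ := this
  intro i i'; simp

include hM hosc in
lemma sbp_DtMosc : Dᵀ *ᵥ (M *ᵥ osc) = 0 := by
  have hMu : IsUnit M.det := (Matrix.isUnit_iff_isUnit_det M).mp hM.isUnit
  have h : (M⁻¹ * Dᵀ * M).mulVecLin osc = 0 := by
    have : osc ∈ LinearMap.ker (M⁻¹ * Dᵀ * M).mulVecLin := by
      rw [hosc]; exact Submodule.mem_span_singleton_self _
    simpa using this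
  have h2 := congrArg (fun w => M *ᵥ w) h
  simp only [mulVecLin_apply, mulVec_mulVec, mulVec_zero] at h2
  rw [mul_assoc M⁻¹, ← mul_assoc M, Matrix.mul_nonsing_inv _ hMu, one_mul,
    ← mulVec_mulVec] at h2
  exact h2

include hM hosc in
lemma sbp_orth (v : Fin n → ℝ) : (D *ᵥ v) ⬝ᵥ (M *ᵥ osc) = 0 := by
  rw [show (D *ᵥ v) ⬝ᵥ (M *ᵥ osc) = v ⬝ᵥ (Dᵀ *ᵥ (M *ᵥ osc)) by
    rw [dotProduct_comm, dotProduct_mulVec, ← mulVec_transpose, dotProduct_comm]]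
  rw [sbp_DtMosc D M hM osc hosc, dotProduct_zero]

include hM in
lemma sbp_pos {x : Fin n → ℝ} (hx : x ≠ 0) : 0 < x ⬝ᵥ (M *ᵥ x) := by
  have := hM.dotProduct_mulVec_pos hx
  simpa [star_trivial] using this

include hn hM hD hosc in
lemma sbp_osc_ne_zero : osc ≠ 0 := by
  intro h
  subst h
  simp only [Set.singleton_zero, Submodule.span_zero] at hosc
  have hMu : IsUnit M.det := (Matrix.isUnit_iff_isUnit_det M).mp hM.isUnit
  have hkerT : LinearMap.ker Dᵀ.mulVecLin = ⊥ := by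
    rw [LinearMap.ker_eq_bot']
    intro x hx
    rw [mulVecLin_apply] at hx
    have h1 : (M⁻¹ * Dᵀ * M).mulVecLin (M⁻¹ *ᵥ x) = 0 := by
      simp only [mulVecLin_apply, ← mulVec_mulVec]
      rw [show M *ᵥ M⁻¹ *ᵥ x = x by
        rw [mulVec_mulVec, Matrix.mul_nonsing_inv _ hMu, one_mulVec], hx, mulVec_zero]
    rw [← LinearMap.mem_ker, hosc, Submodule.mem_bot] at h1
    have := congrArg (fun w => M *ᵥ w) h1
    simpa [mulVec_mulVec, Matrix.mul_nonsing_inv _ hMu] using this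
  have hrT : Dᵀ.rank = n := by
    have h := LinearMap.finrank_range_add_finrank_ker Dᵀ.mulVecLin
    rw [hkerT] at h
    simpa [Matrix.rank, Module.finrank_fin_fun] using h
  have hr : D.rank = n := by rw [← Matrix.rank_transpose]; exact hrT
  have h := LinearMap.finrank_range_add_finrank_ker D.mulVecLin
  rw [Module.finrank_fin_fun] at h
  have hker0 : Module.finrank ℝ (LinearMap.ker D.mulVecLin) = 0 := by
    have : D.rank = Module.finrank ℝ (LinearMap.range D.mulVecLin) := rfl
    omega
  have h1 : (fun _ => 1 : Fin n → ℝ) ∈ LinearMap.ker D.mulVecLin := by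
    rw [hD]; exact Submodule.mem_span_singleton_self _
  have : LinearMap.ker D.mulVecLin = ⊥ := Submodule.finrank_eq_zero.mp hker0
  rw [this, Submodule.mem_bot] at h1
  exact ones_ne_zero hn h1

include hn hM hD hosc in
lemma sbp_surj {v : Fin n → ℝ} (hv : v ⬝ᵥ (M *ᵥ osc) = 0) : ∃ p, D *ᵥ p = v := by
  classical
  set f : (Fin n → ℝ) →ₗ[ℝ] ℝ :=
    { toFun := fun w => w ⬝ᵥ (M *ᵥ osc)
      map_add' := fun a b => add_dotProduct a b _
      map_smul' := fun c a => smul_dotProduct c a _ } with hf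
  have hosc0 : osc ≠ 0 := sbp_osc_ne_zero hn D M hM hD osc hosc
  have hfosc : f osc ≠ 0 := ne_of_gt (sbp_pos M hM hosc0)
  have hrange : LinearMap.range f = ⊤ := by
    rw [LinearMap.range_eq_top]
    intro c
    refine ⟨(c / f osc) • osc, ?_⟩
    simp only [LinearMap.map_smul, smul_eq_mul]
    rw [div_mul_cancel₀ _ hfosc]
  have hkerf : Module.finrank ℝ (LinearMap.ker f) = n - 1 := by
    have h := LinearMap.finrank_range_add_finrank_ker f
    rw [hrange, Module.finrank_fin_fun] at h
    simp [Module.finrank_self] at h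
    omega
  have hrangeD : Module.finrank ℝ (LinearMap.range D.mulVecLin) = n - 1 := by
    have h := LinearMap.finrank_range_add_finrank_ker D.mulVecLin
    rw [hD, finrank_span_singleton (ones_ne_zero hn), Module.finrank_fin_fun] at h
    omega
  have hle : LinearMap.range D.mulVecLin ≤ LinearMap.ker f := by
    rintro - ⟨w, rfl⟩
    simp only [LinearMap.mem_ker, mulVecLin_apply, hf, LinearMap.coe_mk, AddHom.coe_mk]
    exact sbp_orth D M hM osc hosc w
  have heq : LinearMap.range D.mulVecLin = LinearMap.ker f :=
    Submodule.eq_of_le_of_finrank_eq hle (by rw [hrangeD, hkerf])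
  have : v ∈ LinearMap.ker f := by simpa [hf] using hv
  rw [← heq] at this
  obtain ⟨p, hp⟩ := this
  exact ⟨p, hp⟩

include hn hM hD hosc in
lemma sbp_decomp (v : Fin n → ℝ) : ∃ (p : Fin n → ℝ) (t : ℝ), D *ᵥ p + t • osc = v := by
  set t : ℝ := (v ⬝ᵥ (M *ᵥ osc)) / (osc ⬝ᵥ (M *ᵥ osc)) with ht
  have hosc0 : osc ≠ 0 := sbp_osc_ne_zero hn D M hM hD osc hosc
  have hpos := sbp_pos M hM hosc0
  have hv : (v - t • osc) ⬝ᵥ (M *ᵥ osc) = 0 := by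
    rw [sub_dotProduct, smul_dotProduct, ht, smul_eq_mul,
      div_mul_cancel₀ _ (ne_of_gt hpos), sub_self]
  obtain ⟨p, hp⟩ := sbp_surj hn D M hM hD osc hosc hv
  exact ⟨p, t, by rw [hp]; abel⟩

include hn hM hD hosc in
lemma sbp_cancel {p : Fin n → ℝ} {t : ℝ} (h : D *ᵥ p = t • osc) :
    t = 0 ∧ D *ᵥ p = 0 := by
  have h0 : (D *ᵥ p) ⬝ᵥ (M *ᵥ osc) = 0 := sbp_orth D M hM osc hosc p
  rw [h, smul_dotProduct] at h0
  have hosc0 : osc ≠ 0 := sbp_osc_ne_zero hn D M hM hD osc hosc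
  have hpos := sbp_pos M hM hosc0
  have ht : t = 0 := by
    rcases mul_eq_zero.mp h0 with ht | habs
    · exact ht
    · exact absurd habs (ne_of_gt hpos)
  exact ⟨ht, by rw [h, ht, zero_smul]⟩

end OneD

section Slice
variable {N₁ N₂ N₃ : ℕ}

lemma slice1 (A : Matrix (Fin N₁) (Fin N₁) ℝ) (g : Fin N₁ × Fin N₂ × Fin N₃ → ℝ)
    (i : Fin N₁) (j : Fin N₂) (k : Fin N₃) :
    ((A ⊗ₖ ((1 : Matrix (Fin N₂) (Fin N₂) ℝ) ⊗ₖ (1 : Matrix (Fin N₃) (Fin N₃) ℝ))) *ᵥ g) (i, j, k)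
      = (A *ᵥ fun a => g (a, j, k)) i := by
  rw [Matrix.one_kronecker_one]
  simp only [mulVec, dotProduct, Fintype.sum_prod_type, kroneckerMap_apply, one_apply]
  simp [Finset.mul_sum, mul_ite, Prod.ext_iff, Finset.sum_ite_eq, ite_and]

lemma slice2 (B : Matrix (Fin N₂) (Fin N₂) ℝ) (g : Fin N₁ × Fin N₂ × Fin N₃ → ℝ)
    (i : Fin N₁) (j : Fin N₂) (k : Fin N₃) :
    (((1 : Matrix (Fin N₁) (Fin N₁) ℝ) ⊗ₖ (B ⊗ₖ (1 : Matrix (Fin N₃) (Fin N₃) ℝ))) *ᵥ g) (i, j, k)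
      = (B *ᵥ fun b => g (i, b, k)) j := by
  simp only [mulVec, dotProduct, Fintype.sum_prod_type, kroneckerMap_apply, one_apply]
  simp [Finset.mul_sum, mul_ite, Finset.sum_ite_eq, ite_and]

lemma slice3 (C : Matrix (Fin N₃) (Fin N₃) ℝ) (g : Fin N₁ × Fin N₂ × Fin N₃ → ℝ)
    (i : Fin N₁) (j : Fin N₂) (k : Fin N₃) :
    (((1 : Matrix (Fin N₁) (Fin N₁) ℝ) ⊗ₖ ((1 : Matrix (Fin N₂) (Fin N₂) ℝ) ⊗ₖ C)) *ᵥ g) (i, j, k)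
      = (C *ᵥ fun c => g (i, j, c)) k := by
  simp only [mulVec, dotProduct, Fintype.sum_prod_type, kroneckerMap_apply, one_apply]
  simp [Finset.mul_sum, mul_ite, Finset.sum_ite_eq, ite_and]

lemma Mfact (Mx : Matrix (Fin N₁) (Fin N₁) ℝ) (My : Matrix (Fin N₂) (Fin N₂) ℝ)
    (Mz : Matrix (Fin N₃) (Fin N₃) ℝ)
    (f : Fin N₁ → ℝ) (g : Fin N₂ → ℝ) (h : Fin N₃ → ℝ) (i : Fin N₁) (j : Fin N₂) (k : Fin N₃) :
    ((Mx ⊗ₖ (My ⊗ₖ Mz)) *ᵥ (fun p => f p.1 * g p.2.1 * h p.2.2)) (i, j, k)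
      = (Mx *ᵥ f) i * (My *ᵥ g) j * (Mz *ᵥ h) k := by
  simp only [mulVec, dotProduct, Fintype.sum_prod_type, kroneckerMap_apply]
  conv_rhs => rw [Finset.sum_mul_sum, Finset.sum_mul_sum]
  simp only [Finset.sum_mul]
  refine Finset.sum_congr rfl fun a _ => ?_
  rw [Finset.sum_comm]
  exact Finset.sum_congr rfl fun b _ => Finset.sum_congr rfl fun c _ => by ring

lemma dotfact1 (Mx : Matrix (Fin N₁) (Fin N₁) ℝ) (My : Matrix (Fin N₂) (Fin N₂) ℝ)
    (Mz : Matrix (Fin N₃) (Fin N₃) ℝ) (u : Fin N₁ × Fin N₂ × Fin N₃ → ℝ)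
    (f : Fin N₁ → ℝ) (g : Fin N₂ → ℝ) (h : Fin N₃ → ℝ) :
    u ⬝ᵥ ((Mx ⊗ₖ (My ⊗ₖ Mz)) *ᵥ (fun p => f p.1 * g p.2.1 * h p.2.2))
      = ∑ j : Fin N₂, ∑ k : Fin N₃, (My *ᵥ g) j * (Mz *ᵥ h) k *
          ((fun i => u (i, j, k)) ⬝ᵥ (Mx *ᵥ f)) := by
  simp only [dotProduct, Fintype.sum_prod_type, Mfact]
  rw [Finset.sum_comm]
  refine Finset.sum_congr rfl fun j _ => ?_
  rw [Finset.sum_comm]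
  refine Finset.sum_congr rfl fun k _ => ?_
  rw [Finset.mul_sum]
  refine Finset.sum_congr rfl fun i _ => ?_
  ring

lemma dotfact2 (Mx : Matrix (Fin N₁) (Fin N₁) ℝ) (My : Matrix (Fin N₂) (Fin N₂) ℝ)
    (Mz : Matrix (Fin N₃) (Fin N₃) ℝ) (u : Fin N₁ × Fin N₂ × Fin N₃ → ℝ)
    (f : Fin N₁ → ℝ) (g : Fin N₂ → ℝ) (h : Fin N₃ → ℝ) :
    u ⬝ᵥ ((Mx ⊗ₖ (My ⊗ₖ Mz)) *ᵥ (fun p => f p.1 * g p.2.1 * h p.2.2))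
      = ∑ i : Fin N₁, ∑ k : Fin N₃, (Mx *ᵥ f) i * (Mz *ᵥ h) k *
          ((fun j => u (i, j, k)) ⬝ᵥ (My *ᵥ g)) := by
  simp only [dotProduct, Fintype.sum_prod_type, Mfact]
  refine Finset.sum_congr rfl fun i _ => ?_
  rw [Finset.sum_comm]
  refine Finset.sum_congr rfl fun k _ => ?_
  rw [Finset.mul_sum]
  refine Finset.sum_congr rfl fun j _ => ?_
  ring

lemma dotfact3 (Mx : Matrix (Fin N₁) (Fin N₁) ℝ) (My : Matrix (Fin N₂) (Fin N₂) ℝ)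
    (Mz : Matrix (Fin N₃) (Fin N₃) ℝ) (u : Fin N₁ × Fin N₂ × Fin N₃ → ℝ)
    (f : Fin N₁ → ℝ) (g : Fin N₂ → ℝ) (h : Fin N₃ → ℝ) :
    u ⬝ᵥ ((Mx ⊗ₖ (My ⊗ₖ Mz)) *ᵥ (fun p => f p.1 * g p.2.1 * h p.2.2))
      = ∑ i : Fin N₁, ∑ j : Fin N₂, (Mx *ᵥ f) i * (My *ᵥ g) j *
          ((fun k => u (i, j, k)) ⬝ᵥ (Mz *ᵥ h)) := by
  simp only [dotProduct, Fintype.sum_prod_type, Mfact]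
  refine Finset.sum_congr rfl fun i _ => ?_
  refine Finset.sum_congr rfl fun j _ => ?_
  rw [Finset.mul_sum]
  refine Finset.sum_congr rfl fun k _ => ?_
  ring

lemma comm12 (A : Matrix (Fin N₁) (Fin N₁) ℝ) (B : Matrix (Fin N₂) (Fin N₂) ℝ)
    (φ : Fin N₁ × Fin N₂ × Fin N₃ → ℝ) :
    (A ⊗ₖ ((1 : Matrix (Fin N₂) (Fin N₂) ℝ) ⊗ₖ (1 : Matrix (Fin N₃) (Fin N₃) ℝ))) *ᵥ
        (((1 : Matrix (Fin N₁) (Fin N₁) ℝ) ⊗ₖ (B ⊗ₖ (1 : Matrix (Fin N₃) (Fin N₃) ℝ))) *ᵥ φ)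
      = ((1 : Matrix (Fin N₁) (Fin N₁) ℝ) ⊗ₖ (B ⊗ₖ (1 : Matrix (Fin N₃) (Fin N₃) ℝ))) *ᵥ
        ((A ⊗ₖ ((1 : Matrix (Fin N₂) (Fin N₂) ℝ) ⊗ₖ (1 : Matrix (Fin N₃) (Fin N₃) ℝ))) *ᵥ φ) := by
  funext p
  obtain ⟨i, j, k⟩ := p
  rw [slice1, slice2]
  simp only [slice2] 
  simp only [slice1]
  simp only [mulVec, dotProduct, Finset.mul_sum]
  rw [Finset.sum_comm]
  exact Finset.sum_congr rfl fun a _ => Finset.sum_congr rfl fun b _ => by ring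

lemma comm13 (A : Matrix (Fin N₁) (Fin N₁) ℝ) (C : Matrix (Fin N₃) (Fin N₃) ℝ)
    (φ : Fin N₁ × Fin N₂ × Fin N₃ → ℝ) :
    (A ⊗ₖ ((1 : Matrix (Fin N₂) (Fin N₂) ℝ) ⊗ₖ (1 : Matrix (Fin N₃) (Fin N₃) ℝ))) *ᵥ
        (((1 : Matrix (Fin N₁) (Fin N₁) ℝ) ⊗ₖ ((1 : Matrix (Fin N₂) (Fin N₂) ℝ) ⊗ₖ C)) *ᵥ φ)
      = ((1 : Matrix (Fin N₁) (Fin N₁) ℝ) ⊗ₖ ((1 : Matrix (Fin N₂) (Fin N₂) ℝ) ⊗ₖ C)) *ᵥ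
        ((A ⊗ₖ ((1 : Matrix (Fin N₂) (Fin N₂) ℝ) ⊗ₖ (1 : Matrix (Fin N₃) (Fin N₃) ℝ))) *ᵥ φ) := by
  funext p
  obtain ⟨i, j, k⟩ := p
  rw [slice1, slice3]
  simp only [slice3] 
  simp only [slice1]
  simp only [mulVec, dotProduct, Finset.mul_sum]
  rw [Finset.sum_comm]
  exact Finset.sum_congr rfl fun a _ => Finset.sum_congr rfl fun b _ => by ring

lemma comm23 (B : Matrix (Fin N₂) (Fin N₂) ℝ) (C : Matrix (Fin N₃) (Fin N₃) ℝ)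
    (φ : Fin N₁ × Fin N₂ × Fin N₃ → ℝ) :
    ((1 : Matrix (Fin N₁) (Fin N₁) ℝ) ⊗ₖ (B ⊗ₖ (1 : Matrix (Fin N₃) (Fin N₃) ℝ))) *ᵥ
        (((1 : Matrix (Fin N₁) (Fin N₁) ℝ) ⊗ₖ ((1 : Matrix (Fin N₂) (Fin N₂) ℝ) ⊗ₖ C)) *ᵥ φ)
      = ((1 : Matrix (Fin N₁) (Fin N₁) ℝ) ⊗ₖ ((1 : Matrix (Fin N₂) (Fin N₂) ℝ) ⊗ₖ C)) *ᵥ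
        (((1 : Matrix (Fin N₁) (Fin N₁) ℝ) ⊗ₖ (B ⊗ₖ (1 : Matrix (Fin N₃) (Fin N₃) ℝ))) *ᵥ φ) := by
  funext p
  obtain ⟨i, j, k⟩ := p
  rw [slice2, slice3]
  simp only [slice3] 
  simp only [slice2]
  simp only [mulVec, dotProduct, Finset.mul_sum]
  rw [Finset.sum_comm]
  exact Finset.sum_congr rfl fun a _ => Finset.sum_congr rfl fun b _ => by ring

lemma sum_sum_fac {α β : Type*} [Fintype α] [Fintype β] {A : α → ℝ} {B : β → ℝ} {C : ℝ} :
    ∑ j, ∑ k, A j * B k * C = (∑ j, A j) * (∑ k, B k) * C := by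
  rw [Finset.sum_mul_sum, Finset.sum_mul]
  exact Finset.sum_congr rfl fun j _ => by rw [Finset.sum_mul]

lemma sum_ones_dot {m : ℕ} (Q : Matrix (Fin m) (Fin m) ℝ) :
    ∑ j, (Q *ᵥ (fun _ => 1)) j = (fun _ => (1:ℝ)) ⬝ᵥ (Q *ᵥ (fun _ => 1)) := by
  simp [dotProduct]

end Slice

set_option maxHeartbeats 1000000

/-- For nullspace consistent tensor product SBP operators in three dimensions, the kernel of
the discrete curl equals the `M`-orthogonal direct sum of the image of the discrete gradient
and the three-dimensional span of `(osc₁,0,0)`, `(0,osc₂,0)`, `(0,0,osc₃)`; in particular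
`dim ker curl = N₁N₂N₃ + 2` and `dim im grad = N₁N₂N₃ - 1`. -/
theorem ker_curl_eq_im_grad_oplus_osc_3D (N₁ N₂ N₃ : ℕ)
    (hN₁ : 1 ≤ N₁) (hN₂ : 1 ≤ N₂) (hN₃ : 1 ≤ N₃)
    (Dx Mx : Matrix (Fin N₁) (Fin N₁) ℝ) (Dy My : Matrix (Fin N₂) (Fin N₂) ℝ)
    (Dz Mz : Matrix (Fin N₃) (Fin N₃) ℝ)
    (hMx : Mx.PosDef) (hMxsym : Mx.IsSymm) (hMy : My.PosDef) (hMysym : My.IsSymm)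
    (hMz : Mz.PosDef) (hMzsym : Mz.IsSymm)
    (hDx : LinearMap.ker Dx.mulVecLin = Submodule.span ℝ {(fun _ => 1 : Fin N₁ → ℝ)})
    (hDy : LinearMap.ker Dy.mulVecLin = Submodule.span ℝ {(fun _ => 1 : Fin N₂ → ℝ)})
    (hDz : LinearMap.ker Dz.mulVecLin = Submodule.span ℝ {(fun _ => 1 : Fin N₃ → ℝ)})
    (oscx : Fin N₁ → ℝ) (oscy : Fin N₂ → ℝ) (oscz : Fin N₃ → ℝ)
    (hoscx : LinearMap.ker (Mx⁻¹ * Dxᵀ * Mx).mulVecLin = Submodule.span ℝ {oscx})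
    (hoscy : LinearMap.ker (My⁻¹ * Dyᵀ * My).mulVecLin = Submodule.span ℝ {oscy})
    (hoscz : LinearMap.ker (Mz⁻¹ * Dzᵀ * Mz).mulVecLin = Submodule.span ℝ {oscz})
    (D₁ D₂ D₃ : Matrix (Fin N₁ × Fin N₂ × Fin N₃) (Fin N₁ × Fin N₂ × Fin N₃) ℝ)
    (hD₁ : D₁ = Dx ⊗ₖ ((1 : Matrix (Fin N₂) (Fin N₂) ℝ) ⊗ₖ (1 : Matrix (Fin N₃) (Fin N₃) ℝ)))
    (hD₂ : D₂ = (1 : Matrix (Fin N₁) (Fin N₁) ℝ) ⊗ₖ (Dy ⊗ₖ (1 : Matrix (Fin N₃) (Fin N₃) ℝ)))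
    (hD₃ : D₃ = (1 : Matrix (Fin N₁) (Fin N₁) ℝ) ⊗ₖ ((1 : Matrix (Fin N₂) (Fin N₂) ℝ) ⊗ₖ Dz))
    (M : Matrix (Fin N₁ × Fin N₂ × Fin N₃) (Fin N₁ × Fin N₂ × Fin N₃) ℝ)
    (hM : M = Mx ⊗ₖ (My ⊗ₖ Mz))
    (grad : GridFun3 N₁ N₂ N₃ →ₗ[ℝ] GridFun3 N₁ N₂ N₃ × GridFun3 N₁ N₂ N₃ × GridFun3 N₁ N₂ N₃)
    (hgrad : grad = LinearMap.prod D₁.mulVecLin (LinearMap.prod D₂.mulVecLin D₃.mulVecLin))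
    (P₁ P₂ P₃ : GridFun3 N₁ N₂ N₃ × GridFun3 N₁ N₂ N₃ × GridFun3 N₁ N₂ N₃ →ₗ[ℝ] GridFun3 N₁ N₂ N₃)
    (hP₁ : P₁ = LinearMap.fst ℝ _ _)
    (hP₂ : P₂ = LinearMap.fst ℝ _ _ ∘ₗ LinearMap.snd ℝ (GridFun3 N₁ N₂ N₃) _)
    (hP₃ : P₃ = LinearMap.snd ℝ (GridFun3 N₁ N₂ N₃) _ ∘ₗ LinearMap.snd ℝ (GridFun3 N₁ N₂ N₃) _)
    (curl : GridFun3 N₁ N₂ N₃ × GridFun3 N₁ N₂ N₃ × GridFun3 N₁ N₂ N₃ →ₗ[ℝ]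
      GridFun3 N₁ N₂ N₃ × GridFun3 N₁ N₂ N₃ × GridFun3 N₁ N₂ N₃)
    (hcurl : curl = LinearMap.prod
      (D₂.mulVecLin ∘ₗ P₃ - D₃.mulVecLin ∘ₗ P₂)
      (LinearMap.prod (D₃.mulVecLin ∘ₗ P₁ - D₁.mulVecLin ∘ₗ P₃)
        (D₁.mulVecLin ∘ₗ P₂ - D₂.mulVecLin ∘ₗ P₁)))
    (osc₁ osc₂ osc₃ : GridFun3 N₁ N₂ N₃)
    (hosc₁ : osc₁ = fun p => oscx p.1)
    (hosc₂ : osc₂ = fun p => oscy p.2.1)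
    (hosc₃ : osc₃ = fun p => oscz p.2.2)
    (O : Submodule ℝ (GridFun3 N₁ N₂ N₃ × GridFun3 N₁ N₂ N₃ × GridFun3 N₁ N₂ N₃))
    (hO : O = Submodule.span ℝ {(osc₁, 0, 0), (0, osc₂, 0), (0, 0, osc₃)}) :
    LinearMap.ker curl = LinearMap.range grad ⊔ O ∧
      Disjoint (LinearMap.range grad) O ∧
      (∀ u ∈ LinearMap.range grad, ∀ w ∈ O,
        u.1 ⬝ᵥ M.mulVec w.1 + u.2.1 ⬝ᵥ M.mulVec w.2.1 + u.2.2 ⬝ᵥ M.mulVec w.2.2 = 0) ∧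
      Module.finrank ℝ ↥(LinearMap.ker curl) = N₁ * N₂ * N₃ + 2 ∧
      Module.finrank ℝ ↥(LinearMap.range grad) = N₁ * N₂ * N₃ - 1 := by
  classical
  have i₀ : Fin N₁ := ⟨0, hN₁⟩
  have j₀ : Fin N₂ := ⟨0, hN₂⟩
  have k₀ : Fin N₃ := ⟨0, hN₃⟩
  -- slice lemmas
  have hd1 : ∀ (g : GridFun3 N₁ N₂ N₃) i j k,
      (D₁ *ᵥ g) (i, j, k) = (Dx *ᵥ fun a => g (a, j, k)) i := by
    intro g i j k; rw [hD₁]; exact slice1 Dx g i j k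
  have hd2 : ∀ (g : GridFun3 N₁ N₂ N₃) i j k,
      (D₂ *ᵥ g) (i, j, k) = (Dy *ᵥ fun b => g (i, b, k)) j := by
    intro g i j k; rw [hD₂]; exact slice2 Dy g i j k
  have hd3 : ∀ (g : GridFun3 N₁ N₂ N₃) i j k,
      (D₃ *ᵥ g) (i, j, k) = (Dz *ᵥ fun c => g (i, j, c)) k := by
    intro g i j k; rw [hD₃]; exact slice3 Dz g i j k
  have hc12 : ∀ φ, D₁ *ᵥ (D₂ *ᵥ φ) = D₂ *ᵥ (D₁ *ᵥ φ) := by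
    intro φ; rw [hD₁, hD₂]; exact comm12 Dx Dy φ
  have hc13 : ∀ φ, D₁ *ᵥ (D₃ *ᵥ φ) = D₃ *ᵥ (D₁ *ᵥ φ) := by
    intro φ; rw [hD₁, hD₃]; exact comm13 Dx Dz φ
  have hc23 : ∀ φ, D₂ *ᵥ (D₃ *ᵥ φ) = D₃ *ᵥ (D₂ *ᵥ φ) := by
    intro φ; rw [hD₂, hD₃]; exact comm23 Dy Dz φ
  have hD1zero : ∀ (g : GridFun3 N₁ N₂ N₃),
      (∀ i i' j k, g (i, j, k) = g (i', j, k)) → D₁ *ᵥ g = 0 := by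
    intro g hg
    funext q; obtain ⟨i, j, k⟩ := q
    rw [hd1, show (fun a => g (a, j, k)) = (fun _ => g (i₀, j, k)) from
      funext fun a => hg a i₀ j k, sbp_D_const Dx hDx]
    rfl
  have hD2zero : ∀ (g : GridFun3 N₁ N₂ N₃),
      (∀ i j j' k, g (i, j, k) = g (i, j', k)) → D₂ *ᵥ g = 0 := by
    intro g hg
    funext q; obtain ⟨i, j, k⟩ := q
    rw [hd2, show (fun b => g (i, b, k)) = (fun _ => g (i, j₀, k)) from
      funext fun b => hg i b j₀ k, sbp_D_const Dy hDy]
    rfl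
  have hD3zero : ∀ (g : GridFun3 N₁ N₂ N₃),
      (∀ i j k k', g (i, j, k) = g (i, j, k')) → D₃ *ᵥ g = 0 := by
    intro g hg
    funext q; obtain ⟨i, j, k⟩ := q
    rw [hd3, show (fun c => g (i, j, c)) = (fun _ => g (i, j, k₀)) from
      funext fun c => hg i j c k₀, sbp_D_const Dz hDz]
    rfl
  have hgrad' : ∀ φ, grad φ = (D₁ *ᵥ φ, D₂ *ᵥ φ, D₃ *ᵥ φ) := by
    intro φ; rw [hgrad]; rfl
  have hcurl' : ∀ u : GridFun3 N₁ N₂ N₃ × GridFun3 N₁ N₂ N₃ × GridFun3 N₁ N₂ N₃,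
      curl u = (D₂ *ᵥ u.2.2 - D₃ *ᵥ u.2.1, D₃ *ᵥ u.1 - D₁ *ᵥ u.2.2,
        D₁ *ᵥ u.2.1 - D₂ *ᵥ u.1) := by
    intro u; rw [hcurl, hP₁, hP₂, hP₃]; rfl
  have hker_iff : ∀ u₁ u₂ u₃ : GridFun3 N₁ N₂ N₃, (u₁, u₂, u₃) ∈ LinearMap.ker curl ↔
      (D₂ *ᵥ u₃ = D₃ *ᵥ u₂ ∧ D₃ *ᵥ u₁ = D₁ *ᵥ u₃ ∧ D₁ *ᵥ u₂ = D₂ *ᵥ u₁) := by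
    intro u₁ u₂ u₃
    rw [LinearMap.mem_ker, hcurl']
    simp [Prod.ext_iff, sub_eq_zero]
  have hforward : LinearMap.ker curl ≤ LinearMap.range grad ⊔ O := by
    rintro ⟨u₁, u₂, u₃⟩ hu
    rw [hker_iff] at hu
    obtain ⟨e1, e2, e3⟩ := hu
    -- Step A: remove the x-gradient part of u₁
    choose p t hp using fun (j : Fin N₂) (k : Fin N₃) =>
      sbp_decomp hN₁ Dx Mx hMx hDx oscx hoscx (fun i => u₁ (i, j, k))
    set φ₁ : GridFun3 N₁ N₂ N₃ := fun q => p q.2.1 q.2.2 q.1 with hφ₁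
    set r1 : GridFun3 N₁ N₂ N₃ := u₁ - D₁ *ᵥ φ₁ with hr1
    set r2 : GridFun3 N₁ N₂ N₃ := u₂ - D₂ *ᵥ φ₁ with hr2
    set r3 : GridFun3 N₁ N₂ N₃ := u₃ - D₃ *ᵥ φ₁ with hr3
    have hr1eq : ∀ i j k, r1 (i, j, k) = t j k * oscx i := by
      intro i j k
      have h := congrFun (hp j k) i
      simp only [Pi.add_apply, Pi.smul_apply, smul_eq_mul] at h
      have h2 : (D₁ *ᵥ φ₁) (i, j, k) = (Dx *ᵥ p j k) i := hd1 φ₁ i j k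
      rw [hr1]
      simp only [Pi.sub_apply, h2]
      linarith
    clear_value r1 r2 r3
    have hE3 : D₁ *ᵥ r2 = D₂ *ᵥ r1 := by
      rw [hr1, hr2, mulVec_sub, mulVec_sub, e3, hc12]
    have hE2 : D₁ *ᵥ r3 = D₃ *ᵥ r1 := by
      rw [hr1, hr3, mulVec_sub, mulVec_sub, ← e2, hc13]
    have hE1 : D₂ *ᵥ r3 = D₃ *ᵥ r2 := by
      rw [hr2, hr3, mulVec_sub, mulVec_sub, e1, hc23]
    have hstepA1 : ∀ j k, (Dy *ᵥ fun b => t b k) j = 0 ∧ (Dx *ᵥ fun a => r2 (a, j, k)) = 0 := by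
      intro j k
      refine sbp_cancel hN₁ Dx Mx hMx hDx oscx hoscx ?_
      funext i
      have h := congrFun hE3 (i, j, k)
      rw [hd1] at h
      rw [hd2] at h
      rw [h]
      simp only [mulVec, dotProduct, hr1eq, Pi.smul_apply, smul_eq_mul, Finset.sum_mul]
      exact Finset.sum_congr rfl fun b _ => by ring
    have hstepA2 : ∀ j k, (Dz *ᵥ fun c => t j c) k = 0 ∧ (Dx *ᵥ fun a => r3 (a, j, k)) = 0 := by
      intro j k
      refine sbp_cancel hN₁ Dx Mx hMx hDx oscx hoscx ?_
      funext i
      have h := congrFun hE2 (i, j, k)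
      rw [hd1] at h
      rw [hd3] at h
      rw [h]
      simp only [mulVec, dotProduct, hr1eq, Pi.smul_apply, smul_eq_mul, Finset.sum_mul]
      exact Finset.sum_congr rfl fun c _ => by ring
    have ht_j : ∀ j j' k, t j k = t j' k := fun j j' k =>
      sbp_const_of_ker Dy hDy (funext fun j'' => (hstepA1 j'' k).1) j j'
    have ht_k : ∀ j k k', t j k = t j k' := fun j k k' =>
      sbp_const_of_ker Dz hDz (funext fun k'' => (hstepA2 j k'').1) k k'
    have hr2x : ∀ i i' j k, r2 (i, j, k) = r2 (i', j, k) := fun i i' j k =>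
      sbp_const_of_ker Dx hDx (hstepA1 j k).2 i i'
    have hr3x : ∀ i i' j k, r3 (i, j, k) = r3 (i', j, k) := fun i i' j k =>
      sbp_const_of_ker Dx hDx (hstepA2 j k).2 i i'
    have hD1r3 : D₁ *ᵥ r3 = 0 := hD1zero r3 hr3x
    have hr1c : ∀ i j k, r1 (i, j, k) = t j₀ k₀ * oscx i := fun i j k => by
      rw [hr1eq, ht_j j j₀ k, ht_k j₀ k k₀]
    -- Step B: remove the y-gradient part of r2
    choose q2 s hq using fun (k : Fin N₃) =>
      sbp_decomp hN₂ Dy My hMy hDy oscy hoscy (fun b => r2 (i₀, b, k))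
    set φ₂ : GridFun3 N₁ N₂ N₃ := fun q => q2 q.2.2 q.2.1 with hφ₂
    set r2' : GridFun3 N₁ N₂ N₃ := r2 - D₂ *ᵥ φ₂ with hr2d
    set r3' : GridFun3 N₁ N₂ N₃ := r3 - D₃ *ᵥ φ₂ with hr3d
    have hφ₂x : D₁ *ᵥ φ₂ = 0 := hD1zero φ₂ (fun _ _ _ _ => rfl)
    have hr2'eq : ∀ i j k, r2' (i, j, k) = s k * oscy j := by
      intro i j k
      have h := congrFun (hq k) j
      simp only [Pi.add_apply, Pi.smul_apply, smul_eq_mul] at h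
      have h2 : (D₂ *ᵥ φ₂) (i, j, k) = (Dy *ᵥ q2 k) j := hd2 φ₂ i j k
      rw [hr2d]
      simp only [Pi.sub_apply, h2]
      rw [hr2x i i₀ j k]
      linarith
    clear_value r2' r3'
    have hE1' : D₂ *ᵥ r3' = D₃ *ᵥ r2' := by
      rw [hr2d, hr3d, mulVec_sub, mulVec_sub, hE1, hc23]
    have hstepB : ∀ i k, (Dz *ᵥ s) k = 0 ∧ (Dy *ᵥ fun b => r3' (i, b, k)) = 0 := by
      intro i k
      refine sbp_cancel hN₂ Dy My hMy hDy oscy hoscy ?_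
      funext j
      have h := congrFun hE1' (i, j, k)
      rw [hd2] at h
      rw [hd3] at h
      rw [h]
      simp only [mulVec, dotProduct, hr2'eq, Pi.smul_apply, smul_eq_mul, Finset.sum_mul]
      exact Finset.sum_congr rfl fun c _ => by ring
    have hs_const : ∀ k k', s k = s k' :=
      sbp_const_of_ker Dz hDz (funext fun k => (hstepB i₀ k).1)
    have hr3'y : ∀ i j j' k, r3' (i, j, k) = r3' (i, j', k) := fun i j j' k =>
      sbp_const_of_ker Dy hDy (hstepB i k).2 j j'
    have hD1r3' : D₁ *ᵥ r3' = 0 := by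
      rw [hr3d, mulVec_sub, hD1r3, hc13, hφ₂x, mulVec_zero, sub_zero]
    have hr3'x : ∀ i i' j k, r3' (i, j, k) = r3' (i', j, k) := by
      intro i i' j k
      have hker : Dx *ᵥ (fun a => r3' (a, j, k)) = 0 := by
        funext a
        have h := congrFun hD1r3' (a, j, k)
        rw [hd1] at h
        exact h
      exact sbp_const_of_ker Dx hDx hker i i'
    -- Step C: remove the z-gradient part of r3'
    obtain ⟨w, c₃, hw⟩ := sbp_decomp hN₃ Dz Mz hMz hDz oscz hoscz (fun c => r3' (i₀, j₀, c))
    set φ₃ : GridFun3 N₁ N₂ N₃ := fun q => w q.2.2 with hφ₃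
    have hφ₃x : D₁ *ᵥ φ₃ = 0 := hD1zero φ₃ (fun _ _ _ _ => rfl)
    have hφ₃y : D₂ *ᵥ φ₃ = 0 := hD2zero φ₃ (fun _ _ _ _ => rfl)
    have hr3''eq : ∀ i j k, r3' (i, j, k) - (D₃ *ᵥ φ₃) (i, j, k) = c₃ * oscz k := by
      intro i j k
      have h := congrFun hw k
      simp only [Pi.add_apply, Pi.smul_apply, smul_eq_mul] at h
      have h2 : (D₃ *ᵥ φ₃) (i, j, k) = (Dz *ᵥ w) k := hd3 φ₃ i j k
      rw [h2, hr3'x i i₀ j k, hr3'y i₀ j j₀ k]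
      linarith
    -- assemble
    refine Submodule.mem_sup.mpr ⟨grad (φ₁ + φ₂ + φ₃), LinearMap.mem_range_self _ _,
      t j₀ k₀ • (osc₁, 0, 0) + s k₀ • (0, osc₂, 0) + c₃ • (0, 0, osc₃), ?_, ?_⟩
    · rw [hO]
      refine Submodule.add_mem _ (Submodule.add_mem _ ?_ ?_) ?_ <;>
        exact Submodule.smul_mem _ _ (Submodule.subset_span (by simp))
    · symm
      rw [hgrad']
      have hmv : ∀ (A : Matrix (Fin N₁ × Fin N₂ × Fin N₃) (Fin N₁ × Fin N₂ × Fin N₃) ℝ),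
          A *ᵥ (φ₁ + φ₂ + φ₃) = A *ᵥ φ₁ + A *ᵥ φ₂ + A *ᵥ φ₃ := fun A => by
        rw [mulVec_add, mulVec_add]
      refine Prod.ext ?_ (Prod.ext ?_ ?_)
      · show u₁ = _
        funext qq; obtain ⟨i, j, k⟩ := qq
        have h1 := hr1c i j k
        rw [hr1] at h1
        simp only [Pi.sub_apply] at h1
        simp only [Prod.fst_add, Prod.smul_fst, Pi.add_apply, Pi.smul_apply, smul_eq_mul,
          hmv, hφ₂x, hφ₃x, Pi.zero_apply, hosc₁, smul_zero, mul_zero, add_zero]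
        linarith
      · show u₂ = _
        funext qq; obtain ⟨i, j, k⟩ := qq
        have h1 := hr2'eq i j k
        rw [hr2d, hr2] at h1
        simp only [Pi.sub_apply] at h1
        rw [hs_const k₀ k]
        simp only [Prod.snd_add, Prod.fst_add, Prod.smul_snd, Prod.smul_fst, Pi.add_apply,
          Pi.smul_apply, smul_eq_mul, hmv, hφ₃y, Pi.zero_apply, hosc₂, smul_zero, mul_zero,
          add_zero, zero_add]
        linarith
      · show u₃ = _
        funext qq; obtain ⟨i, j, k⟩ := qq
        have h1 := hr3''eq i j k
        rw [hr3d, hr3] at h1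
        simp only [Pi.sub_apply] at h1
        simp only [Prod.snd_add, Prod.smul_snd, Pi.add_apply, Pi.smul_apply, smul_eq_mul,
          hmv, Pi.zero_apply, hosc₃, smul_zero, mul_zero, add_zero, zero_add]
        linarith
  have hosc1fac : osc₁ = fun p : Fin N₁ × Fin N₂ × Fin N₃ =>
      oscx p.1 * (fun _ : Fin N₂ => (1:ℝ)) p.2.1 * (fun _ : Fin N₃ => (1:ℝ)) p.2.2 := by
    rw [hosc₁]; funext p; simp
  have hosc2fac : osc₂ = fun p : Fin N₁ × Fin N₂ × Fin N₃ =>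
      (fun _ : Fin N₁ => (1:ℝ)) p.1 * oscy p.2.1 * (fun _ : Fin N₃ => (1:ℝ)) p.2.2 := by
    rw [hosc₂]; funext p; simp
  have hosc3fac : osc₃ = fun p : Fin N₁ × Fin N₂ × Fin N₃ =>
      (fun _ : Fin N₁ => (1:ℝ)) p.1 * (fun _ : Fin N₂ => (1:ℝ)) p.2.1 * oscz p.2.2 := by
    rw [hosc₃]; funext p; simp
  have hbackward : LinearMap.range grad ⊔ O ≤ LinearMap.ker curl := by
    refine sup_le ?_ ?_
    · rintro - ⟨φ, rfl⟩
      rw [hgrad', hker_iff]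
      exact ⟨hc23 φ, (hc13 φ).symm, hc12 φ⟩
    · rw [hO, Submodule.span_le]
      rintro x hx
      simp only [Set.mem_insert_iff, Set.mem_singleton_iff] at hx
      rcases hx with rfl | rfl | rfl
      · rw [SetLike.mem_coe, hker_iff]
        refine ⟨by rw [mulVec_zero, mulVec_zero], ?_, ?_⟩
        · rw [hD3zero osc₁ (fun i j k k' => by rw [hosc₁]), mulVec_zero]
        · rw [hD2zero osc₁ (fun i j j' k => by rw [hosc₁]), mulVec_zero]
      · rw [SetLike.mem_coe, hker_iff]
        refine ⟨?_, by rw [mulVec_zero, mulVec_zero], ?_⟩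
        · rw [hD3zero osc₂ (fun i j k k' => by rw [hosc₂]), mulVec_zero]
        · rw [hD1zero osc₂ (fun i i' j k => by rw [hosc₂]), mulVec_zero]
      · rw [SetLike.mem_coe, hker_iff]
        refine ⟨?_, ?_, by rw [mulVec_zero, mulVec_zero]⟩
        · rw [hD2zero osc₃ (fun i j j' k => by rw [hosc₃]), mulVec_zero]
        · rw [hD1zero osc₃ (fun i i' j k => by rw [hosc₃]), mulVec_zero]
  have hker_eq : LinearMap.ker curl = LinearMap.range grad ⊔ O :=
    le_antisymm hforward hbackward
  -- orthogonality
  have horth : ∀ u ∈ LinearMap.range grad, ∀ w ∈ O,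
      u.1 ⬝ᵥ M *ᵥ w.1 + u.2.1 ⬝ᵥ M *ᵥ w.2.1 + u.2.2 ⬝ᵥ M *ᵥ w.2.2 = 0 := by
    rintro - ⟨φ, rfl⟩ w hw
    rw [hO] at hw
    have hzero1 : (D₁ *ᵥ φ) ⬝ᵥ (M *ᵥ osc₁) = 0 := by
      rw [hM, hosc1fac, dotfact1 Mx My Mz _ oscx (fun _ => 1) (fun _ => 1)]
      refine Finset.sum_eq_zero fun j _ => Finset.sum_eq_zero fun k _ => ?_
      have hsl : (fun i => (D₁ *ᵥ φ) (i, j, k)) = Dx *ᵥ (fun a => φ (a, j, k)) :=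
        funext fun i => hd1 φ i j k
      rw [hsl, sbp_orth Dx Mx hMx oscx hoscx, mul_zero]
    have hzero2 : (D₂ *ᵥ φ) ⬝ᵥ (M *ᵥ osc₂) = 0 := by
      rw [hM, hosc2fac, dotfact2 Mx My Mz _ (fun _ => 1) oscy (fun _ => 1)]
      refine Finset.sum_eq_zero fun i _ => Finset.sum_eq_zero fun k _ => ?_
      have hsl : (fun j => (D₂ *ᵥ φ) (i, j, k)) = Dy *ᵥ (fun b => φ (i, b, k)) :=
        funext fun j => hd2 φ i j k
      rw [hsl, sbp_orth Dy My hMy oscy hoscy, mul_zero]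
    have hzero3 : (D₃ *ᵥ φ) ⬝ᵥ (M *ᵥ osc₃) = 0 := by
      rw [hM, hosc3fac, dotfact3 Mx My Mz _ (fun _ => 1) (fun _ => 1) oscz]
      refine Finset.sum_eq_zero fun i _ => Finset.sum_eq_zero fun j _ => ?_
      have hsl : (fun k => (D₃ *ᵥ φ) (i, j, k)) = Dz *ᵥ (fun c => φ (i, j, c)) :=
        funext fun k => hd3 φ i j k
      rw [hsl, sbp_orth Dz Mz hMz oscz hoscz, mul_zero]
    induction hw using Submodule.span_induction with
    | mem x hx =>
      simp only [Set.mem_insert_iff, Set.mem_singleton_iff] at hx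
      rcases hx with rfl | rfl | rfl
      · rw [hgrad']
        simpa [mulVec_zero, dotProduct_zero] using hzero1
      · rw [hgrad']
        simpa [mulVec_zero, dotProduct_zero] using hzero2
      · rw [hgrad']
        simpa [mulVec_zero, dotProduct_zero] using hzero3
    | zero => simp
    | add x y hx hy ihx ihy =>
      simp only [Prod.fst_add, Prod.snd_add, mulVec_add, dotProduct_add] at *
      linarith
    | smul a x hx ih =>
      simp only [Prod.smul_fst, Prod.smul_snd, mulVec_smul, dotProduct_smul,
        smul_eq_mul] at *
      rw [← mul_add, ← mul_add, ih, mul_zero]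
  -- norms of the oscillation vectors
  have hoscx0 : oscx ≠ 0 := sbp_osc_ne_zero hN₁ Dx Mx hMx hDx oscx hoscx
  have hoscy0 : oscy ≠ 0 := sbp_osc_ne_zero hN₂ Dy My hMy hDy oscy hoscy
  have hoscz0 : oscz ≠ 0 := sbp_osc_ne_zero hN₃ Dz Mz hMz hDz oscz hoscz
  have n1 : (0:ℝ) < osc₁ ⬝ᵥ M *ᵥ osc₁ := by
    rw [hM, hosc1fac, dotfact1 Mx My Mz _ oscx (fun _ => 1) (fun _ => 1)]
    simp only [mul_one]
    rw [sum_sum_fac, sum_ones_dot, sum_ones_dot]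
    exact mul_pos (mul_pos (sbp_pos My hMy (ones_ne_zero hN₂))
      (sbp_pos Mz hMz (ones_ne_zero hN₃))) (sbp_pos Mx hMx hoscx0)
  have n2 : (0:ℝ) < osc₂ ⬝ᵥ M *ᵥ osc₂ := by
    rw [hM, hosc2fac, dotfact2 Mx My Mz _ (fun _ => 1) oscy (fun _ => 1)]
    simp only [mul_one, one_mul]
    rw [sum_sum_fac, sum_ones_dot, sum_ones_dot]
    exact mul_pos (mul_pos (sbp_pos Mx hMx (ones_ne_zero hN₁))
      (sbp_pos Mz hMz (ones_ne_zero hN₃))) (sbp_pos My hMy hoscy0)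
  have n3 : (0:ℝ) < osc₃ ⬝ᵥ M *ᵥ osc₃ := by
    rw [hM, hosc3fac, dotfact3 Mx My Mz _ (fun _ => 1) (fun _ => 1) oscz]
    simp only [mul_one, one_mul]
    rw [sum_sum_fac, sum_ones_dot, sum_ones_dot]
    exact mul_pos (mul_pos (sbp_pos Mx hMx (ones_ne_zero hN₁))
      (sbp_pos My hMy (ones_ne_zero hN₂))) (sbp_pos Mz hMz hoscz0)
  have hdisj : Disjoint (LinearMap.range grad) O := by
    rw [Submodule.disjoint_def]
    intro x hxg hxO
    have h0 := horth x hxg x hxO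
    rw [hO, show ({(osc₁, 0, 0), (0, osc₂, 0), (0, 0, osc₃)} :
        Set (GridFun3 N₁ N₂ N₃ × GridFun3 N₁ N₂ N₃ × GridFun3 N₁ N₂ N₃)) =
      insert (osc₁, 0, 0) (insert (0, osc₂, 0) {(0, 0, osc₃)}) from rfl,
      Submodule.mem_span_insert] at hxO
    obtain ⟨a, z1, hz1, rfl⟩ := hxO
    rw [Submodule.mem_span_insert] at hz1
    obtain ⟨b, z2, hz2, rfl⟩ := hz1
    rw [Submodule.mem_span_singleton] at hz2
    obtain ⟨c, rfl⟩ := hz2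
    simp only [Prod.fst_add, Prod.snd_add, Prod.smul_fst, Prod.smul_snd, smul_zero,
      add_zero, zero_add, mulVec_smul, dotProduct_smul, smul_dotProduct, smul_eq_mul] at h0
    have solve : ∀ (aa X : ℝ), 0 < X → aa * (aa * X) = 0 → aa = 0 := by
      intro aa X hX h
      rcases mul_eq_zero.mp h with h' | h'
      · exact h'
      · rcases mul_eq_zero.mp h' with h'' | h''
        · exact h''
        · exact absurd h'' (ne_of_gt hX)
    have k1 : 0 ≤ a * (a * (osc₁ ⬝ᵥ M *ᵥ osc₁)) := by
      rw [← mul_assoc]; exact mul_nonneg (mul_self_nonneg a) (le_of_lt n1)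
    have k2 : 0 ≤ b * (b * (osc₂ ⬝ᵥ M *ᵥ osc₂)) := by
      rw [← mul_assoc]; exact mul_nonneg (mul_self_nonneg b) (le_of_lt n2)
    have k3 : 0 ≤ c * (c * (osc₃ ⬝ᵥ M *ᵥ osc₃)) := by
      rw [← mul_assoc]; exact mul_nonneg (mul_self_nonneg c) (le_of_lt n3)
    have ha : a = 0 := solve a _ n1 (by linarith)
    have hb : b = 0 := solve b _ n2 (by linarith)
    have hc : c = 0 := solve c _ n3 (by linarith)
    rw [ha, hb, hc]
    simp
  -- dimensions
  have hdim : Module.finrank ℝ (GridFun3 N₁ N₂ N₃) = N₁ * N₂ * N₃ := by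
    rw [Module.finrank_fintype_fun_eq_card, Fintype.card_prod, Fintype.card_prod,
      Fintype.card_fin, Fintype.card_fin, Fintype.card_fin, ← mul_assoc]
  have hones3 : (fun _ => 1 : GridFun3 N₁ N₂ N₃) ≠ 0 := by
    intro h
    have := congrFun h (i₀, j₀, k₀)
    simp at this
  have hkergrad : LinearMap.ker grad =
      Submodule.span ℝ {(fun _ => 1 : GridFun3 N₁ N₂ N₃)} := by
    apply le_antisymm
    · intro φ hφ
      rw [LinearMap.mem_ker, hgrad'] at hφ
      simp only [Prod.ext_iff, Prod.fst_zero, Prod.snd_zero] at hφ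
      obtain ⟨h1, h2, h3⟩ := hφ
      have hx : ∀ i i' j k, φ (i, j, k) = φ (i', j, k) := by
        intro i i' j k
        have hker : Dx *ᵥ (fun a => φ (a, j, k)) = 0 := by
          funext a
          have h := congrFun h1 (a, j, k)
          rw [hd1] at h
          exact h
        exact sbp_const_of_ker Dx hDx hker i i'
      have hy : ∀ i j j' k, φ (i, j, k) = φ (i, j', k) := by
        intro i j j' k
        have hker : Dy *ᵥ (fun b => φ (i, b, k)) = 0 := by
          funext b
          have h := congrFun h2 (i, b, k)
          rw [hd2] at h
          exact h
        exact sbp_const_of_ker Dy hDy hker j j'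
      have hz : ∀ i j k k', φ (i, j, k) = φ (i, j, k') := by
        intro i j k k'
        have hker : Dz *ᵥ (fun c => φ (i, j, c)) = 0 := by
          funext c
          have h := congrFun h3 (i, j, c)
          rw [hd3] at h
          exact h
        exact sbp_const_of_ker Dz hDz hker k k'
      rw [Submodule.mem_span_singleton]
      refine ⟨φ (i₀, j₀, k₀), funext fun q => ?_⟩
      obtain ⟨i, j, k⟩ := q
      simp only [Pi.smul_apply, smul_eq_mul, mul_one]
      exact ((hx i₀ i j₀ k₀).trans ((hy i j₀ j k₀).trans (hz i j k₀ k)))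
    · rw [Submodule.span_le]
      intro x hx
      simp only [Set.mem_singleton_iff] at hx
      subst hx
      rw [SetLike.mem_coe, LinearMap.mem_ker, hgrad']
      exact Prod.ext (hD1zero _ (fun _ _ _ _ => rfl))
        (Prod.ext (hD2zero _ (fun _ _ _ _ => rfl)) (hD3zero _ (fun _ _ _ _ => rfl)))
  have hrankgrad : Module.finrank ℝ ↥(LinearMap.range grad) = N₁ * N₂ * N₃ - 1 := by
    have h := LinearMap.finrank_range_add_finrank_ker grad
    rw [hkergrad, finrank_span_singleton hones3, hdim] at h
    omega
  have hNpos : 1 ≤ N₁ * N₂ * N₃ := Nat.mul_pos (Nat.mul_pos hN₁ hN₂) hN₃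
  have hosc1ne : osc₁ ≠ 0 := by
    intro h
    obtain ⟨i, hi⟩ := Function.ne_iff.mp hoscx0
    have := congrFun h (i, j₀, k₀)
    rw [hosc₁] at this
    exact hi this
  have hosc2ne : osc₂ ≠ 0 := by
    intro h
    obtain ⟨j, hj⟩ := Function.ne_iff.mp hoscy0
    have := congrFun h (i₀, j, k₀)
    rw [hosc₂] at this
    exact hj this
  have hosc3ne : osc₃ ≠ 0 := by
    intro h
    obtain ⟨k, hk⟩ := Function.ne_iff.mp hoscz0
    have := congrFun h (i₀, j₀, k)
    rw [hosc₃] at this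
    exact hk this
  have hOrank : Module.finrank ℝ ↥O = 3 := by
    set bb : Fin 3 → GridFun3 N₁ N₂ N₃ × GridFun3 N₁ N₂ N₃ × GridFun3 N₁ N₂ N₃ :=
      ![(osc₁, 0, 0), (0, osc₂, 0), (0, 0, osc₃)] with hbb
    have hrange : Set.range bb = {(osc₁, 0, 0), (0, osc₂, 0), (0, 0, osc₃)} := by
      ext x
      constructor
      · rintro ⟨i, rfl⟩
        fin_cases i <;> simp [hbb]
      · intro hx
        simp only [Set.mem_insert_iff, Set.mem_singleton_iff] at hx
        rcases hx with rfl | rfl | rfl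
        exacts [⟨0, rfl⟩, ⟨1, rfl⟩, ⟨2, rfl⟩]
    have hli : LinearIndependent ℝ bb := by
      rw [Fintype.linearIndependent_iff]
      intro g hg
      rw [Fin.sum_univ_three] at hg
      have h1 := congrArg Prod.fst hg
      have h2 := congrArg (fun z : GridFun3 N₁ N₂ N₃ × GridFun3 N₁ N₂ N₃ ×
        GridFun3 N₁ N₂ N₃ => z.2.1) hg
      have h3 := congrArg (fun z : GridFun3 N₁ N₂ N₃ × GridFun3 N₁ N₂ N₃ ×
        GridFun3 N₁ N₂ N₃ => z.2.2) hg
      simp only [hbb, Matrix.cons_val_zero, Matrix.cons_val_one, Matrix.head_cons,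
        Matrix.cons_val_two, Matrix.tail_cons, Prod.fst_add, Prod.snd_add,
        Prod.smul_fst, Prod.smul_snd, smul_zero, add_zero, zero_add, Prod.fst_zero,
        Prod.snd_zero] at h1 h2 h3
      have hg0 : g 0 = 0 := (smul_eq_zero.mp h1).resolve_right hosc1ne
      have hg1 : g 1 = 0 := (smul_eq_zero.mp h2).resolve_right hosc2ne
      have hg2 : g 2 = 0 := (smul_eq_zero.mp h3).resolve_right hosc3ne
      intro i
      fin_cases i
      exacts [hg0, hg1, hg2]
    rw [hO, ← hrange]
    simpa using finrank_span_eq_card hli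
  have hrankker : Module.finrank ℝ ↥(LinearMap.ker curl) = N₁ * N₂ * N₃ + 2 := by
    rw [hker_eq]
    have h := Submodule.finrank_sup_add_finrank_inf_eq (LinearMap.range grad) O
    rw [disjoint_iff.mp hdisj, finrank_bot, hrankgrad, hOrank] at h
    omega
  exact ⟨hker_eq, hdisj, horth, hrankker, hrankgrad⟩
end
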